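/- arXiv:2110.00743 — 7 statements merged into one kernel-verified Lean document; each statement's English description precedes it below -/
import Mathlib

section
/- For all p, ε > 0 and all k, l ∈ ℝ there exists a constant C > 0 such that ∫_ℂ (β(z,w) + 1)^l ρ(w)^k e^{−p(|z−w|/ρ(z))^ε} dA(w) ≤ C ρ(z)^{k+2} for every z ∈ ℂ. -/
open MeasureTheory Filter Metric Set
open scoped ENNReal

lemma aux_pow_div_le_exp (x : ℝ) (hx : 0 ≤ x) (N : ℕ) : (x / N) ^ N ≤ Real.exp x := by
  rcases Nat.eq_zero_or_pos N with h | h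
  · simp [h, Real.one_le_exp hx]
  · have hN : (0:ℝ) < N := by exact_mod_cast h
    calc (x / N) ^ N ≤ (x / N + 1) ^ N :=
          pow_le_pow_left₀ (by positivity) (by linarith) N
      _ ≤ Real.exp (x / N) ^ N :=
          pow_le_pow_left₀ (by positivity) (Real.add_one_le_exp _) N
      _ = Real.exp x := by rw [← Real.exp_nat_mul]; congr 1; field_simp

lemma aux_exp_bound (p ε b : ℝ) (hp : 0 < p) (hε : 0 < ε) (hb : 0 ≤ b) :
    ∃ C : ℝ, 0 < C ∧ ∀ t : ℝ, 0 ≤ t →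
      (t + 1) ^ b * Real.exp (-(p * t ^ ε)) ≤ C := by
  set N : ℕ := ⌈b / ε⌉₊ + 1 with hN
  have hNpos : (0:ℝ) < N := by positivity
  refine ⟨(2:ℝ) ^ b * (((N:ℝ) / p) ^ N + 1), by positivity, ?_⟩
  intro t ht
  have hsn : (0:ℝ) ≤ t ^ ε := Real.rpow_nonneg ht ε
  have hexp : Real.exp (-(p * t ^ ε)) ≤ 1 := by
    rw [Real.exp_le_one_iff]; nlinarith
  have h2pos : (0:ℝ) < (2:ℝ) ^ b := Real.rpow_pos_of_pos (by norm_num) b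
  have hNP : (0:ℝ) ≤ ((N:ℝ) / p) ^ N := by positivity
  rcases le_or_gt t 1 with h1 | h1
  · have h2 : (t + 1) ^ b ≤ (2:ℝ) ^ b :=
      Real.rpow_le_rpow (by linarith) (by linarith) hb
    have h4 : (t+1) ^ b * Real.exp (-(p * t ^ ε)) ≤ (2:ℝ) ^ b * 1 :=
      mul_le_mul h2 hexp (Real.exp_pos _).le (by positivity)
    nlinarith
  · have hbN : b ≤ ε * N := by
      have h := Nat.le_ceil (b / ε)
      have h' : b / ε ≤ (N:ℝ) := by
        rw [hN]; push_cast; linarith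
      have : b = ε * (b / ε) := by field_simp
      rw [this]; nlinarith
    have key1 : (t+1) ^ b ≤ (2:ℝ) ^ b * t ^ b := by
      calc (t+1) ^ b ≤ (2*t) ^ b := Real.rpow_le_rpow (by linarith) (by linarith) hb
        _ = (2:ℝ) ^ b * t ^ b := Real.mul_rpow (by norm_num) (by linarith)
    have key2 : t ^ b ≤ (t ^ ε) ^ N := by
      have h := Real.rpow_le_rpow_of_exponent_le h1.le hbN
      rwa [Real.rpow_mul (by linarith), Real.rpow_natCast] at h
    have key3 : (t ^ ε) ^ N * Real.exp (-(p * t ^ ε)) ≤ ((N:ℝ)/p) ^ N := by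
      set s := t ^ ε with hs
      have h6 : s ^ N ≤ ((N:ℝ)/p) ^ N * Real.exp (p * s) := by
        have h7 : ((N:ℝ)/p) ^ N * ((p*s)/N) ^ N = s ^ N := by
          rw [← mul_pow]; congr 1; field_simp
        calc s ^ N = ((N:ℝ)/p) ^ N * ((p*s)/N) ^ N := h7.symm
          _ ≤ ((N:ℝ)/p) ^ N * Real.exp (p*s) :=
              mul_le_mul_of_nonneg_left
                (aux_pow_div_le_exp (p*s) (by positivity) N) hNP
      rw [Real.exp_neg, ← div_eq_mul_inv, div_le_iff₀ (Real.exp_pos _)]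
      linarith
    have he : (0:ℝ) < Real.exp (-(p * t ^ ε)) := Real.exp_pos _
    calc (t+1) ^ b * Real.exp (-(p*t^ε))
        ≤ (2:ℝ)^b * t^b * Real.exp (-(p*t^ε)) :=
          mul_le_mul_of_nonneg_right key1 he.le
      _ ≤ (2:ℝ)^b * ((t^ε)^N * Real.exp (-(p*t^ε))) := by
          rw [mul_assoc]
          exact mul_le_mul_of_nonneg_left
            (mul_le_mul_of_nonneg_right key2 he.le) h2pos.le
      _ ≤ (2:ℝ)^b * (((N:ℝ)/p)^N) := mul_le_mul_of_nonneg_left key3 h2pos.le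
      _ ≤ (2:ℝ)^b * (((N:ℝ)/p)^N + 1) := by nlinarith

set_option maxHeartbeats 1000000

/-- For all `p, ε > 0` and `k, l ∈ ℝ` there is `C > 0` such that
`∫_ℂ (β(z,w)+1)^l ρ(w)^k e^{-p(|z-w|/ρ(z))^ε} dA(w) ≤ C ρ(z)^{k+2}` for every `z ∈ ℂ`. -/
theorem stmt2
    (ρ : ℂ → ℝ) (hρ : ∀ z, 0 < ρ z)
    (C₀ θ : ℝ) (hC₀ : 0 < C₀) (hθ : 0 < θ)
    (hρ₁ : ∀ (z w : ℂ) (r : ℝ), 0 < r → r ≤ 1 → w ∈ Metric.ball z (r * ρ z) →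
      C₀⁻¹ ≤ ρ w / ρ z ∧ ρ w / ρ z ≤ C₀)
    (hρ₂ : ∀ (z w : ℂ) (r : ℝ), 1 < r → w ∈ Metric.ball z (r * ρ z) →
      (C₀ * r ^ θ)⁻¹ ≤ ρ w / ρ z ∧ ρ w / ρ z ≤ C₀ * r ^ θ)
    (β : ℂ → ℂ → ℝ)
    (hβsymm : ∀ z w, β z w = β w z) (hβnonneg : ∀ z w, 0 ≤ β z w)
    (hβeq : ∀ z w, β z w = 0 ↔ z = w)
    (hβtri : ∀ z w u, β z u ≤ β z w + β w u)
    (δ : ℝ) (hδ : 0 < δ ∧ δ < 1)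
    (hβ : ∀ r : ℝ, 0 < r → ∃ Cr : ℝ, 0 < Cr ∧
      (∀ z w : ℂ, w ∈ Metric.ball z (r * ρ z) →
        Cr⁻¹ * (‖z - w‖ / ρ z) ≤ β z w ∧
        β z w ≤ Cr * (‖z - w‖ / ρ z)) ∧
      (∀ z w : ℂ, w ∉ Metric.ball z (r * ρ z) →
        Cr⁻¹ * (‖z - w‖ / ρ z) ^ δ ≤ β z w ∧
        β z w ≤ Cr * (‖z - w‖ / ρ z) ^ (2 - δ)))
    (p ε k l : ℝ) (hp : 0 < p) (hε : 0 < ε) :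
    ∃ C : ℝ, 0 < C ∧ ∀ z : ℂ,
      (∫⁻ w : ℂ, ENNReal.ofReal ((β z w + 1) ^ l * ρ w ^ k *
          Real.exp (-p * (‖z - w‖ / ρ z) ^ ε))) ≤
        ENNReal.ofReal (C * ρ z ^ (k + 2)) := by
  obtain ⟨C₁, hC₁, hβin, hβout⟩ := hβ 1 one_pos
  have hC₀1 : (1:ℝ) ≤ C₀ := by
    have h := hρ₁ 0 0 1 one_pos le_rfl (Metric.mem_ball_self (by linarith [hρ 0]))
    rw [div_self (hρ 0).ne'] at h
    exact h.2
  set L := |l| with hL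
  set K := |k| with hK
  have hL0 : 0 ≤ L := abs_nonneg l
  have hK0 : 0 ≤ K := abs_nonneg k
  set a := 2 * L + θ * K + 3 with ha
  have ha0 : 0 ≤ a := by positivity
  obtain ⟨C₃, hC₃, hC₃b⟩ := aux_exp_bound p ε a hp hε ha0
  set M := (C₁ + 1) ^ L * C₀ ^ K with hM
  have hMpos : 0 < M := by positivity
  set D := M * C₃ with hD
  have hDpos : 0 < D := by positivity
  set I := ∫⁻ u : ℂ, ENNReal.ofReal ((1 + ‖u‖) ^ (-(3:ℝ))) with hI
  have hIlt : I < ⊤ := finite_integral_one_add_norm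
    (by rw [Complex.finrank_real_complex]; norm_num)
  have hIt : 0 ≤ I.toReal := ENNReal.toReal_nonneg
  refine ⟨D * I.toReal + 1, by positivity, ?_⟩
  intro z
  have hρz := hρ z
  have key : ∀ w : ℂ,
      (β z w + 1) ^ l * ρ w ^ k * Real.exp (-p * (‖z - w‖ / ρ z) ^ ε)
        ≤ (D * ρ z ^ k) * (1 + ‖(ρ z)⁻¹ • (w - z)‖) ^ (-(3:ℝ)) := by
    intro w
    rw [neg_mul]
    set t := ‖z - w‖ / ρ z with htdef
    have ht0 : 0 ≤ t := by positivity
    have ht1 : (1:ℝ) ≤ t + 1 := by linarith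
    have habs : ‖z - w‖ = t * ρ z := by
      rw [htdef, div_mul_cancel₀ _ hρz.ne']
    have hnorm : ‖(ρ z)⁻¹ • (w - z)‖ = t := by
      rw [norm_smul, norm_inv, Real.norm_eq_abs, abs_of_pos hρz, norm_sub_rev w z, inv_mul_eq_div]
    have hr2 : (1:ℝ) ≤ (t+1) ^ (2:ℝ) := Real.one_le_rpow ht1 (by norm_num)
    have hβb : β z w ≤ C₁ * (t + 1) ^ (2:ℝ) := by
      by_cases hw : w ∈ Metric.ball z (1 * ρ z)
      · have h := (hβin z w hw).2
        have h3 : t ≤ (t+1) ^ (2:ℝ) := by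
          have h4 := Real.rpow_le_rpow_of_exponent_le ht1 (by norm_num : (1:ℝ) ≤ 2)
          rw [Real.rpow_one] at h4; linarith
        nlinarith
      · have h := (hβout z w hw).2
        have htge : 1 ≤ t := by
          have h5 : ρ z ≤ ‖z - w‖ := by
            simp only [Metric.mem_ball, not_lt, one_mul] at hw
            rwa [dist_eq_norm, norm_sub_rev] at hw
          rw [habs] at h5; nlinarith
        have h3 : t ^ (2 - δ) ≤ (t+1) ^ (2:ℝ) := by
          calc t ^ (2-δ) ≤ (t+1) ^ (2-δ) :=
                Real.rpow_le_rpow (by linarith) (by linarith) (by linarith [hδ.2])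
            _ ≤ (t+1) ^ (2:ℝ) :=
                Real.rpow_le_rpow_of_exponent_le ht1 (by linarith [hδ.1])
        nlinarith
    have hβ1 : (1:ℝ) ≤ β z w + 1 := by linarith [hβnonneg z w]
    have hA : (β z w + 1) ^ l ≤ (C₁+1) ^ L * (t+1) ^ (2*L) := by
      have hfac1 : (1:ℝ) ≤ (C₁+1) ^ L := Real.one_le_rpow (by linarith) hL0
      have hfac2 : (1:ℝ) ≤ (t+1) ^ (2*L) := Real.one_le_rpow ht1 (by positivity)
      rcases le_or_gt 0 l with hl | hl
      · have hLl : L = l := abs_of_nonneg hl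
        have h1 : β z w + 1 ≤ (C₁+1) * (t+1) ^ (2:ℝ) := by nlinarith
        calc (β z w + 1) ^ l ≤ ((C₁+1) * (t+1) ^ (2:ℝ)) ^ l :=
              Real.rpow_le_rpow (by linarith) h1 hl
          _ = (C₁+1) ^ l * ((t+1) ^ (2:ℝ)) ^ l :=
              Real.mul_rpow (by linarith) (by positivity)
          _ = (C₁+1) ^ L * (t+1) ^ (2*L) := by
              rw [hLl, ← Real.rpow_mul (by linarith : (0:ℝ) ≤ t+1)]
      · have h := Real.rpow_le_one_of_one_le_of_nonpos hβ1 hl.le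
        nlinarith
    have hθt : (1:ℝ) ≤ (t+1) ^ θ := Real.one_le_rpow ht1 hθ.le
    have hm1 : (1:ℝ) ≤ C₀ * (t+1) ^ θ := by nlinarith [hC₀1, hθt]
    have hmpos : (0:ℝ) < C₀ * (t+1) ^ θ := by linarith
    have hratio : (C₀ * (t+1) ^ θ)⁻¹ ≤ ρ w / ρ z ∧ ρ w / ρ z ≤ C₀ * (t+1) ^ θ := by
      rcases lt_or_eq_of_le ht0 with h0 | h0
      · refine hρ₂ z w (t+1) (by linarith) ?_
        rw [Metric.mem_ball, dist_eq_norm, norm_sub_rev, habs]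
        nlinarith
      · have hwz : w = z := by
          have h1 : ‖z - w‖ = 0 := by rw [habs, ← h0]; ring
          have h2 : z = w := by simpa [sub_eq_zero] using h1
          exact h2.symm
        rw [hwz, div_self hρz.ne']
        exact ⟨inv_le_one_of_one_le₀ hm1, hm1⟩
    have hBq : (ρ w / ρ z) ^ k ≤ (C₀ * (t+1) ^ θ) ^ K := by
      rcases le_or_gt 0 k with hk | hk
      · calc (ρ w / ρ z) ^ k ≤ (C₀ * (t+1) ^ θ) ^ k :=
              Real.rpow_le_rpow (div_nonneg (hρ w).le (hρ z).le) hratio.2 hk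
          _ = (C₀ * (t+1) ^ θ) ^ K := by rw [hK, abs_of_nonneg hk]
      · calc (ρ w / ρ z) ^ k ≤ ((C₀ * (t+1) ^ θ)⁻¹) ^ k :=
              Real.rpow_le_rpow_of_nonpos (inv_pos.mpr hmpos) hratio.1 hk.le
          _ = (C₀ * (t+1) ^ θ) ^ (-k) := by
              rw [Real.inv_rpow hmpos.le, ← Real.rpow_neg hmpos.le]
          _ = (C₀ * (t+1) ^ θ) ^ K := by rw [hK, abs_of_neg hk]
    have hmK : (C₀ * (t+1) ^ θ) ^ K = C₀ ^ K * (t+1) ^ (θ*K) := by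
      rw [Real.mul_rpow hC₀.le (by positivity), ← Real.rpow_mul (by linarith : (0:ℝ) ≤ t+1)]
    have hρzk : (0:ℝ) < ρ z ^ k := Real.rpow_pos_of_pos hρz k
    have hB : ρ w ^ k ≤ C₀ ^ K * (t+1) ^ (θ*K) * ρ z ^ k := by
      have h1 : (ρ w / ρ z) ^ k = ρ w ^ k / ρ z ^ k :=
        Real.div_rpow (hρ w).le (hρ z).le k
      rw [h1, hmK] at hBq
      rw [div_le_iff₀ hρzk] at hBq
      linarith
    have hE : (0:ℝ) < Real.exp (-(p * t ^ ε)) := Real.exp_pos _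
    have hP1 : (0:ℝ) ≤ (C₁+1) ^ L * (t+1) ^ (2*L) := by positivity
    have hstep1 : (β z w + 1) ^ l * ρ w ^ k * Real.exp (-(p * t ^ ε))
        ≤ ((C₁+1) ^ L * (t+1) ^ (2*L)) * (C₀ ^ K * (t+1) ^ (θ*K) * ρ z ^ k)
          * Real.exp (-(p * t ^ ε)) := by
      refine mul_le_mul_of_nonneg_right ?_ hE.le
      exact mul_le_mul hA hB (Real.rpow_nonneg (hρ w).le k) hP1
    have hsplit : (t+1) ^ (2*L) * (t+1) ^ (θ*K) = (t+1) ^ a * (t+1) ^ (-(3:ℝ)) := by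
      rw [← Real.rpow_add (by linarith : (0:ℝ) < t+1),
        ← Real.rpow_add (by linarith : (0:ℝ) < t+1)]
      congr 1; rw [ha]; ring
    have hC3 := hC₃b t ht0
    calc (β z w + 1) ^ l * ρ w ^ k * Real.exp (-(p * t ^ ε))
        ≤ ((C₁+1) ^ L * (t+1) ^ (2*L)) * (C₀ ^ K * (t+1) ^ (θ*K) * ρ z ^ k)
          * Real.exp (-(p * t ^ ε)) := hstep1
      _ = (M * ρ z ^ k) * (((t+1) ^ (2*L) * (t+1) ^ (θ*K)) * Real.exp (-(p * t ^ ε))) := by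
          rw [hM]; ring
      _ = (M * ρ z ^ k) * (((t+1) ^ a * Real.exp (-(p * t ^ ε))) * (t+1) ^ (-(3:ℝ))) := by
          rw [hsplit]; ring
      _ ≤ (M * ρ z ^ k) * (C₃ * (t+1) ^ (-(3:ℝ))) := by
          refine mul_le_mul_of_nonneg_left ?_ (by positivity)
          exact mul_le_mul_of_nonneg_right hC3 (Real.rpow_nonneg (by linarith) _)
      _ = (D * ρ z ^ k) * (1 + ‖(ρ z)⁻¹ • (w - z)‖) ^ (-(3:ℝ)) := by
          rw [hnorm, add_comm 1 t, hD]; ring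
  have hcont : Continuous fun u : ℂ => (1 + ‖u‖) ^ (-(3:ℝ)) :=
    (continuous_const.add continuous_norm).rpow_const (fun u => Or.inl (by positivity : (0:ℝ) < 1 + ‖u‖).ne')
  have hmeas : Measurable fun u : ℂ => ENNReal.ofReal ((1 + ‖u‖) ^ (-(3:ℝ))) :=
    hcont.measurable.ennreal_ofReal
  have hpow : ρ z ^ k * ρ z ^ (2:ℕ) = ρ z ^ (k + 2) := by
    rw [← Real.rpow_natCast (ρ z) 2, ← Real.rpow_add hρz]; norm_num
  calc (∫⁻ w : ℂ, ENNReal.ofReal ((β z w + 1) ^ l * ρ w ^ k *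
          Real.exp (-p * (‖z - w‖ / ρ z) ^ ε)))
      ≤ ∫⁻ w : ℂ, ENNReal.ofReal ((D * ρ z ^ k) * (1 + ‖(ρ z)⁻¹ • (w - z)‖) ^ (-(3:ℝ))) :=
        lintegral_mono fun w => ENNReal.ofReal_le_ofReal (key w)
    _ = ENNReal.ofReal (D * ρ z ^ k) *
        ∫⁻ w : ℂ, ENNReal.ofReal ((1 + ‖(ρ z)⁻¹ • (w - z)‖) ^ (-(3:ℝ))) := by
        simp_rw [ENNReal.ofReal_mul (by positivity : (0:ℝ) ≤ D * ρ z ^ k)]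
        exact lintegral_const_mul' _ _ ENNReal.ofReal_ne_top
    _ = ENNReal.ofReal (D * ρ z ^ k) * (ENNReal.ofReal (ρ z ^ (2:ℕ)) * I) := by
        congr 1
        have h1 : (∫⁻ w : ℂ, ENNReal.ofReal ((1 + ‖(ρ z)⁻¹ • (w - z)‖) ^ (-(3:ℝ))))
            = ∫⁻ w : ℂ, ENNReal.ofReal ((1 + ‖(ρ z)⁻¹ • w‖) ^ (-(3:ℝ))) :=
          lintegral_sub_right_eq_self
            (fun x : ℂ => ENNReal.ofReal ((1 + ‖(ρ z)⁻¹ • x‖) ^ (-(3:ℝ)))) z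
        rw [h1]
        have h2 : (∫⁻ w : ℂ, ENNReal.ofReal ((1 + ‖(ρ z)⁻¹ • w‖) ^ (-(3:ℝ))))
            = ∫⁻ u, ENNReal.ofReal ((1 + ‖u‖) ^ (-(3:ℝ)))
                ∂(Measure.map (fun w : ℂ => (ρ z)⁻¹ • w) volume) :=
          (lintegral_map hmeas ((continuous_const_smul ((ρ z)⁻¹)).measurable)).symm
        rw [h2, Measure.map_addHaar_smul volume (inv_ne_zero hρz.ne'),
          lintegral_smul_measure, ← hI]
        congr 1
        rw [Complex.finrank_real_complex, inv_pow, inv_inv, abs_of_pos (by positivity)]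
    _ ≤ ENNReal.ofReal ((D * I.toReal + 1) * ρ z ^ (k + 2)) := by
        conv_lhs => rw [← ENNReal.ofReal_toReal hIlt.ne,
          ← ENNReal.ofReal_mul (by positivity : (0:ℝ) ≤ ρ z ^ (2:ℕ)),
          ← ENNReal.ofReal_mul (by positivity : (0:ℝ) ≤ D * ρ z ^ k)]
        apply ENNReal.ofReal_le_ofReal
        calc D * ρ z ^ k * (ρ z ^ (2:ℕ) * I.toReal)
            = D * I.toReal * (ρ z ^ k * ρ z ^ (2:ℕ)) := by ring
          _ = D * I.toReal * ρ z ^ (k+2) := by rw [hpow]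
          _ ≤ (D * I.toReal + 1) * ρ z ^ (k+2) := by
              nlinarith [Real.rpow_nonneg hρz.le (k+2)]
end

section
/- For all p, ε > 0 and all k, l ∈ ℝ, the quantity sup_{z∈ℂ} ρ(z)^{−(k+2)} ∫_{ℂ \ B(z,R)} (β(z,w) + 1)^l ρ(w)^k e^{−p(|z−w|/ρ(z))^ε} dA(w) tends to 0 as R → ∞. -/
open MeasureTheory Filter Metric Set
open scoped ENNReal

private lemma aux_bound {a c ε : ℝ} (ha : 0 ≤ a) (hc : 0 < c) (hε : 0 < ε) :
    ∃ B : ℝ, 0 < B ∧ ∀ t : ℝ, 0 ≤ t → (1 + t) ^ a * Real.exp (-c * t ^ ε) ≤ B := by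
  have h0 : Tendsto (fun u : ℝ => u ^ (a / ε) * Real.exp (-c * u)) atTop (nhds 0) :=
    tendsto_rpow_mul_exp_neg_mul_atTop_nhds_zero (a / ε) c hc
  have h1 : Tendsto (fun t : ℝ => (t ^ ε) ^ (a / ε) * Real.exp (-c * t ^ ε)) atTop (nhds 0) :=
    h0.comp (tendsto_rpow_atTop hε)
  have hpos : (0:ℝ) < 2 ^ (-a) := by positivity
  have h2 : ∀ᶠ t in atTop, (t ^ ε) ^ (a / ε) * Real.exp (-c * t ^ ε) < 2 ^ (-a) :=
    h1.eventually (gt_mem_nhds hpos)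
  obtain ⟨T, hT⟩ := eventually_atTop.1 h2
  set T' := max T 1 with hT'
  refine ⟨max ((1 + T') ^ a) 1, lt_of_lt_of_le one_pos (le_max_right _ _), fun t ht => ?_⟩
  rcases le_total t T' with h | h
  · have e1 : (1 + t) ^ a ≤ (1 + T') ^ a :=
      Real.rpow_le_rpow (by linarith) (by linarith) ha
    have e2 : Real.exp (-c * t ^ ε) ≤ 1 := by
      rw [Real.exp_le_one_iff]
      have : 0 ≤ t ^ ε := Real.rpow_nonneg ht ε
      nlinarith
    calc (1 + t) ^ a * Real.exp (-c * t ^ ε) ≤ (1 + T') ^ a * 1 := by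
          apply mul_le_mul e1 e2 (Real.exp_pos _).le (Real.rpow_nonneg (by linarith) a)
      _ = (1 + T') ^ a := mul_one _
      _ ≤ max ((1 + T') ^ a) 1 := le_max_left _ _
  · have ht1 : (1:ℝ) ≤ t := le_trans (le_max_right T 1) h
    have htT : T ≤ t := le_trans (le_max_left T 1) h
    have e1 : (1 + t) ^ a ≤ 2 ^ a * (t ^ ε) ^ (a / ε) := by
      have e2 : (1 + t) ^ a ≤ (2 * t) ^ a :=
        Real.rpow_le_rpow (by linarith) (by linarith) ha
      have e3 : (2 * t) ^ a = 2 ^ a * t ^ a := Real.mul_rpow (by norm_num) (by linarith)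
      have e4 : (t ^ ε) ^ (a / ε) = t ^ a := by
        rw [← Real.rpow_mul (by linarith)]
        congr 1
        field_simp
      rw [e4, ← e3]
      exact e2
    have e5 : (t ^ ε) ^ (a / ε) * Real.exp (-c * t ^ ε) ≤ 2 ^ (-a) := (hT t htT).le
    calc (1 + t) ^ a * Real.exp (-c * t ^ ε)
        ≤ (2 ^ a * (t ^ ε) ^ (a / ε)) * Real.exp (-c * t ^ ε) :=
          mul_le_mul_of_nonneg_right e1 (Real.exp_pos _).le
      _ = 2 ^ a * ((t ^ ε) ^ (a / ε) * Real.exp (-c * t ^ ε)) := by ring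
      _ ≤ 2 ^ a * 2 ^ (-a) := by
          apply mul_le_mul_of_nonneg_left e5 (Real.rpow_nonneg (by norm_num) a)
      _ = 1 := by
          rw [← Real.rpow_add (by norm_num)]
          simp
      _ ≤ max ((1 + T') ^ a) 1 := le_max_right _ _

private lemma exp_integral_lt_top {c ε : ℝ} (hc : 0 < c) (hε : 0 < ε) :
    (∫⁻ u : ℂ, ENNReal.ofReal (Real.exp (-c * ‖u‖ ^ ε))) < ⊤ := by
  obtain ⟨B, hB, hBle⟩ := aux_bound (a := 3) (by norm_num) hc hε
  have hfin : (Module.finrank ℝ ℂ : ℝ) < 3 := by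
    rw [Complex.finrank_real_complex]; norm_num
  have hint : Integrable (fun u : ℂ => B * (1 + ‖u‖) ^ (-(3:ℝ))) :=
    (integrable_one_add_norm hfin).const_mul B
  have hpt : ∀ u : ℂ, Real.exp (-c * ‖u‖ ^ ε) ≤ B * (1 + ‖u‖) ^ (-(3:ℝ)) := by
    intro u
    have h1 := hBle ‖u‖ (norm_nonneg u)
    have h2 : (0:ℝ) < (1 + ‖u‖) ^ (3:ℝ) := by positivity
    rw [Real.rpow_neg (by positivity), ← div_eq_mul_inv, le_div_iff₀ h2]
    linarith [h1, mul_comm ((1 + ‖u‖) ^ (3:ℝ)) (Real.exp (-c * ‖u‖ ^ ε))]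
  calc (∫⁻ u : ℂ, ENNReal.ofReal (Real.exp (-c * ‖u‖ ^ ε)))
      ≤ ∫⁻ u : ℂ, ENNReal.ofReal (B * (1 + ‖u‖) ^ (-(3:ℝ))) :=
        lintegral_mono fun u => ENNReal.ofReal_le_ofReal (hpt u)
    _ < ⊤ := by
        rw [← hasFiniteIntegral_iff_ofReal (ae_of_all _ fun u => by positivity)]
        exact hint.hasFiniteIntegral

private lemma rpow_bound {b Y l : ℝ} (hb : 1 ≤ b) (hY : b ≤ Y) : b ^ l ≤ Y ^ |l| := by
  rcases le_or_gt 0 l with h | h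
  · rw [abs_of_nonneg h]; exact Real.rpow_le_rpow (by linarith) hY h
  · calc b ^ l ≤ 1 := Real.rpow_le_one_of_one_le_of_nonpos hb h.le
      _ ≤ Y ^ |l| := Real.one_le_rpow (le_trans hb hY) (abs_nonneg l)

private lemma rpow_ratio_bound {x y D k : ℝ} (hx : 0 < x) (hy : 0 < y) (hD : 1 ≤ D)
    (hlow : D⁻¹ ≤ y / x) (hup : y / x ≤ D) : y ^ k ≤ x ^ k * D ^ |k| := by
  have hD0 : 0 < D := lt_of_lt_of_le one_pos hD
  have hyx : y ^ k = x ^ k * (y / x) ^ k := by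
    rw [Real.div_rpow hy.le hx.le]
    field_simp
  rcases le_or_gt 0 k with h | h
  · rw [abs_of_nonneg h, hyx]
    exact mul_le_mul_of_nonneg_left
      (Real.rpow_le_rpow (by positivity) hup h) (Real.rpow_nonneg hx.le k)
  · rw [abs_of_neg h, hyx]
    have h1 : (y / x) ^ k ≤ (D⁻¹) ^ k :=
      Real.rpow_le_rpow_of_nonpos (by positivity) hlow h.le
    have h2 : (D⁻¹) ^ k = D ^ (-k) := by
      rw [Real.inv_rpow hD0.le, ← Real.rpow_neg hD0.le]
    rw [h2] at h1
    exact mul_le_mul_of_nonneg_left h1 (Real.rpow_nonneg hx.le k)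

private lemma lintegral_scale {c ε : ℝ} (R : ℝ) (hR : 0 < R) :
    (∫⁻ v : ℂ, ENNReal.ofReal (Real.exp (-c * (‖v‖ / R) ^ ε))) =
      ENNReal.ofReal (R ^ 2) * ∫⁻ u : ℂ, ENNReal.ofReal (Real.exp (-c * ‖u‖ ^ ε)) := by
  have hG : Measurable fun v : ℂ => ENNReal.ofReal (Real.exp (-c * (‖v‖ / R) ^ ε)) := by
    fun_prop
  have hmap := Measure.map_addHaar_smul (volume : Measure ℂ) (ne_of_gt hR)
  have h1 : (∫⁻ v, ENNReal.ofReal (Real.exp (-c * (‖v‖ / R) ^ ε))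
        ∂(Measure.map (R • ·) (volume : Measure ℂ)))
      = ∫⁻ u : ℂ, ENNReal.ofReal (Real.exp (-c * (‖R • u‖ / R) ^ ε)) :=
    lintegral_map hG (measurable_const_smul R)
  have h2 : ∀ u : ℂ, ‖R • u‖ / R = ‖u‖ := by
    intro u
    rw [norm_smul, Real.norm_eq_abs, abs_of_pos hR, mul_comm, mul_div_assoc, div_self hR.ne',
      mul_one]
  simp_rw [h2] at h1
  rw [hmap] at h1
  rw [lintegral_smul_measure, smul_eq_mul] at h1
  have h3 : |((R : ℝ) ^ Module.finrank ℝ ℂ)⁻¹| = (R ^ 2)⁻¹ := by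
    rw [Complex.finrank_real_complex, abs_of_pos (by positivity)]
  rw [h3] at h1
  have hR2 : (0:ℝ) < R ^ 2 := by positivity
  rw [← h1, ← mul_assoc, ← ENNReal.ofReal_mul hR2.le, mul_inv_cancel₀ hR2.ne',
    ENNReal.ofReal_one, one_mul]

set_option maxHeartbeats 1000000 in
/-- The quantity
`sup_z ρ(z)^{-(k+2)} ∫_{ℂ∖B(z,R)} (β(z,w)+1)^l ρ(w)^k e^{-p(|z-w|/ρ(z))^ε} dA(w)`
tends to `0` as `R → ∞`; equivalently, for every `e > 0` there is `R₀` such that for all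
`R ≥ R₀` and all `z` the tail integral is at most `e · ρ(z)^{k+2}`. -/
theorem stmt3
    (ρ : ℂ → ℝ) (hρ : ∀ z, 0 < ρ z)
    (C₀ θ : ℝ) (hC₀ : 0 < C₀) (hθ : 0 < θ)
    (hρ₁ : ∀ (z w : ℂ) (r : ℝ), 0 < r → r ≤ 1 → w ∈ Metric.ball z (r * ρ z) →
      C₀⁻¹ ≤ ρ w / ρ z ∧ ρ w / ρ z ≤ C₀)
    (hρ₂ : ∀ (z w : ℂ) (r : ℝ), 1 < r → w ∈ Metric.ball z (r * ρ z) →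
      (C₀ * r ^ θ)⁻¹ ≤ ρ w / ρ z ∧ ρ w / ρ z ≤ C₀ * r ^ θ)
    (β : ℂ → ℂ → ℝ)
    (hβsymm : ∀ z w, β z w = β w z) (hβnonneg : ∀ z w, 0 ≤ β z w)
    (hβeq : ∀ z w, β z w = 0 ↔ z = w)
    (hβtri : ∀ z w u, β z u ≤ β z w + β w u)
    (δ : ℝ) (hδ : 0 < δ ∧ δ < 1)
    (hβ : ∀ r : ℝ, 0 < r → ∃ Cr : ℝ, 0 < Cr ∧
      (∀ z w : ℂ, w ∈ Metric.ball z (r * ρ z) →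
        Cr⁻¹ * (‖z - w‖ / ρ z) ≤ β z w ∧
        β z w ≤ Cr * (‖z - w‖ / ρ z)) ∧
      (∀ z w : ℂ, w ∉ Metric.ball z (r * ρ z) →
        Cr⁻¹ * (‖z - w‖ / ρ z) ^ δ ≤ β z w ∧
        β z w ≤ Cr * (‖z - w‖ / ρ z) ^ (2 - δ)))
    (p ε k l : ℝ) (hp : 0 < p) (hε : 0 < ε) :
    ∀ e : ℝ, 0 < e → ∃ R₀ : ℝ, ∀ R : ℝ, R₀ ≤ R → ∀ z : ℂ,
      (∫⁻ w in {w : ℂ | R ≤ β z w}, ENNReal.ofReal ((β z w + 1) ^ l * ρ w ^ k *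
          Real.exp (-p * (‖z - w‖ / ρ z) ^ ε))) ≤
        ENNReal.ofReal (e * ρ z ^ (k + 2)) := by
  intro e he
  obtain ⟨C₁, hC₁, hβin, hβout⟩ := hβ 1 one_pos
  have hC₀1 : 1 ≤ C₀ := by
    have h0ball : (0:ℂ) ∈ Metric.ball (0:ℂ) (1 * ρ 0) := by
      rw [one_mul]; exact Metric.mem_ball_self (hρ 0)
    have h := (hρ₁ 0 0 1 one_pos le_rfl h0ball).2
    rwa [div_self (hρ 0).ne'] at h
  set M := 2 * |l| + θ * |k| with hM
  have hM0 : 0 ≤ M := by positivity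
  have hp4 : (0:ℝ) < p / 4 := by linarith
  have hp2 : (0:ℝ) < p / 2 := by linarith
  obtain ⟨B, hB, hBle⟩ := aux_bound hM0 hp2 hε
  set J := ∫⁻ u : ℂ, ENNReal.ofReal (Real.exp (-(p/4) * ‖u‖ ^ ε)) with hJdef
  have hJ : J < ⊤ := exp_integral_lt_top hp4 hε
  set J₁ := J.toReal with hJ₁def
  have hJ₁ : 0 ≤ J₁ := ENNReal.toReal_nonneg
  set A := (C₁ + 1) ^ |l| * (C₀ ^ |k| * 2 ^ (θ * |k|)) with hA
  have hA0 : 0 < A := by positivity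
  -- choose T₀
  have htend : Tendsto (fun T : ℝ => Real.exp (-(p/4) * T ^ ε)) atTop (nhds 0) := by
    have h0 := (tendsto_rpow_mul_exp_neg_mul_atTop_nhds_zero 0 (p/4) hp4).comp
      (tendsto_rpow_atTop hε)
    have heq : (fun T : ℝ => (T ^ ε) ^ (0:ℝ) * Real.exp (-(p/4) * T ^ ε))
        = fun T : ℝ => Real.exp (-(p/4) * T ^ ε) := by
      funext T; rw [Real.rpow_zero, one_mul]
    rw [← heq]
    exact h0
  have hpos : (0:ℝ) < e / (A * B * (J₁ + 1)) := by positivity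
  have hsmall : ∀ᶠ T in atTop, Real.exp (-(p/4) * T ^ ε) < e / (A * B * (J₁ + 1)) :=
    htend.eventually (gt_mem_nhds hpos)
  obtain ⟨T₀', hT₀'⟩ := eventually_atTop.1 hsmall
  set T₀ := max T₀' 1 with hT₀def
  have hT₀1 : (1:ℝ) ≤ T₀ := le_max_right _ _
  have hT₀small : A * B * (J₁ + 1) * Real.exp (-(p/4) * T₀ ^ ε) ≤ e := by
    have h := hT₀' T₀ (le_max_left _ _)
    rw [lt_div_iff₀ (by positivity)] at h
    calc A * B * (J₁ + 1) * Real.exp (-(p/4) * T₀ ^ ε)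
        = Real.exp (-(p/4) * T₀ ^ ε) * (A * B * (J₁ + 1)) := by ring
      _ ≤ e := h.le
  have h2δ : (0:ℝ) < 2 - δ := by linarith [hδ.2]
  refine ⟨C₁ * T₀ ^ (2 - δ), fun R hR z => ?_⟩
  have hρz := hρ z
  have hT2 : 1 ≤ T₀ ^ (2 - δ) := Real.one_le_rpow hT₀1 h2δ.le
  have hC₁R : C₁ ≤ R := by
    calc C₁ = C₁ * 1 := (mul_one _).symm
      _ ≤ C₁ * T₀ ^ (2 - δ) := mul_le_mul_of_nonneg_left hT2 hC₁.le
      _ ≤ R := hR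
  set D := A * B * Real.exp (-(p/4) * T₀ ^ ε) * ρ z ^ k with hD
  have hD0 : 0 < D := by positivity
  -- pointwise bound on the set
  have hkey : ∀ w : ℂ, R ≤ β z w →
      (β z w + 1) ^ l * ρ w ^ k * Real.exp (-p * (‖z - w‖ / ρ z) ^ ε)
        ≤ D * Real.exp (-(p/4) * (‖z - w‖ / ρ z) ^ ε) := by
    intro w hwS
    set t := ‖z - w‖ / ρ z with ht
    have habs : ‖z - w‖ = dist w z := by
      rw [dist_comm, dist_eq_norm]
    have hnotball : w ∉ Metric.ball z (1 * ρ z) := by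
      intro hball
      have h := (hβin z w hball).2
      have ht1 : t < 1 := by
        rw [ht, div_lt_one hρz, habs]
        simpa using (mem_ball.1 hball)
      have : β z w < C₁ := lt_of_le_of_lt h (mul_lt_of_lt_one_right hC₁ ht1)
      linarith
    have ht1 : (1:ℝ) ≤ t := by
      rw [mem_ball, not_lt, one_mul] at hnotball
      rw [ht, le_div_iff₀ hρz, one_mul, habs]
      exact hnotball
    have ht0 : (0:ℝ) < t := lt_of_lt_of_le one_pos ht1
    have hβup : β z w ≤ C₁ * t ^ (2 - δ) := (hβout z w hnotball).2
    have htT : T₀ ≤ t := by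
      by_contra hlt
      push_neg at hlt
      have hlt2 : t ^ (2 - δ) < T₀ ^ (2 - δ) := Real.rpow_lt_rpow ht0.le hlt h2δ
      have hlt3 : C₁ * t ^ (2 - δ) < C₁ * T₀ ^ (2 - δ) := by
        exact mul_lt_mul_of_pos_left hlt2 hC₁
      linarith
    -- ρ w bound
    have hball2 : w ∈ Metric.ball z (2 * t * ρ z) := by
      rw [mem_ball, ← habs]
      have : ‖z - w‖ = t * ρ z := by
        rw [ht]; field_simp
      rw [this]
      have hpos2 : 0 < t * ρ z := mul_pos ht0 hρz
      linarith
    obtain ⟨hρlow, hρup⟩ := hρ₂ z w (2 * t) (by linarith) hball2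
    have h2t0 : (0:ℝ) ≤ 2 * t := by linarith
    have hD1 : 1 ≤ C₀ * (2 * t) ^ θ := by
      have h1 : (1:ℝ) ≤ (2 * t) ^ θ := Real.one_le_rpow (by linarith) hθ.le
      calc (1:ℝ) = 1 * 1 := by ring
        _ ≤ C₀ * (2 * t) ^ θ := mul_le_mul hC₀1 h1 zero_le_one hC₀.le
    have hρwk : ρ w ^ k ≤ ρ z ^ k * (C₀ * (2 * t) ^ θ) ^ |k| :=
      rpow_ratio_bound hρz (hρ w) hD1 hρlow hρup
    -- β + 1 bound
    have hβ1 : β z w + 1 ≤ (C₁ + 1) * t ^ (2:ℝ) := by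
      have h1 : t ^ (2 - δ) ≤ t ^ (2:ℝ) :=
        Real.rpow_le_rpow_of_exponent_le ht1 (by linarith [hδ.1])
      have h2 : (1:ℝ) ≤ t ^ (2:ℝ) := Real.one_le_rpow ht1 (by norm_num)
      have h3 : β z w ≤ C₁ * t ^ (2:ℝ) := hβup.trans (mul_le_mul_of_nonneg_left h1 hC₁.le)
      have h4 : (C₁ + 1) * t ^ (2:ℝ) = C₁ * t ^ (2:ℝ) + t ^ (2:ℝ) := by ring
      linarith
    have hβl : (β z w + 1) ^ l ≤ ((C₁ + 1) * t ^ (2:ℝ)) ^ |l| :=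
      rpow_bound (by linarith [hβnonneg z w]) hβ1
    -- rpow expansions
    have key1 : ((C₁ + 1) * t ^ (2:ℝ)) ^ |l| = (C₁ + 1) ^ |l| * t ^ (2 * |l|) := by
      rw [Real.mul_rpow (by linarith) (Real.rpow_nonneg ht0.le _),
        ← Real.rpow_mul ht0.le]
    have key2 : (C₀ * (2 * t) ^ θ) ^ |k|
        = C₀ ^ |k| * (2 ^ (θ * |k|) * t ^ (θ * |k|)) := by
      rw [Real.mul_rpow hC₀.le (Real.rpow_nonneg h2t0 _), ← Real.rpow_mul h2t0,
        Real.mul_rpow (by norm_num) ht0.le]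
    have key3 : t ^ (2 * |l|) * t ^ (θ * |k|) = t ^ M := by
      rw [hM, Real.rpow_add ht0]
    -- exponential splits
    have hexp1 : Real.exp (-p * t ^ ε)
        = Real.exp (-(p/2) * t ^ ε) * Real.exp (-(p/2) * t ^ ε) := by
      rw [← Real.exp_add]; ring_nf
    have hexp2 : Real.exp (-(p/2) * t ^ ε)
        = Real.exp (-(p/4) * t ^ ε) * Real.exp (-(p/4) * t ^ ε) := by
      rw [← Real.exp_add]; ring_nf
    have htε : T₀ ^ ε ≤ t ^ ε := Real.rpow_le_rpow (by linarith) htT hε.le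
    have hexp3 : Real.exp (-(p/4) * t ^ ε) ≤ Real.exp (-(p/4) * T₀ ^ ε) := by
      apply Real.exp_le_exp.2
      have := mul_le_mul_of_nonneg_left htε (le_of_lt hp4)
      linarith
    have hBM : t ^ M * Real.exp (-(p/2) * t ^ ε) ≤ B := by
      have h1 : t ^ M ≤ (1 + t) ^ M := Real.rpow_le_rpow ht0.le (by linarith) hM0
      have h2 := hBle t ht0.le
      calc t ^ M * Real.exp (-(p/2) * t ^ ε)
          ≤ (1 + t) ^ M * Real.exp (-(p/2) * t ^ ε) :=
            mul_le_mul_of_nonneg_right h1 (Real.exp_pos _).le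
        _ ≤ B := h2
    -- combine
    have hρwk0 : (0:ℝ) ≤ ρ w ^ k := Real.rpow_nonneg (hρ w).le k
    have hβl0 : (0:ℝ) ≤ (β z w + 1) ^ l := Real.rpow_nonneg (by linarith [hβnonneg z w]) l
    calc (β z w + 1) ^ l * ρ w ^ k * Real.exp (-p * t ^ ε)
        ≤ (((C₁ + 1) * t ^ (2:ℝ)) ^ |l|) * (ρ z ^ k * (C₀ * (2 * t) ^ θ) ^ |k|)
            * Real.exp (-p * t ^ ε) := by
          apply mul_le_mul_of_nonneg_right _ (Real.exp_pos _).le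
          exact mul_le_mul hβl hρwk hρwk0 (Real.rpow_nonneg (by positivity) _)
      _ = A * ρ z ^ k * (t ^ M * Real.exp (-(p/2) * t ^ ε)) * Real.exp (-(p/4) * t ^ ε)
            * Real.exp (-(p/4) * t ^ ε) := by
          rw [key1, key2, ← key3, hexp1, hexp2, hA]; ring
      _ ≤ A * ρ z ^ k * B * Real.exp (-(p/4) * T₀ ^ ε) * Real.exp (-(p/4) * t ^ ε) := by
          have hAρ : (0:ℝ) ≤ A * ρ z ^ k := by positivity
          have e1 : A * ρ z ^ k * (t ^ M * Real.exp (-(p/2) * t ^ ε)) ≤ A * ρ z ^ k * B :=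
            mul_le_mul_of_nonneg_left hBM hAρ
          have e2 : (0:ℝ) ≤ A * ρ z ^ k * (t ^ M * Real.exp (-(p/2) * t ^ ε)) := by positivity
          calc A * ρ z ^ k * (t ^ M * Real.exp (-(p/2) * t ^ ε)) * Real.exp (-(p/4) * t ^ ε)
              * Real.exp (-(p/4) * t ^ ε)
              ≤ A * ρ z ^ k * (t ^ M * Real.exp (-(p/2) * t ^ ε)) * Real.exp (-(p/4) * T₀ ^ ε)
                * Real.exp (-(p/4) * t ^ ε) := by
                apply mul_le_mul_of_nonneg_right _ (Real.exp_pos _).le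
                exact mul_le_mul_of_nonneg_left hexp3 e2
            _ ≤ A * ρ z ^ k * B * Real.exp (-(p/4) * T₀ ^ ε) * Real.exp (-(p/4) * t ^ ε) := by
                apply mul_le_mul_of_nonneg_right _ (Real.exp_pos _).le
                exact mul_le_mul_of_nonneg_right e1 (Real.exp_pos _).le
      _ = D * Real.exp (-(p/4) * t ^ ε) := by rw [hD]; ring_nf
  -- integral estimate
  have hGmeas : Measurable fun w : ℂ =>
      ENNReal.ofReal (Real.exp (-(p/4) * (‖z - w‖ / ρ z) ^ ε)) := by
    have : (fun w : ℂ => ENNReal.ofReal (Real.exp (-(p/4) * (‖z - w‖ / ρ z) ^ ε)))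
        = fun w : ℂ => ENNReal.ofReal (Real.exp (-(p/4) * (‖z - w‖ / ρ z) ^ ε)) := by
      funext w; rfl
    rw [this]
    fun_prop
  have step1 : (∫⁻ w in {w : ℂ | R ≤ β z w}, ENNReal.ofReal ((β z w + 1) ^ l * ρ w ^ k *
          Real.exp (-p * (‖z - w‖ / ρ z) ^ ε)))
      ≤ ∫⁻ w in {w : ℂ | R ≤ β z w},
          ENNReal.ofReal D * ENNReal.ofReal (Real.exp (-(p/4) * (‖z - w‖ / ρ z) ^ ε)) := by
    apply setLIntegral_mono (by fun_prop)
    intro w hw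
    rw [← ENNReal.ofReal_mul hD0.le]
    exact ENNReal.ofReal_le_ofReal (hkey w hw)
  have step2 : (∫⁻ w in {w : ℂ | R ≤ β z w},
          ENNReal.ofReal D * ENNReal.ofReal (Real.exp (-(p/4) * (‖z - w‖ / ρ z) ^ ε)))
      ≤ ∫⁻ w : ℂ,
          ENNReal.ofReal D * ENNReal.ofReal (Real.exp (-(p/4) * (‖z - w‖ / ρ z) ^ ε)) :=
    setLIntegral_le_lintegral _ _
  have step3 : (∫⁻ w : ℂ,
          ENNReal.ofReal D * ENNReal.ofReal (Real.exp (-(p/4) * (‖z - w‖ / ρ z) ^ ε)))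
      = ENNReal.ofReal D * (ENNReal.ofReal (ρ z ^ 2) * J) := by
    rw [lintegral_const_mul _ hGmeas]
    congr 1
    have htrans : (∫⁻ w : ℂ, ENNReal.ofReal (Real.exp (-(p/4) * (‖z - w‖ / ρ z) ^ ε)))
        = ∫⁻ v : ℂ, ENNReal.ofReal (Real.exp (-(p/4) * (‖v‖ / ρ z) ^ ε)) := by
      have hmp := Measure.measurePreserving_sub_left (volume : Measure ℂ) z
      have hmeas : Measurable fun v : ℂ =>
          ENNReal.ofReal (Real.exp (-(p/4) * (‖v‖ / ρ z) ^ ε)) := by fun_prop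
      have := hmp.lintegral_comp hmeas
      rw [← this]
    rw [htrans, lintegral_scale (ρ z) hρz, hJdef]
  have final : ENNReal.ofReal D * (ENNReal.ofReal (ρ z ^ 2) * J) ≤
      ENNReal.ofReal (e * ρ z ^ (k + 2)) := by
    rw [← ENNReal.ofReal_toReal hJ.ne, ← hJ₁def, ← ENNReal.ofReal_mul (by positivity),
      ← ENNReal.ofReal_mul hD0.le]
    apply ENNReal.ofReal_le_ofReal
    have hrw : ρ z ^ (k + 2) = ρ z ^ k * ρ z ^ 2 := by
      rw [Real.rpow_add hρz, Real.rpow_two]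
    rw [hrw]
    have h1 : A * B * Real.exp (-(p/4) * T₀ ^ ε) * J₁ ≤ e := by
      have h0 : (0:ℝ) ≤ A * B * Real.exp (-(p/4) * T₀ ^ ε) := by positivity
      calc A * B * Real.exp (-(p/4) * T₀ ^ ε) * J₁
          ≤ A * B * Real.exp (-(p/4) * T₀ ^ ε) * (J₁ + 1) :=
            mul_le_mul_of_nonneg_left (by linarith) h0
        _ = A * B * (J₁ + 1) * Real.exp (-(p/4) * T₀ ^ ε) := by ring
        _ ≤ e := hT₀small
    calc D * (ρ z ^ 2 * J₁)
        = A * B * Real.exp (-(p/4) * T₀ ^ ε) * J₁ * (ρ z ^ k * ρ z ^ 2) := by rw [hD]; ring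
      _ ≤ e * (ρ z ^ k * ρ z ^ 2) := by
          apply mul_le_mul_of_nonneg_right h1 (by positivity)
  exact le_trans step1 (le_trans step2 (le_of_eq_of_le step3 final))
end

section
/- For every p > 0 and every l ∈ ℝ there exists a constant C > 0 such that ∫_ℂ (β(z,ξ) + 1)^l |K(z,ξ)|^p e^{−pφ(ξ)} dA(ξ) ≤ C ρ(z)^{2(1−p)} e^{pφ(z)} for every z ∈ ℂ. -/
set_option maxHeartbeats 1000000


open MeasureTheory Filter Metric Set
open scoped ENNReal NNReal

private lemma rpow_add_le_add_rpow'' {x y : ℝ} (q : ℝ) (hx : 0 ≤ x) (hy : 0 ≤ y)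
    (hq0 : 0 ≤ q) (hq1 : q ≤ 1) : (x + y) ^ q ≤ x ^ q + y ^ q := by
  have h := NNReal.rpow_add_le_add_rpow x.toNNReal y.toNNReal hq0 hq1
  calc (x + y) ^ q = ((x.toNNReal + y.toNNReal : ℝ≥0) : ℝ) ^ q := by
        rw [NNReal.coe_add, Real.coe_toNNReal x hx, Real.coe_toNNReal y hy]
    _ = (((x.toNNReal + y.toNNReal) ^ q : ℝ≥0) : ℝ) := (NNReal.coe_rpow _ _).symm
    _ ≤ ((x.toNNReal ^ q + y.toNNReal ^ q : ℝ≥0) : ℝ) := NNReal.coe_le_coe.2 h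
    _ = x ^ q + y ^ q := by
        rw [NNReal.coe_add, NNReal.coe_rpow, NNReal.coe_rpow,
          Real.coe_toNNReal x hx, Real.coe_toNNReal y hy]

private lemma poly_exp_bound (m a e : ℝ) (hm : 0 ≤ m) (ha : 0 < a) (he : 0 < e) :
    ∃ M : ℝ, 0 < M ∧ ∀ t : ℝ, 0 ≤ t →
      (t + 2) ^ m * Real.exp (-(a * t ^ e)) ≤ M * (1 + t) ^ (-(3:ℝ)) := by
  obtain ⟨N, hN1, hN⟩ : ∃ N : ℕ, 1 ≤ N ∧ m + 3 ≤ e * N := by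
    refine ⟨max ⌈(m + 3) / e⌉₊ 1, Nat.le_max_right _ _, ?_⟩
    · have h1 : (m + 3) / e ≤ (⌈(m + 3) / e⌉₊ : ℝ) := Nat.le_ceil _
      have h2 : ((⌈(m + 3) / e⌉₊ : ℕ) : ℝ) ≤ ((max ⌈(m + 3) / e⌉₊ 1 : ℕ) : ℝ) := by
        exact_mod_cast Nat.le_max_left _ _
      calc m + 3 = e * ((m + 3) / e) := by field_simp
        _ ≤ e * ((max ⌈(m + 3) / e⌉₊ 1 : ℕ) : ℝ) :=
            mul_le_mul_of_nonneg_left (h1.trans h2) he.le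
  set M : ℝ := 3 ^ (m + 3) * (((N : ℝ) / a) ^ N + 1) with hM
  have h3m : (0:ℝ) < 3 ^ (m + 3) := Real.rpow_pos_of_pos (by norm_num) _
  have hNA : (0:ℝ) ≤ ((N : ℝ) / a) ^ N := by positivity
  have hMpos : 0 < M := by positivity
  refine ⟨M, hMpos, fun t ht => ?_⟩
  have h1t : (0:ℝ) < 1 + t := by linarith
  have ht2 : (0:ℝ) < t + 2 := by linarith
  have key : (t + 2) ^ (m + 3) * Real.exp (-(a * t ^ e)) ≤ M := by
    have hexp1 : Real.exp (-(a * t ^ e)) ≤ 1 := by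
      calc Real.exp (-(a * t ^ e)) ≤ Real.exp 0 := by
            apply Real.exp_le_exp.2
            have : (0:ℝ) ≤ a * t ^ e := by positivity
            linarith
        _ = 1 := Real.exp_zero
    rcases le_total t 1 with h | h
    · have hb : (t + 2) ^ (m + 3) ≤ 3 ^ (m + 3) :=
        Real.rpow_le_rpow (by linarith) (by linarith) (by linarith)
      calc (t + 2) ^ (m + 3) * Real.exp (-(a * t ^ e)) ≤ 3 ^ (m + 3) * 1 :=
            mul_le_mul hb hexp1 (Real.exp_pos _).le h3m.le
        _ ≤ M := by rw [hM]; nlinarith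
    · have ht0 : (0:ℝ) < t := lt_of_lt_of_le one_pos h
      have hte : (0:ℝ) < t ^ e := Real.rpow_pos_of_pos ht0 _
      have hx : (0:ℝ) < a * t ^ e := by positivity
      set x : ℝ := a * t ^ e with hxdef
      have hNpos : (0:ℝ) < N := by exact_mod_cast hN1
      have hexp : Real.exp (-x) ≤ ((N : ℝ) / x) ^ N := by
        have h3 : (x / N) ^ N ≤ Real.exp x := by
          have h4 : x / N + 1 ≤ Real.exp (x / N) := Real.add_one_le_exp _
          have h5 : (x / N) ^ N ≤ (x / N + 1) ^ N :=
            pow_le_pow_left₀ (by positivity) (by linarith) N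
          have h6 : (x / N + 1) ^ N ≤ Real.exp (x / N) ^ N :=
            pow_le_pow_left₀ (by positivity) h4 N
          have h7 : Real.exp (x / N) ^ N = Real.exp x := by
            rw [← Real.exp_nat_mul]
            congr 1
            field_simp
          linarith [h5.trans h6, h7.le, h7.ge]
        have h8 : (0:ℝ) < (x / N) ^ N := by positivity
        rw [Real.exp_neg]
        have h9 : ((N : ℝ) / x) ^ N = ((x / N) ^ N)⁻¹ := by
          rw [← inv_div, inv_pow]
        rw [h9]
        exact inv_anti₀ h8 h3
      have hb : (t + 2) ^ (m + 3) ≤ 3 ^ (m + 3) * t ^ (m + 3) := by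
        have h10 : t + 2 ≤ 3 * t := by linarith
        calc (t + 2) ^ (m + 3) ≤ (3 * t) ^ (m + 3) :=
              Real.rpow_le_rpow (by linarith) h10 (by linarith)
          _ = 3 ^ (m + 3) * t ^ (m + 3) := Real.mul_rpow (by norm_num) ht0.le
      have hNx : ((N : ℝ) / x) ^ N = ((N : ℝ) / a) ^ N * t ^ (-(e * N)) := by
        have h11 : (t ^ e) ^ N = t ^ (e * (N : ℝ)) := by
          rw [← Real.rpow_natCast (t ^ e) N, ← Real.rpow_mul ht]
        rw [hxdef, div_pow, div_pow, mul_pow, h11, Real.rpow_neg ht]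
        field_simp
      have hfin : t ^ (m + 3) * t ^ (-(e * (N:ℝ))) ≤ 1 := by
        rw [← Real.rpow_add ht0]
        exact Real.rpow_le_one_of_one_le_of_nonpos h (by linarith)
      calc (t + 2) ^ (m + 3) * Real.exp (-x)
          ≤ (3 ^ (m + 3) * t ^ (m + 3)) * (((N : ℝ) / a) ^ N * t ^ (-(e * (N:ℝ)))) := by
            apply mul_le_mul hb _ (Real.exp_pos _).le (by positivity)
            rw [← hNx]; exact hexp
        _ = 3 ^ (m + 3) * ((N : ℝ) / a) ^ N * (t ^ (m + 3) * t ^ (-(e * (N:ℝ)))) := by ring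
        _ ≤ 3 ^ (m + 3) * ((N : ℝ) / a) ^ N * 1 := by
            apply mul_le_mul_of_nonneg_left hfin (by positivity)
        _ ≤ M := by rw [hM]; nlinarith
  -- conclude
  have h3 : (0:ℝ) < (1 + t) ^ (3:ℝ) := Real.rpow_pos_of_pos h1t _
  rw [Real.rpow_neg h1t.le, ← div_eq_mul_inv, le_div_iff₀ h3]
  have h4 : (1 + t) ^ (3:ℝ) ≤ (t + 2) ^ (3:ℝ) :=
    Real.rpow_le_rpow h1t.le (by linarith) (by norm_num)
  calc (t + 2) ^ m * Real.exp (-(a * t ^ e)) * (1 + t) ^ (3:ℝ)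
      ≤ (t + 2) ^ m * Real.exp (-(a * t ^ e)) * (t + 2) ^ (3:ℝ) := by
        apply mul_le_mul_of_nonneg_left h4 (by positivity)
    _ = (t + 2) ^ (m + 3) * Real.exp (-(a * t ^ e)) := by
        rw [Real.rpow_add ht2]; ring
    _ ≤ M := key

private lemma lintegral_scale_abs (g : ℝ → ℝ) (hg : Measurable g) (c : ℝ) (hc : 0 < c) (z : ℂ) :
    (∫⁻ ξ : ℂ, ENNReal.ofReal (g (‖z - ξ‖ / c))) =
      ENNReal.ofReal (c ^ 2) * ∫⁻ u : ℂ, ENNReal.ofReal (g (‖u‖)) := by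
  have hF : Measurable fun u : ℂ => ENNReal.ofReal (g ‖u‖) :=
    ENNReal.measurable_ofReal.comp (hg.comp measurable_norm)
  have h1 : (∫⁻ ξ : ℂ, ENNReal.ofReal (g (‖z - ξ‖ / c))) =
      ∫⁻ ξ : ℂ, ENNReal.ofReal (g ‖c⁻¹ • ξ‖) := by
    have he : ∀ ξ : ℂ, ‖z - ξ‖ / c = ‖c⁻¹ • (ξ + -z)‖ := by
      intro ξ
      rw [norm_smul, Real.norm_eq_abs, abs_of_pos (inv_pos.2 hc), div_eq_inv_mul]
      congr 1
      rw [← sub_eq_add_neg, ← norm_neg (ξ - z), neg_sub]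
    simp_rw [he]
    exact lintegral_add_right_eq_self (fun ξ : ℂ => ENNReal.ofReal (g ‖c⁻¹ • ξ‖)) (-z)
  rw [h1]
  have h2 : (∫⁻ ξ : ℂ, ENNReal.ofReal (g ‖c⁻¹ • ξ‖)) =
      ∫⁻ u, ENNReal.ofReal (g ‖u‖) ∂(Measure.map (fun x : ℂ => c⁻¹ • x) volume) :=
    (lintegral_map hF (measurable_const_smul c⁻¹ : Measurable fun x : ℂ => c⁻¹ • x)).symm
  rw [h2, MeasureTheory.Measure.map_addHaar_smul (volume : Measure ℂ) (inv_ne_zero hc.ne'),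
    lintegral_smul_measure]
  have h3 : ENNReal.ofReal |(c⁻¹ ^ Module.finrank ℝ ℂ)⁻¹| = ENNReal.ofReal (c ^ 2) := by
    rw [Complex.finrank_real_complex, inv_pow, inv_inv, abs_of_pos (by positivity)]
  rw [h3, smul_eq_mul]

/-- For every `p > 0` and `l ∈ ℝ` there is `C > 0` such that
`∫_ℂ (β(z,ξ)+1)^l |K(z,ξ)|^p e^{-pφ(ξ)} dA(ξ) ≤ C ρ(z)^{2(1-p)} e^{pφ(z)}` for all `z`. -/
theorem stmt4
    (ρ : ℂ → ℝ) (hρ : ∀ z, 0 < ρ z)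
    (C₀ θ : ℝ) (hC₀ : 0 < C₀) (hθ : 0 < θ)
    (hρ₁ : ∀ (z w : ℂ) (r : ℝ), 0 < r → r ≤ 1 → w ∈ Metric.ball z (r * ρ z) →
      C₀⁻¹ ≤ ρ w / ρ z ∧ ρ w / ρ z ≤ C₀)
    (hρ₂ : ∀ (z w : ℂ) (r : ℝ), 1 < r → w ∈ Metric.ball z (r * ρ z) →
      (C₀ * r ^ θ)⁻¹ ≤ ρ w / ρ z ∧ ρ w / ρ z ≤ C₀ * r ^ θ)
    (β : ℂ → ℂ → ℝ)
    (hβsymm : ∀ z w, β z w = β w z) (hβnonneg : ∀ z w, 0 ≤ β z w)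
    (hβeq : ∀ z w, β z w = 0 ↔ z = w)
    (hβtri : ∀ z w u, β z u ≤ β z w + β w u)
    (δ : ℝ) (hδ : 0 < δ ∧ δ < 1)
    (hβ : ∀ r : ℝ, 0 < r → ∃ Cr : ℝ, 0 < Cr ∧
      (∀ z w : ℂ, w ∈ Metric.ball z (r * ρ z) →
        Cr⁻¹ * (‖z - w‖ / ρ z) ≤ β z w ∧
        β z w ≤ Cr * (‖z - w‖ / ρ z)) ∧
      (∀ z w : ℂ, w ∉ Metric.ball z (r * ρ z) →
        Cr⁻¹ * (‖z - w‖ / ρ z) ^ δ ≤ β z w ∧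
        β z w ≤ Cr * (‖z - w‖ / ρ z) ^ (2 - δ)))
    (φ : ℂ → ℝ) (hφm : Measurable φ)
    (K : ℂ → ℂ → ℂ)
    (hK : ∃ C : ℝ, 0 < C ∧ ∃ ε : ℝ, 0 < ε ∧ ∀ w z : ℂ,
      ‖K w z‖ ≤ C * (Real.exp (φ w + φ z) / (ρ w * ρ z)) *
        Real.exp (-((‖z - w‖ / ρ z) ^ ε)))
    (p l : ℝ) (hp : 0 < p) :
    ∃ C : ℝ, 0 < C ∧ ∀ z : ℂ,
      (∫⁻ ξ : ℂ, ENNReal.ofReal ((β z ξ + 1) ^ l * ‖K z ξ‖ ^ p *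
          Real.exp (-(p * φ ξ)))) ≤
        ENNReal.ofReal (C * ρ z ^ (2 * (1 - p)) * Real.exp (p * φ z)) := by
  obtain ⟨C, hCpos, ε, hεpos, hKb⟩ := hK
  obtain ⟨C₁, hC₁pos, hβin, hβout⟩ := hβ 1 one_pos
  set ε₁ : ℝ := min ε 1 with hε₁def
  have hε₁pos : 0 < ε₁ := lt_min hεpos one_pos
  have hε₁le1 : ε₁ ≤ 1 := min_le_right _ _
  have hε₁leε : ε₁ ≤ ε := min_le_left _ _
  set τ : ℝ := θ + 1 with hτdef
  have hτpos : 0 < τ := by rw [hτdef]; linarith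
  set ε' : ℝ := τ⁻¹ * ε₁ with hε'def
  have hε'pos : 0 < ε' := by rw [hε'def]; positivity
  set a₀ : ℝ := p / C₀ ^ ε' with ha₀def
  have hC₀ε' : 0 < C₀ ^ ε' := Real.rpow_pos_of_pos hC₀ _
  have ha₀pos : 0 < a₀ := by rw [ha₀def]; positivity
  set lp : ℝ := max l 0 with hlpdef
  have hlp0 : 0 ≤ lp := le_max_right _ _
  set m : ℝ := 2 * lp + θ * p with hmdef
  have hm0 : 0 ≤ m := by rw [hmdef]; positivity
  obtain ⟨M₃, hM₃pos, hpoly⟩ := poly_exp_bound m a₀ ε' hm0 ha₀pos hε'pos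
  set Mc : ℝ := (2 * C₁ + 1) ^ lp * C ^ p * C₀ ^ p * Real.exp (3 * p) * M₃ with hMcdef
  have hMcpos : 0 < Mc := by rw [hMcdef]; positivity
  set g : ℝ → ℝ := fun t => (1 + t) ^ (-(3:ℝ)) with hgdef
  have hgm : Measurable g := by
    rw [hgdef]
    fun_prop
  set Jc : ℝ≥0∞ := ∫⁻ u : ℂ, ENNReal.ofReal (g (‖u‖)) with hJdef
  have hJfin : Jc ≠ ⊤ := by
    have h3 : (Module.finrank ℝ ℂ : ℝ) < 3 := by
      rw [Complex.finrank_real_complex]; norm_num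
    have hfin := finite_integral_one_add_norm (E := ℂ) (μ := volume) h3
    rw [hJdef]
    simp only [hgdef]
    exact hfin.ne
  have hJ0 : 0 ≤ Jc.toReal := ENNReal.toReal_nonneg
  refine ⟨Mc * (Jc.toReal + 1), by positivity, fun z => ?_⟩
  have hρz := hρ z
  -- pointwise bound
  have key : ∀ ξ : ℂ,
      (β z ξ + 1) ^ l * ‖K z ξ‖ ^ p * Real.exp (-(p * φ ξ)) ≤
      Mc * Real.exp (p * φ z) * ρ z ^ (-(2 * p)) * g (‖z - ξ‖ / ρ z) := by
    intro ξ
    have hρξ := hρ ξ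
    set d : ℝ := ‖z - ξ‖ with hddef
    have hd0 : 0 ≤ d := by rw [hddef]; exact norm_nonneg _
    set t : ℝ := d / ρ z with htdef
    set s : ℝ := d / ρ ξ with hsdef
    have ht0 : 0 ≤ t := by rw [htdef]; positivity
    have hs0 : 0 ≤ s := by rw [hsdef]; positivity
    have hdt : d = t * ρ z := by rw [htdef]; field_simp
    have hds : d = s * ρ ξ := by rw [hsdef]; field_simp
    have ht2 : (0:ℝ) < t + 2 := by linarith
    have hs2 : (0:ℝ) < s + 2 := by linarith
    have hP2t : 0 < (t + 2) ^ θ := Real.rpow_pos_of_pos ht2 _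
    have hP2s : 0 < (s + 2) ^ θ := Real.rpow_pos_of_pos hs2 _
    have hmem1 : ξ ∈ Metric.ball z ((t + 2) * ρ z) := by
      rw [Metric.mem_ball, Complex.dist_eq, norm_sub_rev ξ z, ← hddef, hdt]
      have hiden1 : (t + 2) * ρ z - t * ρ z = 2 * ρ z := by ring
      linarith
    have h12 := hρ₂ z ξ (t + 2) (by linarith) hmem1
    have hmem2 : z ∈ Metric.ball ξ ((s + 2) * ρ ξ) := by
      rw [Metric.mem_ball, Complex.dist_eq, ← hddef, hds]
      have hiden2 : (s + 2) * ρ ξ - s * ρ ξ = 2 * ρ ξ := by ring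
      linarith
    have h21 := hρ₂ ξ z (s + 2) (by linarith) hmem2
    have hCt : 0 < C₀ * (t + 2) ^ θ := by positivity
    have hCs : 0 < C₀ * (s + 2) ^ θ := by positivity
    have hρξ_low : (C₀ * (t + 2) ^ θ)⁻¹ * ρ z ≤ ρ ξ := by
      have h := h12.1
      rw [le_div_iff₀ hρz] at h
      linarith
    have hρz_low : (C₀ * (s + 2) ^ θ)⁻¹ * ρ ξ ≤ ρ z := by
      have h := h21.1
      rw [le_div_iff₀ hρξ] at h
      linarith
    have hρξ_up2 : ρ ξ ≤ C₀ * (s + 2) ^ θ * ρ z := by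
      calc ρ ξ = (C₀ * (s + 2) ^ θ) * ((C₀ * (s + 2) ^ θ)⁻¹ * ρ ξ) := by
            field_simp
        _ ≤ (C₀ * (s + 2) ^ θ) * ρ z := mul_le_mul_of_nonneg_left hρz_low hCs.le
    have hF3 : t ≤ C₀ * (s + 2) ^ τ := by
      have h2 : (s + 2) ^ τ = (s + 2) ^ θ * (s + 2) := by
        rw [hτdef, Real.rpow_add hs2, Real.rpow_one]
      have h1 : t * ρ z ≤ C₀ * (s + 2) ^ τ * ρ z := by
        calc t * ρ z = s * ρ ξ := by rw [← hdt, hds]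
          _ ≤ s * (C₀ * (s + 2) ^ θ * ρ z) := mul_le_mul_of_nonneg_left hρξ_up2 hs0
          _ ≤ C₀ * (s + 2) ^ τ * ρ z := by
              rw [h2]
              have hiden : C₀ * ((s + 2) ^ θ * (s + 2)) * ρ z -
                  s * (C₀ * (s + 2) ^ θ * ρ z) = 2 * (C₀ * ((s + 2) ^ θ * ρ z)) := by ring
              have hpos2 : 0 < C₀ * ((s + 2) ^ θ * ρ z) := by positivity
              linarith
      exact le_of_mul_le_mul_right h1 hρz
    -- F4 : exponent comparison
    have hts : a₀ * t ^ ε' - 3 * p ≤ p * s ^ ε := by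
      have hu_le : (t / C₀) ^ τ⁻¹ ≤ s + 2 := by
        have h1 : t / C₀ ≤ (s + 2) ^ τ := by
          rw [div_le_iff₀ hC₀]
          calc t ≤ C₀ * (s + 2) ^ τ := hF3
            _ = (s + 2) ^ τ * C₀ := by ring
        calc (t / C₀) ^ τ⁻¹ ≤ ((s + 2) ^ τ) ^ τ⁻¹ :=
              Real.rpow_le_rpow (by positivity) h1 (by positivity)
          _ = s + 2 := by
              rw [← Real.rpow_mul hs2.le, mul_inv_cancel₀ hτpos.ne', Real.rpow_one]
      have h1 : ((t / C₀) ^ τ⁻¹) ^ ε₁ ≤ (s + 2) ^ ε₁ :=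
        Real.rpow_le_rpow (Real.rpow_nonneg (by positivity) _) hu_le hε₁pos.le
      have h2 : (s + 2) ^ ε₁ ≤ s ^ ε₁ + 2 := by
        have h3 := rpow_add_le_add_rpow'' ε₁ hs0 (by norm_num : (0:ℝ) ≤ 2) hε₁pos.le hε₁le1
        have h4 : (2:ℝ) ^ ε₁ ≤ 2 := by
          calc (2:ℝ) ^ ε₁ ≤ (2:ℝ) ^ (1:ℝ) :=
                Real.rpow_le_rpow_of_exponent_le one_le_two hε₁le1
            _ = 2 := Real.rpow_one 2
        linarith
      have h5 : s ^ ε₁ ≤ s ^ ε + 1 := by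
        rcases le_total s 1 with hs1 | hs1
        · have h6 : s ^ ε₁ ≤ 1 := Real.rpow_le_one hs0 hs1 hε₁pos.le
          have h7 : 0 ≤ s ^ ε := Real.rpow_nonneg hs0 _
          linarith
        · have h6 : s ^ ε₁ ≤ s ^ ε := Real.rpow_le_rpow_of_exponent_le hs1 hε₁leε
          linarith
      have h8 : ((t / C₀) ^ τ⁻¹) ^ ε₁ = t ^ ε' / C₀ ^ ε' := by
        rw [← Real.rpow_mul (by positivity : (0:ℝ) ≤ t / C₀), ← hε'def,
          Real.div_rpow ht0 hC₀.le]
      rw [h8] at h1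
      have h9 : t ^ ε' / C₀ ^ ε' ≤ s ^ ε + 3 := by linarith
      have h10 : p * (t ^ ε' / C₀ ^ ε') ≤ p * (s ^ ε + 3) :=
        mul_le_mul_of_nonneg_left h9 hp.le
      have h11 : a₀ * t ^ ε' = p * (t ^ ε' / C₀ ^ ε') := by rw [ha₀def]; ring
      linarith
    -- β bound
    have hβb : (β z ξ + 1) ^ l ≤ (2 * C₁ + 1) ^ lp * (t + 2) ^ (2 * lp) := by
      have h22 : (1:ℝ) ≤ (t + 2) ^ (2:ℝ) := by
        calc (1:ℝ) = (1:ℝ) ^ (2:ℝ) := (Real.one_rpow _).symm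
          _ ≤ (t + 2) ^ (2:ℝ) := Real.rpow_le_rpow (by norm_num) (by linarith) (by norm_num)
      have hβt : β z ξ ≤ C₁ * (t + 2) ^ (2:ℝ) := by
        by_cases hmem : ξ ∈ Metric.ball z (1 * ρ z)
        · have h := (hβin z ξ hmem).2
          rw [← hddef, ← htdef] at h
          have h23 : t ≤ (t + 2) ^ (2:ℝ) := by
            have h24 : t + 2 ≤ (t + 2) ^ (2:ℝ) := by
              calc t + 2 = (t + 2) ^ (1:ℝ) := (Real.rpow_one _).symm
                _ ≤ (t + 2) ^ (2:ℝ) :=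
                    Real.rpow_le_rpow_of_exponent_le (by linarith) one_le_two
            linarith
          linarith [mul_le_mul_of_nonneg_left h23 hC₁pos.le]
        · have h := (hβout z ξ hmem).2
          rw [← hddef, ← htdef] at h
          have h24 : t ^ (2 - δ) ≤ (t + 2) ^ (2:ℝ) := by
            calc t ^ (2 - δ) ≤ (t + 2) ^ (2 - δ) :=
                  Real.rpow_le_rpow ht0 (by linarith) (by linarith [hδ.2])
              _ ≤ (t + 2) ^ (2:ℝ) :=
                  Real.rpow_le_rpow_of_exponent_le (by linarith) (by linarith [hδ.1])
          linarith [mul_le_mul_of_nonneg_left h24 hC₁pos.le]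
      have hβ1 : β z ξ + 1 ≤ (2 * C₁ + 1) * (t + 2) ^ (2:ℝ) := by
        have h26 : (C₁ + 1) * 1 ≤ (C₁ + 1) * (t + 2) ^ (2:ℝ) :=
          mul_le_mul_of_nonneg_left h22 (by linarith)
        have hiden3 : (2 * C₁ + 1) * (t + 2) ^ (2:ℝ) - (C₁ * (t + 2) ^ (2:ℝ) + 1) =
            (C₁ + 1) * (t + 2) ^ (2:ℝ) - 1 := by ring
        linarith
      have hβ0 : (0:ℝ) ≤ β z ξ + 1 := by linarith [hβnonneg z ξ]
      have hbig : ((2 * C₁ + 1) * (t + 2) ^ (2:ℝ)) ^ lp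
          = (2 * C₁ + 1) ^ lp * (t + 2) ^ (2 * lp) := by
        rw [Real.mul_rpow (by positivity) (by positivity),
          ← Real.rpow_mul (by linarith : (0:ℝ) ≤ t + 2)]
      rcases le_or_gt 0 l with hl | hl
      · have hlpl : lp = l := max_eq_left hl
        calc (β z ξ + 1) ^ l ≤ ((2 * C₁ + 1) * (t + 2) ^ (2:ℝ)) ^ l :=
              Real.rpow_le_rpow hβ0 hβ1 hl
          _ = (2 * C₁ + 1) ^ lp * (t + 2) ^ (2 * lp) := by rw [← hlpl]; exact hbig
      · have hlpl : lp = 0 := max_eq_right hl.le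
        have h25 : (β z ξ + 1) ^ l ≤ 1 :=
          Real.rpow_le_one_of_one_le_of_nonpos (by linarith [hβnonneg z ξ]) hl.le
        rw [hlpl]
        rw [mul_zero, Real.rpow_zero, Real.rpow_zero]
        simpa using h25
    -- K bound
    have hKp : ‖K z ξ‖ ^ p * Real.exp (-(p * φ ξ)) ≤
        C ^ p * C₀ ^ p * (t + 2) ^ (θ * p) * ρ z ^ (-(2 * p)) * Real.exp (p * φ z) *
          Real.exp (-(p * s ^ ε)) := by
      have hK1 := hKb z ξ
      rw [norm_sub_rev ξ z, ← hddef, ← hsdef] at hK1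
      have hE0 : (0:ℝ) ≤ Real.exp (φ z + φ ξ) := (Real.exp_pos _).le
      have hrr0 : (0:ℝ) ≤ ρ z * ρ ξ := by positivity
      have hdiv0 : (0:ℝ) ≤ Real.exp (φ z + φ ξ) / (ρ z * ρ ξ) := by positivity
      have he2 : (0:ℝ) ≤ Real.exp (-(s ^ ε)) := (Real.exp_pos _).le
      have hK2 : ‖K z ξ‖ ^ p ≤
          (C * (Real.exp (φ z + φ ξ) / (ρ z * ρ ξ)) * Real.exp (-(s ^ ε))) ^ p :=
        Real.rpow_le_rpow (norm_nonneg _) hK1 hp.le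
      have hexpand : (C * (Real.exp (φ z + φ ξ) / (ρ z * ρ ξ)) * Real.exp (-(s ^ ε))) ^ p =
          C ^ p * Real.exp (p * (φ z + φ ξ)) * (ρ z ^ (-p) * ρ ξ ^ (-p)) *
            Real.exp (-(p * s ^ ε)) := by
        rw [Real.mul_rpow (mul_nonneg hCpos.le hdiv0) he2,
          Real.mul_rpow hCpos.le hdiv0,
          Real.div_rpow hE0 hrr0,
          Real.mul_rpow hρz.le hρξ.le,
          ← Real.exp_mul, ← Real.exp_mul,
          show (φ z + φ ξ) * p = p * (φ z + φ ξ) from mul_comm _ _,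
          show -(s ^ ε) * p = -(p * s ^ ε) by ring,
          Real.rpow_neg hρz.le, Real.rpow_neg hρξ.le,
          div_eq_mul_inv, mul_inv]
        ring
      have hρξp : ρ ξ ^ (-p) ≤ C₀ ^ p * (t + 2) ^ (θ * p) * ρ z ^ (-p) := by
        have h1 : ((C₀ * (t + 2) ^ θ)⁻¹ * ρ z) ^ p ≤ ρ ξ ^ p :=
          Real.rpow_le_rpow (by positivity) hρξ_low hp.le
        have h2 : ρ ξ ^ (-p) ≤ (((C₀ * (t + 2) ^ θ)⁻¹ * ρ z) ^ p)⁻¹ := by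
          rw [Real.rpow_neg hρξ.le]
          exact inv_anti₀ (by positivity) h1
        calc ρ ξ ^ (-p) ≤ (((C₀ * (t + 2) ^ θ)⁻¹ * ρ z) ^ p)⁻¹ := h2
          _ = C₀ ^ p * (t + 2) ^ (θ * p) * ρ z ^ (-p) := by
              rw [Real.mul_rpow (inv_nonneg.2 hCt.le) hρz.le,
                Real.inv_rpow hCt.le,
                Real.mul_rpow hC₀.le hP2t.le,
                ← Real.rpow_mul (by linarith : (0:ℝ) ≤ t + 2),
                Real.rpow_neg hρz.le, mul_inv, inv_inv]
      have hρzz : ρ z ^ (-p) * ρ z ^ (-p) = ρ z ^ (-(2 * p)) := by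
        rw [← Real.rpow_add hρz]
        congr 1
        ring
      have hEφ : Real.exp (p * (φ z + φ ξ)) * Real.exp (-(p * φ ξ)) = Real.exp (p * φ z) := by
        rw [← Real.exp_add]
        congr 1
        ring
      calc ‖K z ξ‖ ^ p * Real.exp (-(p * φ ξ))
          ≤ (C ^ p * Real.exp (p * (φ z + φ ξ)) * (ρ z ^ (-p) * ρ ξ ^ (-p)) *
              Real.exp (-(p * s ^ ε))) * Real.exp (-(p * φ ξ)) := by
            apply mul_le_mul_of_nonneg_right _ (Real.exp_pos _).le
            rw [← hexpand]; exact hK2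
        _ = (C ^ p * Real.exp (p * (φ z + φ ξ)) * ρ z ^ (-p) * Real.exp (-(p * s ^ ε)) *
              Real.exp (-(p * φ ξ))) * ρ ξ ^ (-p) := by ring
        _ ≤ (C ^ p * Real.exp (p * (φ z + φ ξ)) * ρ z ^ (-p) * Real.exp (-(p * s ^ ε)) *
              Real.exp (-(p * φ ξ))) * (C₀ ^ p * (t + 2) ^ (θ * p) * ρ z ^ (-p)) := by
            apply mul_le_mul_of_nonneg_left hρξp (by positivity)
        _ = (Real.exp (p * (φ z + φ ξ)) * Real.exp (-(p * φ ξ))) *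
              (ρ z ^ (-p) * ρ z ^ (-p)) * (C ^ p * C₀ ^ p * (t + 2) ^ (θ * p)) *
              Real.exp (-(p * s ^ ε)) := by ring
        _ = C ^ p * C₀ ^ p * (t + 2) ^ (θ * p) * ρ z ^ (-(2 * p)) * Real.exp (p * φ z) *
              Real.exp (-(p * s ^ ε)) := by
            rw [hρzz, hEφ]; ring
    have hexp2 : Real.exp (-(p * s ^ ε)) ≤ Real.exp (3 * p) * Real.exp (-(a₀ * t ^ ε')) := by
      rw [← Real.exp_add]
      apply Real.exp_le_exp.2
      linarith
    have htt : (t + 2) ^ (2 * lp) * (t + 2) ^ (θ * p) = (t + 2) ^ m := by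
      rw [← Real.rpow_add ht2, ← hmdef]
    have hKnn : (0:ℝ) ≤ ‖K z ξ‖ ^ p * Real.exp (-(p * φ ξ)) :=
      mul_nonneg (Real.rpow_nonneg (norm_nonneg _) _) (Real.exp_pos _).le
    calc (β z ξ + 1) ^ l * ‖K z ξ‖ ^ p * Real.exp (-(p * φ ξ))
        = (β z ξ + 1) ^ l * (‖K z ξ‖ ^ p * Real.exp (-(p * φ ξ))) := by ring
      _ ≤ ((2 * C₁ + 1) ^ lp * (t + 2) ^ (2 * lp)) *
          (C ^ p * C₀ ^ p * (t + 2) ^ (θ * p) * ρ z ^ (-(2 * p)) * Real.exp (p * φ z) *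
            Real.exp (-(p * s ^ ε))) :=
          mul_le_mul hβb hKp hKnn (by positivity)
      _ = ((2 * C₁ + 1) ^ lp * C ^ p * C₀ ^ p * ρ z ^ (-(2 * p)) * Real.exp (p * φ z)) *
            (((t + 2) ^ (2 * lp) * (t + 2) ^ (θ * p)) * Real.exp (-(p * s ^ ε))) := by ring
      _ = ((2 * C₁ + 1) ^ lp * C ^ p * C₀ ^ p * ρ z ^ (-(2 * p)) * Real.exp (p * φ z)) *
            ((t + 2) ^ m * Real.exp (-(p * s ^ ε))) := by rw [htt]
      _ ≤ ((2 * C₁ + 1) ^ lp * C ^ p * C₀ ^ p * ρ z ^ (-(2 * p)) * Real.exp (p * φ z)) *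
            ((t + 2) ^ m * (Real.exp (3 * p) * Real.exp (-(a₀ * t ^ ε')))) := by
          apply mul_le_mul_of_nonneg_left _ (by positivity)
          exact mul_le_mul_of_nonneg_left hexp2 (by positivity)
      _ = ((2 * C₁ + 1) ^ lp * C ^ p * C₀ ^ p * Real.exp (3 * p) * ρ z ^ (-(2 * p)) *
            Real.exp (p * φ z)) * ((t + 2) ^ m * Real.exp (-(a₀ * t ^ ε'))) := by ring
      _ ≤ ((2 * C₁ + 1) ^ lp * C ^ p * C₀ ^ p * Real.exp (3 * p) * ρ z ^ (-(2 * p)) *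
            Real.exp (p * φ z)) * (M₃ * (1 + t) ^ (-(3:ℝ))) := by
          apply mul_le_mul_of_nonneg_left (hpoly t ht0) (by positivity)
      _ = Mc * Real.exp (p * φ z) * ρ z ^ (-(2 * p)) * g t := by
          rw [hMcdef, hgdef]; ring
  -- integrate
  have hcz0 : (0:ℝ) ≤ Mc * Real.exp (p * φ z) * ρ z ^ (-(2 * p)) := by positivity
  have hρ2 : (ρ z : ℝ) ^ (2:ℕ) * ρ z ^ (-(2 * p)) = ρ z ^ (2 * (1 - p)) := by
    rw [← Real.rpow_natCast (ρ z) 2, ← Real.rpow_add hρz]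
    congr 1
    push_cast
    ring
  calc (∫⁻ ξ : ℂ, ENNReal.ofReal ((β z ξ + 1) ^ l * ‖K z ξ‖ ^ p *
          Real.exp (-(p * φ ξ))))
      ≤ ∫⁻ ξ : ℂ, ENNReal.ofReal ((Mc * Real.exp (p * φ z) * ρ z ^ (-(2 * p))) *
          g (‖z - ξ‖ / ρ z)) :=
        lintegral_mono fun ξ => ENNReal.ofReal_le_ofReal (by
          have h := key ξ
          calc (β z ξ + 1) ^ l * ‖K z ξ‖ ^ p * Real.exp (-(p * φ ξ))
              ≤ Mc * Real.exp (p * φ z) * ρ z ^ (-(2 * p)) * g (‖z - ξ‖ / ρ z) := h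
            _ = (Mc * Real.exp (p * φ z) * ρ z ^ (-(2 * p))) *
                g (‖z - ξ‖ / ρ z) := by ring)
    _ = ENNReal.ofReal (Mc * Real.exp (p * φ z) * ρ z ^ (-(2 * p))) *
          ∫⁻ ξ : ℂ, ENNReal.ofReal (g (‖z - ξ‖ / ρ z)) := by
        simp_rw [ENNReal.ofReal_mul hcz0]
        exact lintegral_const_mul' _ _ ENNReal.ofReal_ne_top
    _ = ENNReal.ofReal (Mc * Real.exp (p * φ z) * ρ z ^ (-(2 * p))) *
          (ENNReal.ofReal (ρ z ^ (2:ℕ)) * Jc) := by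
        rw [lintegral_scale_abs g hgm (ρ z) hρz z, ← hJdef]
    _ ≤ ENNReal.ofReal (Mc * (Jc.toReal + 1) * ρ z ^ (2 * (1 - p)) * Real.exp (p * φ z)) := by
        rw [← ENNReal.ofReal_toReal hJfin,
          ← ENNReal.ofReal_mul (by positivity : (0:ℝ) ≤ ρ z ^ (2:ℕ)),
          ← ENNReal.ofReal_mul hcz0]
        apply ENNReal.ofReal_le_ofReal
        rw [ENNReal.toReal_ofReal hJ0]
        have heq : (Mc * Real.exp (p * φ z) * ρ z ^ (-(2 * p))) *
            (ρ z ^ (2:ℕ) * Jc.toReal) =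
            (Mc * Real.exp (p * φ z) * (ρ z ^ (2:ℕ) * ρ z ^ (-(2 * p)))) * Jc.toReal := by
          ring
        rw [heq, hρ2]
        have hiden4 : Mc * (Jc.toReal + 1) * ρ z ^ (2 * (1 - p)) * Real.exp (p * φ z) -
            Mc * Real.exp (p * φ z) * ρ z ^ (2 * (1 - p)) * Jc.toReal =
            Mc * Real.exp (p * φ z) * ρ z ^ (2 * (1 - p)) := by ring
        linarith [mul_nonneg (mul_nonneg hMcpos.le (Real.exp_pos (p * φ z)).le)
          (Real.rpow_nonneg hρz.le (2 * (1 - p)))]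
end

section
/- For every p > 0 and every l ∈ ℝ, the quantity sup_{z∈ℂ} ρ(z)^{2(p−1)} e^{−pφ(z)} ∫_{ℂ \ B(z,R)} (β(z,ξ) + 1)^l |K(z,ξ)|^p e^{−pφ(ξ)} dA(ξ) tends to 0 as R → ∞. -/
open MeasureTheory Filter Metric Set
open scoped ENNReal

/-- From `a⁻¹ ≤ b / c` (all positive) deduce `c ≤ a * b`. -/
lemma aux_le_mul {a b c : ℝ} (ha : 0 < a) (hc : 0 < c) (h : a⁻¹ ≤ b / c) :
    c ≤ a * b := by
  have h1 : c * a⁻¹ ≤ c * (b / c) := mul_le_mul_of_nonneg_left h hc.le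
  rw [mul_div_cancel₀ _ hc.ne'] at h1
  have h2 : c * a⁻¹ * a ≤ b * a := mul_le_mul_of_nonneg_right h1 ha.le
  rw [mul_assoc, inv_mul_cancel₀ ha.ne', mul_one] at h2
  linarith [mul_comm a b]

/-- From `x ≤ P * y` (all positive) deduce `y⁻¹ ≤ P * x⁻¹`. -/
lemma aux_inv_le {P x y : ℝ} (hx : 0 < x) (hy : 0 < y) (hP : 0 < P)
    (h : x ≤ P * y) : y⁻¹ ≤ P * x⁻¹ := by
  rw [inv_eq_one_div, inv_eq_one_div, mul_one_div, div_le_div_iff₀ hy hx, one_mul]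
  linarith [mul_comm P y]

/-- Tail bound: `(s+2)^q ≤ exp (c * s^ε)` for `s` large. -/
lemma aux_tail (q c ε : ℝ) (hc : 0 < c) (hε : 0 < ε) :
    ∃ S : ℝ, 2 ≤ S ∧ ∀ s : ℝ, S ≤ s → (s + 2) ^ q ≤ Real.exp (c * s ^ ε) := by
  set a := ε / 2 with ha_def
  have ha : 0 < a := by positivity
  set B := max q 0 * 2 ^ a / a with hB_def
  refine ⟨max 2 (max (B / c) 1 ^ (1 / a)), le_max_left _ _, fun s hs => ?_⟩
  have hs2 : 2 ≤ s := le_trans (le_max_left _ _) hs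
  have hs0 : 0 < s := by linarith
  have h0 : (0 : ℝ) ≤ max (B / c) 1 := le_trans zero_le_one (le_max_right _ _)
  have hsa : max (B / c) 1 ≤ s ^ a := by
    have h1 : max (B / c) 1 ^ (1 / a) ≤ s := le_trans (le_max_right _ _) hs
    calc max (B / c) 1 = (max (B / c) 1 ^ (1 / a)) ^ a := by
          rw [← Real.rpow_mul h0, one_div_mul_cancel ha.ne', Real.rpow_one]
      _ ≤ s ^ a := Real.rpow_le_rpow (Real.rpow_nonneg h0 _) h1 ha.le
  have hBc : B ≤ c * s ^ a := by
    have h2 : B / c ≤ s ^ a := le_trans (le_max_left _ _) hsa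
    calc B = c * (B / c) := by field_simp
      _ ≤ c * s ^ a := mul_le_mul_of_nonneg_left h2 hc.le
  have hlog : Real.log (s + 2) ≤ (s + 2) ^ a / a := by
    have h2 : Real.log ((s + 2) ^ a) = a * Real.log (s + 2) :=
      Real.log_rpow (by linarith) a
    have h3 : Real.log ((s + 2) ^ a) ≤ (s + 2) ^ a :=
      le_trans (Real.log_le_sub_one_of_pos (by positivity)) (by linarith)
    calc Real.log (s + 2) = Real.log ((s + 2) ^ a) / a := by rw [h2]; field_simp
      _ ≤ (s + 2) ^ a / a := by gcongr
  have hlog0 : 0 ≤ Real.log (s + 2) := Real.log_nonneg (by linarith)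
  have h4 : q * Real.log (s + 2) ≤ max q 0 * ((s + 2) ^ a / a) :=
    le_trans (mul_le_mul_of_nonneg_right (le_max_left q 0) hlog0)
      (mul_le_mul_of_nonneg_left hlog (le_max_right q 0))
  have h5 : (s + 2) ^ a ≤ 2 ^ a * s ^ a := by
    calc (s + 2) ^ a ≤ (2 * s) ^ a :=
          Real.rpow_le_rpow (by linarith) (by linarith) ha.le
      _ = 2 ^ a * s ^ a := Real.mul_rpow (by norm_num) hs0.le
  have h6 : max q 0 * ((s + 2) ^ a / a) ≤ B * s ^ a := by
    have h6' : max q 0 / a * (s + 2) ^ a ≤ max q 0 / a * (2 ^ a * s ^ a) :=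
      mul_le_mul_of_nonneg_left h5 (by positivity)
    calc max q 0 * ((s + 2) ^ a / a) = max q 0 / a * (s + 2) ^ a := by ring
      _ ≤ max q 0 / a * (2 ^ a * s ^ a) := h6'
      _ = B * s ^ a := by rw [hB_def]; ring
  have h7 : B * s ^ a ≤ c * s ^ a * s ^ a :=
    mul_le_mul_of_nonneg_right hBc (Real.rpow_nonneg hs0.le a)
  have h8 : c * s ^ a * s ^ a = c * s ^ ε := by
    rw [mul_assoc, ← Real.rpow_add hs0]
    congr 2
    rw [ha_def]; ring
  have hsum : q * Real.log (s + 2) ≤ c * s ^ ε := by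
    calc q * Real.log (s + 2) ≤ max q 0 * ((s + 2) ^ a / a) := h4
      _ ≤ B * s ^ a := h6
      _ ≤ c * s ^ a * s ^ a := h7
      _ = c * s ^ ε := h8
  rw [Real.rpow_def_of_pos (by linarith : (0:ℝ) < s + 2) q]
  exact Real.exp_le_exp.mpr (by rw [mul_comm]; exact hsum)

/-- Global polynomial absorption: `(s+2)^q ≤ A * exp (c * s^ε)` for all `s ≥ 0`. -/
lemma aux_absorb (q c ε : ℝ) (hc : 0 < c) (hε : 0 < ε) :
    ∃ A : ℝ, 0 < A ∧ ∀ s : ℝ, 0 ≤ s → (s + 2) ^ q ≤ A * Real.exp (c * s ^ ε) := by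
  obtain ⟨S, hS2, hS⟩ := aux_tail q c ε hc hε
  refine ⟨(S + 2) ^ |q| + 1, by positivity, fun s hs0 => ?_⟩
  have hexp : 1 ≤ Real.exp (c * s ^ ε) := Real.one_le_exp (by positivity)
  have hX0 : (0:ℝ) ≤ (S + 2) ^ |q| := Real.rpow_nonneg (by linarith) _
  by_cases h : S ≤ s
  · have h1 := hS s h
    nlinarith [Real.exp_pos (c * s ^ ε)]
  · push_neg at h
    have h1 : (s + 2) ^ q ≤ (s + 2) ^ |q| :=
      Real.rpow_le_rpow_of_exponent_le (by linarith) (le_abs_self q)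
    have h2 : (s + 2) ^ |q| ≤ (S + 2) ^ |q| :=
      Real.rpow_le_rpow (by linarith) (by linarith) (abs_nonneg q)
    nlinarith

set_option maxHeartbeats 2000000 in
/-- The quantity
`sup_z ρ(z)^{2(p-1)} e^{-pφ(z)} ∫_{ℂ∖B(z,R)} (β(z,ξ)+1)^l |K(z,ξ)|^p e^{-pφ(ξ)} dA(ξ)`
tends to `0` as `R → ∞`; equivalently, for every `e > 0` there is `R₀` such that for all
`R ≥ R₀` and all `z` the tail integral is at most `e · ρ(z)^{2(1-p)} e^{pφ(z)}`. -/
theorem stmt5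
    (ρ : ℂ → ℝ) (hρ : ∀ z, 0 < ρ z)
    (C₀ θ : ℝ) (hC₀ : 0 < C₀) (hθ : 0 < θ)
    (hρ₁ : ∀ (z w : ℂ) (r : ℝ), 0 < r → r ≤ 1 → w ∈ Metric.ball z (r * ρ z) →
      C₀⁻¹ ≤ ρ w / ρ z ∧ ρ w / ρ z ≤ C₀)
    (hρ₂ : ∀ (z w : ℂ) (r : ℝ), 1 < r → w ∈ Metric.ball z (r * ρ z) →
      (C₀ * r ^ θ)⁻¹ ≤ ρ w / ρ z ∧ ρ w / ρ z ≤ C₀ * r ^ θ)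
    (β : ℂ → ℂ → ℝ)
    (hβsymm : ∀ z w, β z w = β w z) (hβnonneg : ∀ z w, 0 ≤ β z w)
    (hβeq : ∀ z w, β z w = 0 ↔ z = w)
    (hβtri : ∀ z w u, β z u ≤ β z w + β w u)
    (δ : ℝ) (hδ : 0 < δ ∧ δ < 1)
    (hβ : ∀ r : ℝ, 0 < r → ∃ Cr : ℝ, 0 < Cr ∧
      (∀ z w : ℂ, w ∈ Metric.ball z (r * ρ z) →
        Cr⁻¹ * (‖z - w‖ / ρ z) ≤ β z w ∧
        β z w ≤ Cr * (‖z - w‖ / ρ z)) ∧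
      (∀ z w : ℂ, w ∉ Metric.ball z (r * ρ z) →
        Cr⁻¹ * (‖z - w‖ / ρ z) ^ δ ≤ β z w ∧
        β z w ≤ Cr * (‖z - w‖ / ρ z) ^ (2 - δ)))
    (φ : ℂ → ℝ) (hφm : Measurable φ)
    (K : ℂ → ℂ → ℂ)
    (hK : ∃ C : ℝ, 0 < C ∧ ∃ ε : ℝ, 0 < ε ∧ ∀ w z : ℂ,
      ‖K w z‖ ≤ C * (Real.exp (φ w + φ z) / (ρ w * ρ z)) *
        Real.exp (-((‖z - w‖ / ρ z) ^ ε)))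
    (p l : ℝ) (hp : 0 < p) :
    ∀ e : ℝ, 0 < e → ∃ R₀ : ℝ, ∀ R : ℝ, R₀ ≤ R → ∀ z : ℂ,
      (∫⁻ ξ in {ξ : ℂ | R ≤ β z ξ}, ENNReal.ofReal ((β z ξ + 1) ^ l *
          ‖K z ξ‖ ^ p * Real.exp (-(p * φ ξ)))) ≤
        ENNReal.ofReal (e * ρ z ^ (2 * (1 - p)) * Real.exp (p * φ z)) := by
  intro e he
  obtain ⟨C, hC, ε, hε, hKb⟩ := hK
  obtain ⟨C₁, hC₁, hβnear, hβfar⟩ := hβ 1 one_pos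
  obtain ⟨hδ0, hδ1⟩ := hδ
  -- the Japanese bracket integral on ℂ
  have hint : Integrable (fun w : ℂ => (1 + ‖w‖) ^ (-(3:ℝ))) :=
    integrable_one_add_norm (by rw [Complex.finrank_real_complex]; norm_num)
  set M₀ : ℝ := ∫ w : ℂ, (1 + ‖w‖) ^ (-(3:ℝ)) with hM₀_def
  have hM₀ : 0 ≤ M₀ := integral_nonneg fun w => by positivity
  set M₁ : ℝ := M₀ + 1 with hM₁_def
  have hM₁ : 0 < M₁ := by rw [hM₁_def]; linarith only [hM₀]
  set J : ℝ≥0∞ := ∫⁻ w : ℂ, ENNReal.ofReal ((1 + ‖w‖) ^ (-(3:ℝ))) with hJ_def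
  have hJM : J ≤ ENNReal.ofReal M₁ := by
    rw [hJ_def, ← ofReal_integral_eq_lintegral_ofReal hint
      (ae_of_all _ fun w => by positivity)]
    exact ENNReal.ofReal_le_ofReal (by rw [hM₁_def]; linarith only [])
  -- constants
  set m : ℝ := max l 0 with hm_def
  have hm0 : 0 ≤ m := le_max_right l 0
  set Q : ℝ := 2 * m + ((θ + 1) * (θ * p) + (θ + 1) * 3) with hQ_def
  obtain ⟨A, hA, hAs⟩ := aux_absorb Q (p / 2) ε (by positivity) hε
  set D : ℝ := (1 + C₁) ^ m * (C * C₀) ^ p * (C₀ + 2) ^ (θ * p) * (C₀ + 2) ^ (3:ℝ) * A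
    with hD_def
  have hD : 0 < D := by rw [hD_def]; positivity
  set L : ℝ := 2 / p * Real.log (D * M₁ / e) with hL_def
  set KK : ℝ := (max L 0) ^ (1 / ε) with hKK_def
  have hKK0 : 0 ≤ KK := Real.rpow_nonneg (le_max_right L 0) _
  refine ⟨C₁ * (KK + 1) ^ 2, fun R hR z => ?_⟩
  have hρz : 0 < ρ z := hρ z
  -- the smallness number
  set sR : ℝ := Real.sqrt (R / C₁) - 1 with hsR_def
  have hKKsR : KK ≤ sR := by
    have h1 : (KK + 1) ^ 2 ≤ R / C₁ := by
      rw [le_div_iff₀ hC₁]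
      calc (KK + 1) ^ 2 * C₁ = C₁ * (KK + 1) ^ 2 := by ring
        _ ≤ R := hR
    have h2 : KK + 1 ≤ Real.sqrt (R / C₁) := by
      rw [← Real.sqrt_sq (by positivity : (0:ℝ) ≤ KK + 1)]
      exact Real.sqrt_le_sqrt h1
    rw [hsR_def]; linarith only [h2]
  have hsR0 : 0 ≤ sR := le_trans hKK0 hKKsR
  have hsmall : D * Real.exp (-(p / 2 * sR ^ ε)) ≤ e / M₁ := by
    have hKKε : KK ^ ε = max L 0 := by
      rw [hKK_def, ← Real.rpow_mul (le_max_right L 0), one_div,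
        inv_mul_cancel₀ hε.ne', Real.rpow_one]
    have hL1 : L ≤ sR ^ ε := by
      calc L ≤ max L 0 := le_max_left _ _
        _ = KK ^ ε := hKKε.symm
        _ ≤ sR ^ ε := Real.rpow_le_rpow hKK0 hKKsR hε.le
    have hXpos : 0 < D * M₁ / e := by positivity
    calc D * Real.exp (-(p / 2 * sR ^ ε))
        ≤ D * Real.exp (-(p / 2 * L)) := by
          apply mul_le_mul_of_nonneg_left _ hD.le
          apply Real.exp_le_exp.mpr
          have := mul_le_mul_of_nonneg_left hL1 (by positivity : (0:ℝ) ≤ p / 2)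
          linarith only [this]
      _ = D * Real.exp (-Real.log (D * M₁ / e)) := by
          congr 2
          rw [hL_def]
          field_simp
      _ = D * (e / (D * M₁)) := by rw [Real.exp_neg, Real.exp_log hXpos, inv_div]
      _ = e / M₁ := by rw [mul_div_assoc', mul_div_mul_left _ _ hD.ne']
  -- pointwise estimate on the region
  have hpoint : ∀ ξ : ℂ, R ≤ β z ξ →
      (β z ξ + 1) ^ l * ‖K z ξ‖ ^ p * Real.exp (-(p * φ ξ)) ≤
        e / M₁ * (Real.exp (p * φ z) * (ρ z ^ (-(2 * p)) *
          (1 + ‖ξ - z‖ / ρ z) ^ (-(3:ℝ)))) := by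
    intro ξ hRβ
    have hρξ : 0 < ρ ξ := hρ ξ
    have hK1 := hKb z ξ
    set d : ℝ := ‖ξ - z‖ with hd_def
    have hd0 : 0 ≤ d := norm_nonneg _
    set s : ℝ := d / ρ ξ with hs_def
    set u : ℝ := d / ρ z with hu_def
    have hs0 : 0 ≤ s := by positivity
    have hu0 : 0 ≤ u := by positivity
    have habs_swap : ‖z - ξ‖ = d := by
      rw [hd_def]; exact norm_sub_rev z ξ
    have hdist_zξ : dist z ξ = d := by rw [Complex.dist_eq, habs_swap]
    have hdist_ξz : dist ξ z = d := by rw [Complex.dist_eq, ← hd_def]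
    set W : ℝ := s + 2 with hW_def
    have hW2 : 2 ≤ W := by rw [hW_def]; linarith only [hs0]
    have hWpos : 0 < W := by linarith only [hW2]
    -- upper bound for β z ξ in terms of s
    have hβub : β z ξ ≤ C₁ * (s + 1) ^ (2:ℝ) := by
      rw [hβsymm]
      have hsq : ((s + 1) : ℝ) ^ (2:ℝ) = (s + 1) ^ (2:ℕ) := by
        rw [show ((2:ℝ) = ((2:ℕ):ℝ)) by norm_num, Real.rpow_natCast]
      by_cases hin : z ∈ Metric.ball ξ (1 * ρ ξ)
      · have h := (hβnear ξ z hin).2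
        refine le_trans h ?_
        rw [hsq]
        have hsq2 : s ≤ (s + 1) ^ (2:ℕ) := by
          have h0 : 0 ≤ s * s := mul_nonneg hs0 hs0
          have : (s + 1) ^ (2:ℕ) = s * s + 2 * s + 1 := by ring
          linarith only [h0, this, hs0]
        exact mul_le_mul_of_nonneg_left hsq2 hC₁.le
      · have h := (hβfar ξ z hin).2
        have hs1 : 1 ≤ s := by
          rw [Metric.mem_ball, not_lt, hdist_zξ, one_mul] at hin
          rw [hs_def]
          exact (one_le_div hρξ).mpr hin
        refine le_trans h ?_
        have h1 : d / ρ ξ = s := rfl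
        have h2 : s ^ (2 - δ) ≤ s ^ (2:ℝ) :=
          Real.rpow_le_rpow_of_exponent_le hs1 (by linarith only [hδ0])
        have h3 : s ^ (2:ℝ) ≤ (s + 1) ^ (2:ℝ) :=
          Real.rpow_le_rpow hs0 (by linarith only []) (by norm_num)
        exact mul_le_mul_of_nonneg_left (le_trans h2 h3) hC₁.le
    -- lower bound for s in terms of R
    have hsRs : sR ≤ s := by
      have h1 : R / C₁ ≤ (s + 1) ^ (2:ℝ) := by
        rw [div_le_iff₀ hC₁]
        calc R ≤ C₁ * (s + 1) ^ (2:ℝ) := le_trans hRβ hβub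
          _ = (s + 1) ^ (2:ℝ) * C₁ := by ring
      have h2 : Real.sqrt (R / C₁) ≤ s + 1 := by
        rw [show ((2:ℝ) = ((2:ℕ):ℝ)) by norm_num, Real.rpow_natCast] at h1
        calc Real.sqrt (R / C₁) ≤ Real.sqrt ((s + 1) ^ 2) := Real.sqrt_le_sqrt h1
          _ = s + 1 := Real.sqrt_sq (by linarith only [hs0])
      rw [hsR_def]; linarith only [h2]
    -- ρ comparisons
    have hξz : ρ ξ ≤ C₀ * W ^ θ * ρ z := by
      have hmem : z ∈ Metric.ball ξ (W * ρ ξ) := by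
        rw [Metric.mem_ball, hdist_zξ]
        have : d = s * ρ ξ := by rw [hs_def]; field_simp
        rw [this]
        have : s < W := by rw [hW_def]; linarith only []
        exact mul_lt_mul_of_pos_right this hρξ
      have h1 := (hρ₂ ξ z W (by linarith only [hW2]) hmem).1
      have h2 : ρ ξ ≤ C₀ * W ^ θ * ρ z := by
        have := aux_le_mul (by positivity : 0 < C₀ * W ^ θ) hρξ h1
        linarith only [this]
      exact h2
    have hzξ : ρ z ≤ C₀ * (u + 2) ^ θ * ρ ξ := by
      have hmem : ξ ∈ Metric.ball z ((u + 2) * ρ z) := by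
        rw [Metric.mem_ball, hdist_ξz]
        have : d = u * ρ z := by rw [hu_def]; field_simp
        rw [this]
        have : u < u + 2 := by linarith only []
        exact mul_lt_mul_of_pos_right this hρz
      have h1 := (hρ₂ z ξ (u + 2) (by linarith only [hu0]) hmem).1
      exact aux_le_mul (by positivity : 0 < C₀ * (u + 2) ^ θ) hρz h1
    have hinv : (ρ z * ρ ξ)⁻¹ ≤ C₀ * (u + 2) ^ θ * (ρ z * ρ z)⁻¹ := by
      have h1 : ρ z * ρ z ≤ C₀ * (u + 2) ^ θ * (ρ z * ρ ξ) := by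
        have := mul_le_mul_of_nonneg_left hzξ hρz.le
        calc ρ z * ρ z ≤ ρ z * (C₀ * (u + 2) ^ θ * ρ ξ) := this
          _ = C₀ * (u + 2) ^ θ * (ρ z * ρ ξ) := by ring
      exact aux_inv_le (by positivity) (by positivity) (by positivity) h1
    -- u + 2 in terms of W
    have hu2 : u + 2 ≤ (C₀ + 2) * W ^ (θ + 1) := by
      have hu1 : u ≤ s * (C₀ * W ^ θ) := by
        have hd_eq : d = s * ρ ξ := by rw [hs_def]; field_simp
        rw [hu_def, hd_eq, mul_div_assoc]
        apply mul_le_mul_of_nonneg_left _ hs0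
        rw [div_le_iff₀ hρz]
        calc ρ ξ ≤ C₀ * W ^ θ * ρ z := hξz
          _ = C₀ * W ^ θ * ρ z := rfl
      have hA1 : u ≤ C₀ * W ^ (θ + 1) := by
        calc u ≤ s * (C₀ * W ^ θ) := hu1
          _ ≤ W * (C₀ * W ^ θ) :=
            mul_le_mul_of_nonneg_right (by rw [hW_def]; linarith only []) (by positivity)
          _ = C₀ * W ^ (θ + 1) := by rw [Real.rpow_add hWpos, Real.rpow_one]; ring
      have hA2 : (1:ℝ) ≤ W ^ (θ + 1) := by
        calc (1:ℝ) = W ^ (0:ℝ) := (Real.rpow_zero W).symm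
          _ ≤ W ^ (θ + 1) :=
            Real.rpow_le_rpow_of_exponent_le (by linarith only [hW2]) (by linarith only [hθ.le])
      linarith only [hA1, hA2, hC₀.le]
    -- the (β+1)^l factor
    have hβ1 : β z ξ + 1 ≤ (1 + C₁) * W ^ (2:ℝ) := by
      have h1 : (s + 1) ^ (2:ℝ) ≤ W ^ (2:ℝ) :=
        Real.rpow_le_rpow (by linarith only [hs0]) (by rw [hW_def]; linarith only []) (by norm_num)
      have h2 : (1:ℝ) ≤ W ^ (2:ℝ) := by
        calc (1:ℝ) = W ^ (0:ℝ) := (Real.rpow_zero W).symm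
          _ ≤ W ^ (2:ℝ) :=
            Real.rpow_le_rpow_of_exponent_le (by linarith only [hW2]) (by norm_num)
      have h4 := le_trans hβub (mul_le_mul_of_nonneg_left h1 hC₁.le)
      linarith only [h4, h2]
    have hBl : (β z ξ + 1) ^ l ≤ (1 + C₁) ^ m * W ^ (2 * m) := by
      have hβpos : (0:ℝ) ≤ β z ξ := hβnonneg z ξ
      calc (β z ξ + 1) ^ l ≤ (β z ξ + 1) ^ m :=
            Real.rpow_le_rpow_of_exponent_le (by linarith only [hβpos]) (le_max_left l 0)
        _ ≤ ((1 + C₁) * W ^ (2:ℝ)) ^ m :=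
            Real.rpow_le_rpow (by linarith only [hβpos]) hβ1 hm0
        _ = (1 + C₁) ^ m * W ^ (2 * m) := by
            rw [Real.mul_rpow (by linarith only [hC₁.le]) (by positivity),
              ← Real.rpow_mul hWpos.le]
    -- the kernel factor
    have hK2 : ‖K z ξ‖ ≤
        C * C₀ * (u + 2) ^ θ *
          (Real.exp (φ z + φ ξ) * ((ρ z * ρ z)⁻¹ * Real.exp (-(s ^ ε)))) := by
      calc ‖K z ξ‖
          ≤ C * (Real.exp (φ z + φ ξ) / (ρ z * ρ ξ)) * Real.exp (-(s ^ ε)) := hK1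
        _ = C * Real.exp (φ z + φ ξ) * (ρ z * ρ ξ)⁻¹ * Real.exp (-(s ^ ε)) := by
            rw [div_eq_mul_inv]; ring
        _ ≤ C * Real.exp (φ z + φ ξ) * (C₀ * (u + 2) ^ θ * (ρ z * ρ z)⁻¹) *
              Real.exp (-(s ^ ε)) := by
            apply mul_le_mul_of_nonneg_right _ (Real.exp_pos _).le
            exact mul_le_mul_of_nonneg_left hinv (by positivity)
        _ = C * C₀ * (u + 2) ^ θ *
              (Real.exp (φ z + φ ξ) * ((ρ z * ρ z)⁻¹ * Real.exp (-(s ^ ε)))) := by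
            ring
    have hKp : ‖K z ξ‖ ^ p ≤
        (C * C₀ * (u + 2) ^ θ) ^ p *
          (Real.exp (φ z + φ ξ) ^ p * (((ρ z * ρ z)⁻¹) ^ p *
            Real.exp (-(s ^ ε)) ^ p)) := by
      calc ‖K z ξ‖ ^ p
          ≤ (C * C₀ * (u + 2) ^ θ *
              (Real.exp (φ z + φ ξ) * ((ρ z * ρ z)⁻¹ * Real.exp (-(s ^ ε))))) ^ p :=
            Real.rpow_le_rpow (norm_nonneg _) hK2 hp.le
        _ = _ := by
            rw [Real.mul_rpow (by positivity) (by positivity),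
              Real.mul_rpow (Real.exp_pos _).le (by positivity),
              Real.mul_rpow (by positivity) (Real.exp_pos _).le]
    -- rewrite the rpow pieces
    have hZp : ((ρ z * ρ z)⁻¹) ^ p = ρ z ^ (-(2 * p)) := by
      have h1 : (ρ z * ρ z)⁻¹ = ρ z ^ (-(2:ℝ)) := by
        rw [Real.rpow_neg hρz.le]
        congr 1
        rw [show ((2:ℝ) = ((2:ℕ):ℝ)) by norm_num, Real.rpow_natCast]
        ring
      rw [h1, ← Real.rpow_mul hρz.le]
      congr 1
      ring
    have hXp : (C * C₀ * (u + 2) ^ θ) ^ p = (C * C₀) ^ p * (u + 2) ^ (θ * p) := by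
      rw [Real.mul_rpow (by positivity) (by positivity), ← Real.rpow_mul (by positivity)]
    have hEp : Real.exp (φ z + φ ξ) ^ p * Real.exp (-(p * φ ξ)) =
        Real.exp (p * φ z) := by
      rw [← Real.exp_mul, ← Real.exp_add]
      congr 1
      ring
    have hGp : Real.exp (-(s ^ ε)) ^ p = Real.exp (-(p * s ^ ε)) := by
      rw [← Real.exp_mul]
      congr 1
      ring
    -- (u+2)^(θp) in terms of W
    have hup : (u + 2) ^ (θ * p) ≤ (C₀ + 2) ^ (θ * p) * W ^ ((θ + 1) * (θ * p)) := by
      calc (u + 2) ^ (θ * p) ≤ ((C₀ + 2) * W ^ (θ + 1)) ^ (θ * p) :=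
            Real.rpow_le_rpow (by linarith only [hu0]) hu2 (by positivity)
        _ = (C₀ + 2) ^ (θ * p) * W ^ ((θ + 1) * (θ * p)) := by
            rw [Real.mul_rpow (by linarith only [hC₀.le]) (by positivity),
              ← Real.rpow_mul hWpos.le]
    -- introduce the decaying factor (1+u)^{-3}
    have h13 : (1:ℝ) ≤ (C₀ + 2) ^ (3:ℝ) * W ^ ((θ + 1) * 3) *
        (1 + u) ^ (-(3:ℝ)) := by
      have h1u : 1 + u ≤ (C₀ + 2) * W ^ (θ + 1) := by linarith only [hu2]
      have h3 : (1 + u) ^ (3:ℝ) ≤ (C₀ + 2) ^ (3:ℝ) * W ^ ((θ + 1) * 3) := by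
        calc (1 + u) ^ (3:ℝ) ≤ ((C₀ + 2) * W ^ (θ + 1)) ^ (3:ℝ) :=
              Real.rpow_le_rpow (by linarith only [hu0]) h1u (by norm_num)
          _ = (C₀ + 2) ^ (3:ℝ) * W ^ ((θ + 1) * 3) := by
              rw [Real.mul_rpow (by linarith only [hC₀.le]) (by positivity),
                ← Real.rpow_mul hWpos.le]
      have h1upos : (0:ℝ) < 1 + u := by linarith only [hu0]
      calc (1:ℝ) = (1 + u) ^ ((3:ℝ) + -(3:ℝ)) := by
            rw [show ((3:ℝ) + -(3:ℝ)) = 0 by ring, Real.rpow_zero]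
        _ = (1 + u) ^ (3:ℝ) * (1 + u) ^ (-(3:ℝ)) := Real.rpow_add h1upos _ _
        _ ≤ (C₀ + 2) ^ (3:ℝ) * W ^ ((θ + 1) * 3) * (1 + u) ^ (-(3:ℝ)) :=
            mul_le_mul_of_nonneg_right h3 (by positivity)
    -- absorb the powers of W
    have habsorb : W ^ (2 * m) * (W ^ ((θ + 1) * (θ * p)) * W ^ ((θ + 1) * 3)) *
        Real.exp (-(p * s ^ ε)) ≤ A * Real.exp (-(p / 2 * sR ^ ε)) := by
      have hWQ : W ^ (2 * m) * (W ^ ((θ + 1) * (θ * p)) * W ^ ((θ + 1) * 3)) =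
          W ^ Q := by
        rw [← Real.rpow_add hWpos, ← Real.rpow_add hWpos, hQ_def]
      have hsplit : Real.exp (-(p * s ^ ε)) =
          Real.exp (-(p / 2 * s ^ ε)) * Real.exp (-(p / 2 * s ^ ε)) := by
        rw [← Real.exp_add]
        congr 1
        ring
      have hA1 : W ^ Q * Real.exp (-(p / 2 * s ^ ε)) ≤ A := by
        have h1 := hAs s hs0
        rw [← hW_def] at h1
        calc W ^ Q * Real.exp (-(p / 2 * s ^ ε))
            ≤ A * Real.exp (p / 2 * s ^ ε) * Real.exp (-(p / 2 * s ^ ε)) :=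
              mul_le_mul_of_nonneg_right h1 (Real.exp_pos _).le
          _ = A := by
              rw [mul_assoc, ← Real.exp_add]
              simp
      have hA2 : Real.exp (-(p / 2 * s ^ ε)) ≤ Real.exp (-(p / 2 * sR ^ ε)) := by
        apply Real.exp_le_exp.mpr
        have h1 : sR ^ ε ≤ s ^ ε := Real.rpow_le_rpow hsR0 hsRs hε.le
        have h2 := mul_le_mul_of_nonneg_left h1 (by positivity : (0:ℝ) ≤ p / 2)
        linarith only [h2]
      calc W ^ (2 * m) * (W ^ ((θ + 1) * (θ * p)) * W ^ ((θ + 1) * 3)) *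
            Real.exp (-(p * s ^ ε))
          = W ^ Q * Real.exp (-(p / 2 * s ^ ε)) * Real.exp (-(p / 2 * s ^ ε)) := by
            rw [hWQ, hsplit]; ring
        _ ≤ A * Real.exp (-(p / 2 * sR ^ ε)) :=
            mul_le_mul hA1 hA2 (Real.exp_pos _).le hA.le
    -- final assembly
    have hfinal : (β z ξ + 1) ^ l * ‖K z ξ‖ ^ p * Real.exp (-(p * φ ξ)) ≤
        D * Real.exp (-(p / 2 * sR ^ ε)) *
          (Real.exp (p * φ z) * (ρ z ^ (-(2 * p)) * (1 + u) ^ (-(3:ℝ)))) := by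
      have step1 : (β z ξ + 1) ^ l * ‖K z ξ‖ ^ p * Real.exp (-(p * φ ξ)) ≤
          ((1 + C₁) ^ m * W ^ (2 * m)) *
            ((C * C₀) ^ p * (u + 2) ^ (θ * p) *
              (Real.exp (p * φ z) * (ρ z ^ (-(2 * p)) *
                Real.exp (-(p * s ^ ε))))) := by
        have hKE : ‖K z ξ‖ ^ p * Real.exp (-(p * φ ξ)) ≤
            (C * C₀) ^ p * (u + 2) ^ (θ * p) *
              (Real.exp (p * φ z) * (ρ z ^ (-(2 * p)) * Real.exp (-(p * s ^ ε)))) := by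
          calc ‖K z ξ‖ ^ p * Real.exp (-(p * φ ξ))
              ≤ ((C * C₀ * (u + 2) ^ θ) ^ p *
                  (Real.exp (φ z + φ ξ) ^ p * (((ρ z * ρ z)⁻¹) ^ p *
                    Real.exp (-(s ^ ε)) ^ p))) * Real.exp (-(p * φ ξ)) :=
                mul_le_mul_of_nonneg_right hKp (Real.exp_pos _).le
            _ = (C * C₀) ^ p * (u + 2) ^ (θ * p) *
                  ((Real.exp (φ z + φ ξ) ^ p * Real.exp (-(p * φ ξ))) *
                    (ρ z ^ (-(2 * p)) * Real.exp (-(p * s ^ ε)))) := by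
                rw [hXp, hZp, hGp]; ring
            _ = (C * C₀) ^ p * (u + 2) ^ (θ * p) *
                  (Real.exp (p * φ z) * (ρ z ^ (-(2 * p)) *
                    Real.exp (-(p * s ^ ε)))) := by rw [hEp]
        calc (β z ξ + 1) ^ l * ‖K z ξ‖ ^ p * Real.exp (-(p * φ ξ))
            = (β z ξ + 1) ^ l * (‖K z ξ‖ ^ p * Real.exp (-(p * φ ξ))) := by
              ring
          _ ≤ ((1 + C₁) ^ m * W ^ (2 * m)) *
                ((C * C₀) ^ p * (u + 2) ^ (θ * p) *
                  (Real.exp (p * φ z) * (ρ z ^ (-(2 * p)) *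
                    Real.exp (-(p * s ^ ε))))) := by
              apply mul_le_mul hBl hKE _ (by positivity)
              positivity
      calc (β z ξ + 1) ^ l * ‖K z ξ‖ ^ p * Real.exp (-(p * φ ξ))
          ≤ ((1 + C₁) ^ m * W ^ (2 * m)) *
              ((C * C₀) ^ p * (u + 2) ^ (θ * p) *
                (Real.exp (p * φ z) * (ρ z ^ (-(2 * p)) *
                  Real.exp (-(p * s ^ ε))))) := step1
        _ ≤ ((1 + C₁) ^ m * W ^ (2 * m)) *
              ((C * C₀) ^ p * ((C₀ + 2) ^ (θ * p) * W ^ ((θ + 1) * (θ * p))) *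
                (Real.exp (p * φ z) * (ρ z ^ (-(2 * p)) *
                  Real.exp (-(p * s ^ ε))))) := by
            apply mul_le_mul_of_nonneg_left _ (by positivity)
            apply mul_le_mul_of_nonneg_right _ (by positivity)
            exact mul_le_mul_of_nonneg_left hup (by positivity)
        _ ≤ ((1 + C₁) ^ m * W ^ (2 * m)) *
              ((C * C₀) ^ p * ((C₀ + 2) ^ (θ * p) * W ^ ((θ + 1) * (θ * p))) *
                (Real.exp (p * φ z) * (ρ z ^ (-(2 * p)) *
                  Real.exp (-(p * s ^ ε))))) *
              ((C₀ + 2) ^ (3:ℝ) * W ^ ((θ + 1) * 3) * (1 + u) ^ (-(3:ℝ))) :=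
            le_mul_of_one_le_right (by positivity) h13
        _ = ((1 + C₁) ^ m * (C * C₀) ^ p * (C₀ + 2) ^ (θ * p) * (C₀ + 2) ^ (3:ℝ)) *
              (W ^ (2 * m) * (W ^ ((θ + 1) * (θ * p)) * W ^ ((θ + 1) * 3)) *
                Real.exp (-(p * s ^ ε))) *
              (Real.exp (p * φ z) * (ρ z ^ (-(2 * p)) * (1 + u) ^ (-(3:ℝ)))) := by
            ring
        _ ≤ ((1 + C₁) ^ m * (C * C₀) ^ p * (C₀ + 2) ^ (θ * p) * (C₀ + 2) ^ (3:ℝ)) *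
              (A * Real.exp (-(p / 2 * sR ^ ε))) *
              (Real.exp (p * φ z) * (ρ z ^ (-(2 * p)) * (1 + u) ^ (-(3:ℝ)))) := by
            apply mul_le_mul_of_nonneg_right _ (by positivity)
            exact mul_le_mul_of_nonneg_left habsorb (by positivity)
        _ = D * Real.exp (-(p / 2 * sR ^ ε)) *
              (Real.exp (p * φ z) * (ρ z ^ (-(2 * p)) * (1 + u) ^ (-(3:ℝ)))) := by
            rw [hD_def]; ring
    calc (β z ξ + 1) ^ l * ‖K z ξ‖ ^ p * Real.exp (-(p * φ ξ))
        ≤ D * Real.exp (-(p / 2 * sR ^ ε)) *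
            (Real.exp (p * φ z) * (ρ z ^ (-(2 * p)) * (1 + u) ^ (-(3:ℝ)))) := hfinal
      _ ≤ e / M₁ * (Real.exp (p * φ z) * (ρ z ^ (-(2 * p)) * (1 + u) ^ (-(3:ℝ)))) :=
          mul_le_mul_of_nonneg_right hsmall (by positivity)
  -- now integrate
  set cst : ℝ := e / M₁ * (Real.exp (p * φ z) * ρ z ^ (-(2 * p))) with hcst_def
  have hcst0 : 0 ≤ cst := by positivity
  have hgcont : Continuous fun ξ : ℂ =>
      (1 + ‖ξ - z‖ / ρ z) ^ (-(3:ℝ)) := by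
    apply Continuous.rpow_const
    · exact continuous_const.add ((continuous_norm.comp
        (continuous_id.sub continuous_const)).div_const _)
    · intro x
      left
      have : (0:ℝ) < 1 + ‖x - z‖ / ρ z := by positivity
      exact this.ne'
  have hg : Measurable fun ξ : ℂ => ENNReal.ofReal
      (cst * (1 + ‖ξ - z‖ / ρ z) ^ (-(3:ℝ))) :=
    (ENNReal.continuous_ofReal.comp (continuous_const.mul hgcont)).measurable
  have hh : Measurable fun w : ℂ => ENNReal.ofReal ((1 + ‖w‖) ^ (-(3:ℝ))) := by
    apply (ENNReal.continuous_ofReal.comp _).measurable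
    apply Continuous.rpow_const (continuous_const.add continuous_norm)
    intro x
    left
    have : (0:ℝ) < 1 + ‖x‖ := by positivity
    exact this.ne'
  -- scaling identity
  have hscale : (∫⁻ ξ : ℂ, ENNReal.ofReal ((1 + ‖ξ - z‖ / ρ z) ^ (-(3:ℝ)))) =
      ENNReal.ofReal (ρ z ^ (2:ℕ)) * J := by
    have hrw : ∀ ξ : ℂ, (1 + ‖ξ - z‖ / ρ z) = 1 + ‖(ρ z)⁻¹ • (ξ - z)‖ := by
      intro ξ
      rw [norm_smul, Real.norm_eq_abs, abs_of_pos (inv_pos.mpr hρz),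
        div_eq_inv_mul]
    calc (∫⁻ ξ : ℂ, ENNReal.ofReal ((1 + ‖ξ - z‖ / ρ z) ^ (-(3:ℝ))))
        = ∫⁻ ξ : ℂ, ENNReal.ofReal ((1 + ‖(ρ z)⁻¹ • (ξ - z)‖) ^ (-(3:ℝ))) := by
          simp_rw [hrw]
      _ = ∫⁻ ξ : ℂ, ENNReal.ofReal ((1 + ‖(ρ z)⁻¹ • ξ‖) ^ (-(3:ℝ))) :=
          lintegral_sub_right_eq_self
            (fun ξ => ENNReal.ofReal ((1 + ‖(ρ z)⁻¹ • ξ‖) ^ (-(3:ℝ)))) z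
      _ = ∫⁻ y, ENNReal.ofReal ((1 + ‖y‖) ^ (-(3:ℝ)))
            ∂(Measure.map (fun ξ : ℂ => (ρ z)⁻¹ • ξ) volume) :=
          (lintegral_map hh (measurable_const_smul _)).symm
      _ = ENNReal.ofReal |((ρ z)⁻¹ ^ Module.finrank ℝ ℂ)⁻¹| * J := by
          rw [Measure.map_addHaar_smul volume (inv_ne_zero hρz.ne'),
            lintegral_smul_measure, smul_eq_mul, hJ_def]
      _ = ENNReal.ofReal (ρ z ^ (2:ℕ)) * J := by
          rw [Complex.finrank_real_complex, inv_pow, inv_inv,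
            abs_of_pos (by positivity)]
  -- put everything together
  calc (∫⁻ ξ in {ξ : ℂ | R ≤ β z ξ}, ENNReal.ofReal ((β z ξ + 1) ^ l *
          ‖K z ξ‖ ^ p * Real.exp (-(p * φ ξ))))
      ≤ ∫⁻ ξ in {ξ : ℂ | R ≤ β z ξ}, ENNReal.ofReal
          (cst * (1 + ‖ξ - z‖ / ρ z) ^ (-(3:ℝ))) := by
        apply setLIntegral_mono hg
        intro ξ hξ
        apply ENNReal.ofReal_le_ofReal
        calc (β z ξ + 1) ^ l * ‖K z ξ‖ ^ p * Real.exp (-(p * φ ξ))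
            ≤ e / M₁ * (Real.exp (p * φ z) * (ρ z ^ (-(2 * p)) *
                (1 + ‖ξ - z‖ / ρ z) ^ (-(3:ℝ)))) := hpoint ξ hξ
          _ = cst * (1 + ‖ξ - z‖ / ρ z) ^ (-(3:ℝ)) := by
              rw [hcst_def]; ring
    _ ≤ ∫⁻ ξ : ℂ, ENNReal.ofReal
          (cst * (1 + ‖ξ - z‖ / ρ z) ^ (-(3:ℝ))) :=
        setLIntegral_le_lintegral _ _
    _ = ENNReal.ofReal cst *
          ∫⁻ ξ : ℂ, ENNReal.ofReal ((1 + ‖ξ - z‖ / ρ z) ^ (-(3:ℝ))) := by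
        simp_rw [ENNReal.ofReal_mul hcst0]
        exact lintegral_const_mul' _ _ ENNReal.ofReal_ne_top
    _ = ENNReal.ofReal cst * (ENNReal.ofReal (ρ z ^ (2:ℕ)) * J) := by rw [hscale]
    _ ≤ ENNReal.ofReal cst * (ENNReal.ofReal (ρ z ^ (2:ℕ)) * ENNReal.ofReal M₁) := by
        gcongr
    _ = ENNReal.ofReal (cst * (ρ z ^ (2:ℕ) * M₁)) := by
        rw [← ENNReal.ofReal_mul (by positivity), ← ENNReal.ofReal_mul hcst0]
    _ = ENNReal.ofReal (e * ρ z ^ (2 * (1 - p)) * Real.exp (p * φ z)) := by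
        congr 1
        have hrw2 : ρ z ^ (2 * (1 - p)) = ρ z ^ (-(2 * p)) * ρ z ^ (2:ℕ) := by
          rw [← Real.rpow_natCast (ρ z) 2, ← Real.rpow_add hρz]
          congr 1
          push_cast
          ring
        rw [hcst_def, hrw2]
        field_simp
end

section
/- For every s ∈ ℝ there exist constants C₁, C₂ > 0 such that C₁ ρ(z)^{s−2} e^{φ(z)} ≤ sup_{w∈ℂ} ρ(w)^s |K(w,z)| e^{−φ(w)} ≤ C₂ ρ(z)^{s−2} e^{φ(z)} for all z ∈ ℂ. -/
open MeasureTheory Filter Metric Set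
open scoped ENNReal

/-- Elementary bound: `(t+1)^a * exp(-(t^ε))` is bounded on `[0, ∞)`. -/
lemma stmt6_aux (a ε : ℝ) (ha : 0 ≤ a) (hε : 0 < ε) :
    ∃ M : ℝ, 0 < M ∧ ∀ t : ℝ, 0 ≤ t →
      (t + 1) ^ a * Real.exp (-(t ^ ε)) ≤ M := by
  set N := ⌈a / ε⌉₊ with hN
  refine ⟨2 ^ a * (N.factorial : ℝ), by positivity, fun t ht => ?_⟩
  have hfac : (1 : ℝ) ≤ (N.factorial : ℝ) := by exact_mod_cast N.factorial_pos
  have hu0 : 0 ≤ t ^ ε := Real.rpow_nonneg ht ε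
  have hexp1 : Real.exp (-(t ^ ε)) ≤ 1 := Real.exp_le_one_iff.2 (by linarith)
  rcases le_or_gt t 1 with h1 | h1
  · have h2 : (t + 1) ^ a ≤ 2 ^ a :=
      Real.rpow_le_rpow (by linarith) (by linarith) ha
    calc (t + 1) ^ a * Real.exp (-(t ^ ε)) ≤ 2 ^ a * 1 := by
          apply mul_le_mul h2 hexp1 (Real.exp_pos _).le (by positivity)
      _ ≤ 2 ^ a * (N.factorial : ℝ) := by
          apply mul_le_mul_of_nonneg_left hfac (by positivity)
  · -- t > 1
    have ht0 : (0 : ℝ) < t := by linarith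
    have hu1 : (1 : ℝ) ≤ t ^ ε := Real.one_le_rpow h1.le hε.le
    have step1 : (t + 1) ^ a ≤ (2 * t) ^ a :=
      Real.rpow_le_rpow (by linarith) (by linarith) ha
    have step2 : (2 * t) ^ a = 2 ^ a * t ^ a :=
      Real.mul_rpow (by norm_num) ht0.le
    have step3 : t ^ a = (t ^ ε) ^ (a / ε) := by
      rw [← Real.rpow_mul ht0.le]
      congr 1
      field_simp
    have step4 : (t ^ ε) ^ (a / ε) ≤ (t ^ ε) ^ (N : ℝ) :=
      Real.rpow_le_rpow_of_exponent_le hu1 (Nat.le_ceil _)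
    have step5 : (t ^ ε) ^ (N : ℝ) = (t ^ ε) ^ N := Real.rpow_natCast _ N
    have step6 : (t ^ ε) ^ N ≤ (N.factorial : ℝ) * Real.exp (t ^ ε) := by
      have h := Real.pow_div_factorial_le_exp (x := t ^ ε) hu0 N
      rw [div_le_iff₀ (by positivity)] at h
      linarith [h]
    have hta : (t + 1) ^ a ≤ 2 ^ a * ((N.factorial : ℝ) * Real.exp (t ^ ε)) := by
      calc (t + 1) ^ a ≤ 2 ^ a * t ^ a := by rw [← step2]; exact step1
        _ = 2 ^ a * (t ^ ε) ^ (a / ε) := by rw [step3]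
        _ ≤ 2 ^ a * ((t ^ ε) ^ (N : ℝ)) := by
            apply mul_le_mul_of_nonneg_left step4 (by positivity)
        _ = 2 ^ a * ((t ^ ε) ^ N) := by rw [step5]
        _ ≤ 2 ^ a * ((N.factorial : ℝ) * Real.exp (t ^ ε)) := by
            apply mul_le_mul_of_nonneg_left step6 (by positivity)
    calc (t + 1) ^ a * Real.exp (-(t ^ ε))
        ≤ (2 ^ a * ((N.factorial : ℝ) * Real.exp (t ^ ε))) * Real.exp (-(t ^ ε)) := by
          apply mul_le_mul_of_nonneg_right hta (Real.exp_pos _).le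
      _ = 2 ^ a * (N.factorial : ℝ) * (Real.exp (t ^ ε) * Real.exp (-(t ^ ε))) := by
          ring
      _ = 2 ^ a * (N.factorial : ℝ) := by
          rw [← Real.exp_add, add_neg_cancel, Real.exp_zero, mul_one]

/-- For every `s ∈ ℝ` there are `C₁, C₂ > 0` such that
`C₁ ρ(z)^{s-2} e^{φ(z)} ≤ sup_w ρ(w)^s |K(w,z)| e^{-φ(w)} ≤ C₂ ρ(z)^{s-2} e^{φ(z)}`
for all `z ∈ ℂ`. -/
theorem stmt6
    (ρ : ℂ → ℝ) (hρ : ∀ z, 0 < ρ z)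
    (C₀ θ : ℝ) (hC₀ : 0 < C₀) (hθ : 0 < θ)
    (hρ₁ : ∀ (z w : ℂ) (r : ℝ), 0 < r → r ≤ 1 → w ∈ Metric.ball z (r * ρ z) →
      C₀⁻¹ ≤ ρ w / ρ z ∧ ρ w / ρ z ≤ C₀)
    (hρ₂ : ∀ (z w : ℂ) (r : ℝ), 1 < r → w ∈ Metric.ball z (r * ρ z) →
      (C₀ * r ^ θ)⁻¹ ≤ ρ w / ρ z ∧ ρ w / ρ z ≤ C₀ * r ^ θ)
    (φ : ℂ → ℝ) (hφm : Measurable φ)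
    (K : ℂ → ℂ → ℂ)
    (hK : ∃ C : ℝ, 0 < C ∧ ∃ ε : ℝ, 0 < ε ∧ ∀ w z : ℂ,
      ‖K w z‖ ≤ C * (Real.exp (φ w + φ z) / (ρ w * ρ z)) *
        Real.exp (-((‖z - w‖ / ρ z) ^ ε)))
    (hK_low : ∃ r₀ : ℝ, 0 < r₀ ∧ ∃ c : ℝ, 0 < c ∧ ∀ z w : ℂ,
      w ∈ Metric.ball z (r₀ * ρ z) →
        c * (Real.exp (φ w + φ z) / ρ z ^ (2 : ℝ)) ≤ ‖K w z‖)
    (s : ℝ) :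
    ∃ C₁ C₂ : ℝ, 0 < C₁ ∧ 0 < C₂ ∧ ∀ z : ℂ,
      C₁ * ρ z ^ (s - 2) * Real.exp (φ z) ≤
        (⨆ w : ℂ, ρ w ^ s * ‖K w z‖ * Real.exp (-φ w)) ∧
      (⨆ w : ℂ, ρ w ^ s * ‖K w z‖ * Real.exp (-φ w)) ≤
        C₂ * ρ z ^ (s - 2) * Real.exp (φ z) := by
  obtain ⟨C, hC, ε, hε, hKup⟩ := hK
  obtain ⟨r₀, hr₀, c, hc, hKlo⟩ := hK_low
  -- C₀ ≥ 1
  have hC₀1 : 1 ≤ C₀ := by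
    have h := (hρ₁ 0 0 1 one_pos le_rfl (by
      rw [Metric.mem_ball, dist_self]
      simpa using hρ 0)).2
    rwa [div_self (hρ 0).ne'] at h
  set a := |s - 1| with ha
  obtain ⟨M, hM, hMb⟩ := stmt6_aux (θ * a) ε (by positivity) hε
  refine ⟨c, C * C₀ ^ a * M, hc, by positivity, fun z => ?_⟩
  -- pointwise upper bound
  have key : ∀ w : ℂ, ρ w ^ s * ‖K w z‖ * Real.exp (-φ w) ≤
      C * C₀ ^ a * M * ρ z ^ (s - 2) * Real.exp (φ z) := by
    intro w
    set t := ‖z - w‖ / ρ z with htdef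
    have ht0 : 0 ≤ t := div_nonneg (norm_nonneg _) (hρ z).le
    have htz : ‖z - w‖ = t * ρ z := by
      rw [htdef, div_mul_cancel₀ _ (hρ z).ne']
    have hball : w ∈ Metric.ball z ((t + 1) * ρ z) := by
      rw [Metric.mem_ball, dist_comm, Complex.dist_eq, htz]
      nlinarith [hρ z]
    -- ρ w / ρ z bounds
    have hQ : (C₀ * (t + 1) ^ θ)⁻¹ ≤ ρ w / ρ z ∧ ρ w / ρ z ≤ C₀ * (t + 1) ^ θ := by
      rcases eq_or_lt_of_le ht0 with h0 | h0
      · have ht1 : t + 1 = 1 := by rw [← h0]; ring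
        have h := hρ₁ z w 1 one_pos le_rfl (by rwa [ht1] at hball)
        rw [ht1, Real.one_rpow, mul_one]
        exact h
      · exact hρ₂ z w (t + 1) (by linarith) hball
    set Q := C₀ * (t + 1) ^ θ with hQdef
    have hQpos : 0 < Q := by
      rw [hQdef]; positivity
    have hQ1 : 1 ≤ Q := by
      have h1θ : (1 : ℝ) ≤ (t + 1) ^ θ := Real.one_le_rpow (by linarith) hθ.le
      calc (1 : ℝ) = 1 * 1 := by ring
        _ ≤ C₀ * (t + 1) ^ θ := mul_le_mul hC₀1 h1θ zero_le_one hC₀.le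
    have hρw_up : ρ w ≤ Q * ρ z := (div_le_iff₀ (hρ z)).1 hQ.2
    have hρw_lo : Q⁻¹ * ρ z ≤ ρ w := by
      have h := hQ.1
      rw [le_div_iff₀ (hρ z)] at h
      linarith
    -- ρ w ^ (s-1) ≤ Q^a * ρ z^(s-1)
    have hpow : ρ w ^ (s - 1) ≤ Q ^ a * ρ z ^ (s - 1) := by
      rcases le_or_gt 0 (s - 1) with hs | hs
      · have h1 : ρ w ^ (s - 1) ≤ (Q * ρ z) ^ (s - 1) :=
          Real.rpow_le_rpow (hρ w).le hρw_up hs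
        rw [Real.mul_rpow hQpos.le (hρ z).le] at h1
        refine h1.trans ?_
        apply mul_le_mul_of_nonneg_right _ (Real.rpow_nonneg (hρ z).le _)
        exact Real.rpow_le_rpow_of_exponent_le hQ1 (le_abs_self _)
      · have h1 : ρ w ^ (s - 1) ≤ (Q⁻¹ * ρ z) ^ (s - 1) :=
          Real.rpow_le_rpow_of_nonpos (mul_pos (inv_pos.2 hQpos) (hρ z))
            hρw_lo hs.le
        rw [Real.mul_rpow (inv_nonneg.2 hQpos.le) (hρ z).le,
          Real.inv_rpow hQpos.le, ← Real.rpow_neg hQpos.le] at h1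
        have haneg : a = -(s - 1) := by rw [ha, abs_of_neg hs]
        rw [haneg]
        exact h1
    -- main computation
    have hKw := hKup w z
    have hρwne : ρ w ≠ 0 := (hρ w).ne'
    have hρzne : ρ z ≠ 0 := (hρ z).ne'
    have hexpwne : Real.exp (φ w) ≠ 0 := Real.exp_ne_zero _
    have e2 : ρ w ^ s * (C * (Real.exp (φ w + φ z) / (ρ w * ρ z)) *
        Real.exp (-(t ^ ε))) * Real.exp (-φ w)
        = C * ρ w ^ (s - 1) * (Real.exp (φ z) / ρ z) * Real.exp (-(t ^ ε)) := by
      rw [Real.exp_add, Real.rpow_sub (hρ w), Real.rpow_one, Real.exp_neg (φ w)]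
      field_simp
    have step1 : ρ w ^ s * ‖K w z‖ * Real.exp (-φ w) ≤
        C * ρ w ^ (s - 1) * (Real.exp (φ z) / ρ z) * Real.exp (-(t ^ ε)) := by
      rw [← e2]
      apply mul_le_mul_of_nonneg_right _ (Real.exp_pos _).le
      apply mul_le_mul_of_nonneg_left _ (Real.rpow_nonneg (hρ w).le s)
      simpa [htdef] using hKw
    refine step1.trans ?_
    have hQa : Q ^ a = C₀ ^ a * (t + 1) ^ (θ * a) := by
      rw [hQdef, Real.mul_rpow hC₀.le (Real.rpow_nonneg (by linarith) θ),
        ← Real.rpow_mul (by linarith : (0:ℝ) ≤ t + 1)]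
    have hMt : (t + 1) ^ (θ * a) * Real.exp (-(t ^ ε)) ≤ M := hMb t ht0
    have e3 : C * C₀ ^ a * M * ρ z ^ (s - 2) * Real.exp (φ z)
        = C * (C₀ ^ a * M * ρ z ^ (s - 1)) * (Real.exp (φ z) / ρ z) := by
      rw [show s - 2 = s - 1 - 1 by ring, Real.rpow_sub (hρ z), Real.rpow_one]
      field_simp
    rw [e3]
    have hexpz : 0 < Real.exp (φ z) / ρ z := div_pos (Real.exp_pos _) (hρ z)
    have main : ρ w ^ (s - 1) * Real.exp (-(t ^ ε)) ≤ C₀ ^ a * M * ρ z ^ (s - 1) := by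
      calc ρ w ^ (s - 1) * Real.exp (-(t ^ ε))
          ≤ (Q ^ a * ρ z ^ (s - 1)) * Real.exp (-(t ^ ε)) := by
            apply mul_le_mul_of_nonneg_right hpow (Real.exp_pos _).le
        _ = C₀ ^ a * ρ z ^ (s - 1) *
            ((t + 1) ^ (θ * a) * Real.exp (-(t ^ ε))) := by
            rw [hQa]; ring
        _ ≤ C₀ ^ a * ρ z ^ (s - 1) * M := by
            apply mul_le_mul_of_nonneg_left hMt
            exact mul_nonneg (Real.rpow_nonneg hC₀.le _) (Real.rpow_nonneg (hρ z).le _)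
        _ = C₀ ^ a * M * ρ z ^ (s - 1) := by ring
    calc C * ρ w ^ (s - 1) * (Real.exp (φ z) / ρ z) * Real.exp (-(t ^ ε))
        = C * (ρ w ^ (s - 1) * Real.exp (-(t ^ ε))) * (Real.exp (φ z) / ρ z) := by
          ring
      _ ≤ C * (C₀ ^ a * M * ρ z ^ (s - 1)) * (Real.exp (φ z) / ρ z) := by
          apply mul_le_mul_of_nonneg_right _ hexpz.le
          exact mul_le_mul_of_nonneg_left main hC.le
  -- assemble
  have gbdd : BddAbove (Set.range fun w : ℂ =>
      ρ w ^ s * ‖K w z‖ * Real.exp (-φ w)) := by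
    refine ⟨C * C₀ ^ a * M * ρ z ^ (s - 2) * Real.exp (φ z), ?_⟩
    rintro y ⟨w, rfl⟩
    exact key w
  constructor
  · -- lower bound
    have hz : z ∈ Metric.ball z (r₀ * ρ z) := Metric.mem_ball_self (mul_pos hr₀ (hρ z))
    have hlow := hKlo z z hz
    have e4 : c * ρ z ^ (s - 2) * Real.exp (φ z)
        = ρ z ^ s * (c * (Real.exp (φ z + φ z) / ρ z ^ (2 : ℝ))) * Real.exp (-φ z) := by
      rw [show s - 2 = s - (2:ℝ) by norm_num, Real.rpow_sub (hρ z), Real.exp_add,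
        Real.exp_neg]
      have h2 : ρ z ^ (2 : ℝ) ≠ 0 := (Real.rpow_pos_of_pos (hρ z) 2).ne'
      have hρzne : ρ z ≠ 0 := (hρ z).ne'
      have hexpzne : Real.exp (φ z) ≠ 0 := Real.exp_ne_zero _
      field_simp
    calc c * ρ z ^ (s - 2) * Real.exp (φ z)
        = ρ z ^ s * (c * (Real.exp (φ z + φ z) / ρ z ^ (2 : ℝ))) * Real.exp (-φ z) :=
          e4
      _ ≤ ρ z ^ s * ‖K z z‖ * Real.exp (-φ z) := by
          apply mul_le_mul_of_nonneg_right _ (Real.exp_pos _).le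
          exact mul_le_mul_of_nonneg_left hlow (Real.rpow_nonneg (hρ z).le s)
      _ ≤ ⨆ w : ℂ, ρ w ^ s * ‖K w z‖ * Real.exp (-φ w) :=
          le_ciSup gbdd z
  · exact ciSup_le key
end

section
/- For every R > 0 and every ε > 0 there exists a function h : ℂ → ℝ with compact support such that h(z) = 1 for all z ∈ B(0,R), 0 ≤ h ≤ 1 on ℂ with sup_{z∈ℂ} |h(z)| = 1, and sup_{z∈ℂ} ω(h)(z) < ε. -/
open MeasureTheory Filter Metric Set
open scoped ENNReal

/-- The oscillation `ω(h)(z) = sup{ |h(z) - h(w)| : β(z,w) < 1 }` of a real-valued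
function `h` at `z`. -/
noncomputable def omegaR (β : ℂ → ℂ → ℝ) (h : ℂ → ℝ) (z : ℂ) : ℝ :=
  sSup ((fun w => |h z - h w|) '' {w : ℂ | β z w < 1})

/-- The clamp function `t ↦ min 1 (max 0 t)` is 1-Lipschitz. -/
lemma clamp_lip (a b : ℝ) : |min 1 (max 0 a) - min 1 (max 0 b)| ≤ |a - b| := by
  refine (abs_min_sub_min_le_max 1 (max 0 a) 1 (max 0 b)).trans ?_
  simp only [sub_self, abs_zero]
  refine max_le (abs_nonneg _) ?_
  simpa [max_comm] using abs_max_sub_max_le_abs a b 0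

/-- For every `R > 0` and `ε > 0` there is a compactly supported function
`h : ℂ → ℝ` with `h ≡ 1` on `B(0,R)`, `0 ≤ h ≤ 1`, `sup |h| = 1` and `sup_z ω(h)(z) < ε`. -/
theorem stmt10
    (ρ : ℂ → ℝ) (hρ : ∀ z, 0 < ρ z)
    (C₀ θ : ℝ) (hC₀ : 0 < C₀) (hθ : 0 < θ)
    (hρ₁ : ∀ (z w : ℂ) (r : ℝ), 0 < r → r ≤ 1 → w ∈ Metric.ball z (r * ρ z) →
      C₀⁻¹ ≤ ρ w / ρ z ∧ ρ w / ρ z ≤ C₀)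
    (hρ₂ : ∀ (z w : ℂ) (r : ℝ), 1 < r → w ∈ Metric.ball z (r * ρ z) →
      (C₀ * r ^ θ)⁻¹ ≤ ρ w / ρ z ∧ ρ w / ρ z ≤ C₀ * r ^ θ)
    (β : ℂ → ℂ → ℝ)
    (hβsymm : ∀ z w, β z w = β w z) (hβnonneg : ∀ z w, 0 ≤ β z w)
    (hβeq : ∀ z w, β z w = 0 ↔ z = w)
    (hβtri : ∀ z w u, β z u ≤ β z w + β w u)
    (δ : ℝ) (hδ : 0 < δ ∧ δ < 1)
    (hβ : ∀ r : ℝ, 0 < r → ∃ Cr : ℝ, 0 < Cr ∧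
      (∀ z w : ℂ, w ∈ Metric.ball z (r * ρ z) →
        Cr⁻¹ * (‖z - w‖ / ρ z) ≤ β z w ∧
        β z w ≤ Cr * (‖z - w‖ / ρ z)) ∧
      (∀ z w : ℂ, w ∉ Metric.ball z (r * ρ z) →
        Cr⁻¹ * (‖z - w‖ / ρ z) ^ δ ≤ β z w ∧
        β z w ≤ Cr * (‖z - w‖ / ρ z) ^ (2 - δ)))
    (R ε : ℝ) (hR : 0 < R) (hε : 0 < ε) :
    ∃ h : ℂ → ℝ, HasCompactSupport h ∧
      (∀ z : ℂ, β 0 z < R → h z = 1) ∧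
      (∀ z : ℂ, 0 ≤ h z ∧ h z ≤ 1) ∧
      (⨆ z : ℂ, |h z|) = 1 ∧
      (⨆ z : ℂ, omegaR β h z) < ε := by
  obtain ⟨hδ0, hδ1⟩ := hδ
  set K : ℝ := 2 / ε with hKdef
  have hK : 0 < K := by positivity
  set h : ℂ → ℝ := fun z => min 1 (max 0 ((R + K - β 0 z) / K)) with hdef
  have hbounds : ∀ z : ℂ, 0 ≤ h z ∧ h z ≤ 1 := fun z =>
    ⟨le_min zero_le_one (le_max_left _ _), min_le_left _ _⟩
  have hone : ∀ z : ℂ, β 0 z < R → h z = 1 := by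
    intro z hz
    have h1 : (1 : ℝ) ≤ (R + K - β 0 z) / K := by
      rw [le_div_iff₀ hK]; linarith
    simp only [hdef]
    rw [min_eq_left (le_max_of_le_right h1)]
  -- Lipschitz estimate
  have hlip : ∀ z w : ℂ, |h z - h w| ≤ β z w / K := by
    intro z w
    have h1 : |h z - h w| ≤ |(R + K - β 0 z) / K - (R + K - β 0 w) / K| :=
      clamp_lip _ _
    have h2 : (R + K - β 0 z) / K - (R + K - β 0 w) / K = (β 0 w - β 0 z) / K := by
      ring
    rw [h2] at h1
    refine h1.trans ?_
    rw [abs_div, abs_of_pos hK]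
    gcongr
    rw [abs_sub_le_iff]
    constructor
    · have := hβtri 0 z w; linarith
    · have := hβtri 0 w z; rw [hβsymm w z] at this; linarith
  refine ⟨h, ?_, hone, hbounds, ?_, ?_⟩
  · -- compact support
    obtain ⟨C, hC, -, hout⟩ := hβ 1 one_pos
    set M : ℝ := max (ρ 0) (ρ 0 * (C * (R + K)) ^ (1 / δ)) with hM
    have hsupp : Function.support h ⊆ Metric.closedBall 0 M := by
      intro z hz
      have hzR : β 0 z < R + K := by
        by_contra hcon
        push_neg at hcon
        have : (R + K - β 0 z) / K ≤ 0 := by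
          apply div_nonpos_of_nonpos_of_nonneg (by linarith) hK.le
        have : h z = 0 := by
          simp only [hdef]; rw [max_eq_left this, min_eq_right zero_le_one]
        exact hz this
      by_cases hball : z ∈ Metric.ball 0 (1 * ρ 0)
      · simp only [Metric.mem_ball, one_mul] at hball
        exact Metric.mem_closedBall.2 (hball.le.trans (le_max_left _ _))
      · obtain ⟨hlow, -⟩ := hout 0 z hball
        have ha : (0 : ℝ) ≤ ‖0 - z‖ / ρ 0 := div_nonneg (norm_nonneg _) (hρ 0).le
        have h3 : (‖0 - z‖ / ρ 0) ^ δ ≤ C * (R + K) := by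
          rw [inv_mul_le_iff₀ hC] at hlow
          calc (‖0 - z‖ / ρ 0) ^ δ ≤ C * β 0 z := hlow
            _ ≤ C * (R + K) := by nlinarith
        have h4 : ‖0 - z‖ / ρ 0 ≤ (C * (R + K)) ^ (1 / δ) := by
          have := Real.rpow_le_rpow (Real.rpow_nonneg ha δ) h3 (by positivity : (0:ℝ) ≤ 1 / δ)
          rwa [← Real.rpow_mul ha, mul_one_div, div_self hδ0.ne', Real.rpow_one] at this
        have h5 : ‖z‖ ≤ ρ 0 * (C * (R + K)) ^ (1 / δ) := by
          have : ‖0 - z‖ = ‖z‖ := by simp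
          rw [this] at h4
          rw [div_le_iff₀ (hρ 0)] at h4
          linarith [h4]
        rw [Metric.mem_closedBall, Complex.dist_eq, sub_zero]
        exact h5.trans (le_max_right _ _)
    have : tsupport h ⊆ Metric.closedBall 0 M :=
      closure_minimal hsupp Metric.isClosed_closedBall
    exact IsCompact.of_isClosed_subset (isCompact_closedBall 0 M)
      (isClosed_closure) this
  · -- sup |h| = 1
    have hb : BddAbove (Set.range fun z : ℂ => |h z|) := by
      refine ⟨1, ?_⟩
      rintro x ⟨z, rfl⟩
      show |h z| ≤ 1
      rw [abs_of_nonneg (hbounds z).1]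
      exact (hbounds z).2
    refine le_antisymm (ciSup_le fun z => ?_) ?_
    · show |h z| ≤ 1
      rw [abs_of_nonneg (hbounds z).1]; exact (hbounds z).2
    · have h0 : h 0 = 1 := hone 0 (by rw [(hβeq 0 0).2 rfl]; exact hR)
      have : |h 0| = 1 := by rw [h0]; norm_num
      exact this ▸ le_ciSup hb 0
  · -- oscillation
    have hosc : ∀ z : ℂ, omegaR β h z ≤ ε / 2 := by
      intro z
      apply Real.sSup_le _ (by positivity)
      rintro x ⟨w, hw, rfl⟩
      simp only [Set.mem_setOf_eq] at hw
      have := hlip z w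
      have hKe : β z w / K ≤ ε / 2 := by
        rw [div_le_iff₀ hK, hKdef]
        have : ε / 2 * (2 / ε) = 1 := by field_simp
        rw [this]; exact hw.le
      linarith
    calc (⨆ z : ℂ, omegaR β h z) ≤ ε / 2 := ciSup_le hosc
      _ < ε := by linarith
end

section
/- Let 0 < p < ∞ and let f ∈ L^∞(ℂ) have compact support. If (g_j) is a sequence in F^p_φ with sup_j ‖g_j‖_{p,φ} < ∞ that converges to 0 uniformly on every compact subset of ℂ, then ‖f g_j − P(f g_j)‖_{p,φ} → 0 as j → ∞. (This is the key step showing that the Hankel operator H_f is compact from F^p_φ to L^p_φ.) -/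
open MeasureTheory Filter Metric Set
open scoped ENNReal

/-- The Laplacian of a function `φ : ℂ → ℝ`. -/
noncomputable def lap (φ : ℂ → ℝ) (z : ℂ) : ℝ :=
  fderiv ℝ (fun w => fderiv ℝ φ w 1) z 1 +
    fderiv ℝ (fun w => fderiv ℝ φ w Complex.I) z Complex.I

/-- The measure `μ = Δφ dA` on ℂ. -/
noncomputable def muphi (φ : ℂ → ℝ) : Measure ℂ :=
  volume.withDensity fun z => ENNReal.ofReal (lap φ z)

/-- The Bergman projection `P h(z) = ∫_ℂ K(z,w) h(w) e^{-2φ(w)} dA(w)`. -/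
noncomputable def bproj (K : ℂ → ℂ → ℂ) (φ : ℂ → ℝ) (h : ℂ → ℂ) (z : ℂ) : ℂ :=
  ∫ w : ℂ, K z w * h w * (Real.exp (-(2 * φ w)) : ℂ)


private lemma muphi_iter (φ : ℂ → ℝ) (M : ℝ)
    (hdbl : ∀ (z : ℂ) (r : ℝ), 0 < r →
      muphi φ (Metric.ball z (2 * r)) ≤ ENNReal.ofReal M * muphi φ (Metric.ball z r)) :
    ∀ (k : ℕ) (z : ℂ) (r : ℝ), 0 < r →
      muphi φ (Metric.ball z (2 ^ k * r)) ≤ (ENNReal.ofReal M) ^ k * muphi φ (Metric.ball z r) := by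
  intro k
  induction k with
  | zero => intro z r _; simp
  | succ k ih =>
    intro z r hr
    have h2 : (2:ℝ) ^ (k+1) * r = 2 * (2 ^ k * r) := by ring
    rw [h2]
    calc muphi φ (ball z (2 * (2^k * r))) ≤ ENNReal.ofReal M * muphi φ (ball z (2^k*r)) :=
          hdbl z _ (by positivity)
      _ ≤ ENNReal.ofReal M * ((ENNReal.ofReal M)^k * muphi φ (ball z r)) :=
          mul_le_mul_right (ih z r hr) _
      _ = (ENNReal.ofReal M)^(k+1) * muphi φ (ball z r) := by ring
section DoublingAux

variable (φ : ℂ → ℝ) (M : ℝ) (ρ : ℂ → ℝ)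

/-- Existence of a power of two exceeding a real. -/
private lemma exists_two_pow_ge (x : ℝ) : ∃ k : ℕ, x ≤ 2 ^ k := by
  obtain ⟨k, hk⟩ := pow_unbounded_of_one_lt x (by norm_num : (1:ℝ) < 2)
  exact ⟨k, hk.le⟩

private lemma muphi_ball_ne_top
    (hdbl : ∀ (z : ℂ) (r : ℝ), 0 < r →
      muphi φ (Metric.ball z (2 * r)) ≤ ENNReal.ofReal M * muphi φ (Metric.ball z r))
    (hρ : ∀ z, 0 < ρ z ∧ muphi φ (Metric.ball z (ρ z)) = 1) :
    ∀ (z : ℂ) (r : ℝ), muphi φ (Metric.ball z r) ≠ ⊤ := by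
  intro z r
  obtain ⟨k, hk⟩ := exists_two_pow_ge (r / ρ z)
  have hρz := (hρ z).1
  have hr : r ≤ 2 ^ k * ρ z := by
    rw [div_le_iff₀ hρz] at hk; linarith
  have h1 : muphi φ (Metric.ball z r) ≤ (ENNReal.ofReal M) ^ k * muphi φ (Metric.ball z (ρ z)) :=
    le_trans (measure_mono (ball_subset_ball hr)) (muphi_iter φ M hdbl k z (ρ z) hρz)
  rw [(hρ z).2, mul_one] at h1
  exact ne_top_of_le_ne_top (ENNReal.pow_ne_top ENNReal.ofReal_ne_top) h1

private lemma muphi_ball_ne_zero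
    (hdbl : ∀ (z : ℂ) (r : ℝ), 0 < r →
      muphi φ (Metric.ball z (2 * r)) ≤ ENNReal.ofReal M * muphi φ (Metric.ball z r))
    (hρ : ∀ z, 0 < ρ z ∧ muphi φ (Metric.ball z (ρ z)) = 1) :
    ∀ (z : ℂ) (r : ℝ), 0 < r → muphi φ (Metric.ball z r) ≠ 0 := by
  intro z r hr h0
  obtain ⟨k, hk⟩ := exists_two_pow_ge ((‖z‖ + ρ 0) / r)
  have hsub : Metric.ball (0:ℂ) (ρ 0) ⊆ Metric.ball z (2 ^ k * r) := by
    intro x hx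
    simp only [mem_ball, dist_eq_norm] at hx ⊢
    have h1 : ‖x - z‖ ≤ ‖x - 0‖ + ‖z‖ := by
      simpa using norm_sub_le_norm_sub_add_norm_sub x 0 z
    have h2 : ‖z‖ + ρ 0 ≤ 2 ^ k * r := by
      rw [div_le_iff₀ hr] at hk; linarith
    simp only [sub_zero] at h1 hx
    calc ‖x - z‖ ≤ ‖x‖ + ‖z‖ := h1
      _ < ρ 0 + ‖z‖ := by linarith
      _ ≤ 2 ^ k * r := by linarith
  have h1 : (1:ℝ≥0∞) ≤ muphi φ (Metric.ball z (2^k * r)) := by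
    rw [← (hρ 0).2]; exact measure_mono hsub
  have h2 := muphi_iter φ M hdbl k z r hr
  rw [h0, mul_zero] at h2
  exact absurd (le_trans h1 h2) (by simp)

end DoublingAux
private lemma muphi_strict_mono (φ : ℂ → ℝ) (M : ℝ)
    (hdbl : ∀ (z : ℂ) (r : ℝ), 0 < r →
      muphi φ (Metric.ball z (2 * r)) ≤ ENNReal.ofReal M * muphi φ (Metric.ball z r))
    (ρ : ℂ → ℝ) (hρ : ∀ z, 0 < ρ z ∧ muphi φ (Metric.ball z (ρ z)) = 1)
    (z : ℂ) (r r' : ℝ) (hr : 0 < r) (hrr : r < r') :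
    muphi φ (Metric.ball z r) < muphi φ (Metric.ball z r') := by
  set w : ℂ := z + (((r + r') / 2 : ℝ) : ℂ) with hw
  set s : ℝ := (r' - r) / 2 with hs
  have hs0 : 0 < s := by rw [hs]; linarith
  have hdist : dist z w = (r + r') / 2 := by
    rw [hw, dist_eq_norm]
    have : z - (z + (((r + r') / 2 : ℝ) : ℂ)) = -(((r + r') / 2 : ℝ) : ℂ) := by ring
    rw [this, norm_neg, Complex.norm_real, Real.norm_eq_abs, abs_of_pos (by linarith)]
  have disj : Disjoint (Metric.ball z r) (Metric.ball w s) :=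
    ball_disjoint_ball (by rw [hdist, hs]; linarith)
  have hsub : Metric.ball z r ∪ Metric.ball w s ⊆ Metric.ball z r' := by
    apply union_subset (ball_subset_ball hrr.le)
    apply ball_subset_ball'
    rw [dist_comm, hdist, hs]; linarith
  have key : muphi φ (Metric.ball z r) + muphi φ (Metric.ball w s)
      ≤ muphi φ (Metric.ball z r') := by
    rw [← measure_union disj measurableSet_ball]
    exact measure_mono hsub
  calc muphi φ (Metric.ball z r)
      < muphi φ (Metric.ball z r) + muphi φ (Metric.ball w s) :=
        ENNReal.lt_add_right (muphi_ball_ne_top φ M ρ hdbl hρ z r)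
          (muphi_ball_ne_zero φ M ρ hdbl hρ w s hs0)
    _ ≤ muphi φ (Metric.ball z r') := key

private lemma rho_upper (φ : ℂ → ℝ) (M : ℝ)
    (hdbl : ∀ (z : ℂ) (r : ℝ), 0 < r →
      muphi φ (Metric.ball z (2 * r)) ≤ ENNReal.ofReal M * muphi φ (Metric.ball z r))
    (ρ : ℂ → ℝ) (hρ : ∀ z, 0 < ρ z ∧ muphi φ (Metric.ball z (ρ z)) = 1)
    (z : ℂ) : ρ z ≤ ‖z‖ + ρ 0 := by
  by_contra h
  push_neg at h
  have hρ0 := (hρ 0).1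
  have hr : 0 < ‖z‖ + ρ 0 := by positivity
  have hstrict := muphi_strict_mono φ M hdbl ρ hρ z (‖z‖ + ρ 0) (ρ z) hr h
  rw [(hρ z).2] at hstrict
  have hge : (1:ℝ≥0∞) ≤ muphi φ (Metric.ball z (‖z‖ + ρ 0)) := by
    rw [← (hρ 0).2]
    apply measure_mono
    intro x hx
    simp only [Metric.mem_ball, dist_eq_norm, sub_zero] at hx ⊢
    calc ‖x - z‖ ≤ ‖x‖ + ‖z‖ := norm_sub_le x z
      _ < ρ 0 + ‖z‖ := by linarith
      _ = ‖z‖ + ρ 0 := by ring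
  exact absurd (lt_of_le_of_lt hge hstrict) (lt_irrefl _)
private lemma rho_poly_lower (φ : ℂ → ℝ) (M : ℝ) (hM : 0 < M)
    (hdbl : ∀ (z : ℂ) (r : ℝ), 0 < r →
      muphi φ (Metric.ball z (2 * r)) ≤ ENNReal.ofReal M * muphi φ (Metric.ball z r))
    (ρ : ℂ → ℝ) (hρ : ∀ z, 0 < ρ z ∧ muphi φ (Metric.ball z (ρ z)) = 1) :
    ∃ (c : ℝ) (N : ℕ), 0 < c ∧ ∀ z : ℂ, c / (1 + ‖z‖) ^ N ≤ ρ z := by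
  classical
  have fin := muphi_ball_ne_top φ M ρ hdbl hρ
  have pos := muphi_ball_ne_zero φ M ρ hdbl hρ
  set ν : ℂ → ℝ → ℝ := fun z r => (muphi φ (Metric.ball z r)).toReal with hνdef
  have hρ0 : 0 < ρ 0 := (hρ 0).1
  have ν_one : ∀ z, ν z (ρ z) = 1 := fun z => by
    simp only [hνdef, (hρ z).2, ENNReal.toReal_one]
  have ν_le : ∀ (z z' : ℂ) (r r' : ℝ), Metric.ball z r ⊆ Metric.ball z' r' →
      ν z r ≤ ν z' r' := fun z z' r r' h =>
    ENNReal.toReal_mono (fin z' r') (measure_mono h)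
  have ν_mono : ∀ (z : ℂ) (r r' : ℝ), r ≤ r' → ν z r ≤ ν z r' := fun z r r' h =>
    ν_le z z r r' (ball_subset_ball h)
  have ν_pos : ∀ (z : ℂ) (r : ℝ), 0 < r → 0 < ν z r := fun z r hr =>
    ENNReal.toReal_pos (pos z r hr) (fin z r)
  have ν_dbl : ∀ (z : ℂ) (r : ℝ), 0 < r → ν z (2 * r) ≤ M * ν z r := by
    intro z r hr
    have h2 : (ENNReal.ofReal M * muphi φ (Metric.ball z r)).toReal = M * ν z r := by
      rw [ENNReal.toReal_mul, ENNReal.toReal_ofReal hM.le]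
    rw [hνdef]
    calc (muphi φ (Metric.ball z (2*r))).toReal
        ≤ (ENNReal.ofReal M * muphi φ (Metric.ball z r)).toReal :=
          ENNReal.toReal_mono (ENNReal.mul_ne_top ENNReal.ofReal_ne_top (fin z r)) (hdbl z r hr)
      _ = M * ν z r := h2
  have hM1 : 1 ≤ M := by
    have h1 : ν 0 (ρ 0) ≤ ν 0 (2 * ρ 0) := ν_mono 0 _ _ (by linarith)
    have h2 := ν_dbl 0 (ρ 0) hρ0
    rw [ν_one 0] at h1
    have h3 := ν_one 0
    nlinarith [ν_pos 0 (ρ 0) hρ0]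
  have ν_dbl_iter : ∀ (k : ℕ) (z : ℂ) (r : ℝ), 0 < r → ν z (2^k * r) ≤ M^k * ν z r := by
    intro k
    induction k with
    | zero => intro z r _; simp
    | succ k ih =>
      intro z r hr
      have h2 : (2:ℝ)^(k+1) * r = 2 * (2^k * r) := by ring
      rw [h2]
      calc ν z (2 * (2^k * r)) ≤ M * ν z (2^k * r) := ν_dbl z _ (by positivity)
        _ ≤ M * (M^k * ν z r) := by
            have := ih z r hr
            nlinarith
        _ = M^(k+1) * ν z r := by ring
  set θ : ℝ := 1 + 1/M^2 with hθdef
  have hθ : 1 < θ := by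
    rw [hθdef]
    have : 0 < 1/M^2 := by positivity
    linarith
  have ν_rev : ∀ (z : ℂ) (r : ℝ), 0 < r → θ * ν z r ≤ ν z (4 * r) := by
    intro z r hr
    set w : ℂ := z + ((3 * r : ℝ) : ℂ) with hw
    have hdist : dist z w = 3 * r := by
      rw [hw, dist_eq_norm]
      have : z - (z + ((3 * r : ℝ) : ℂ)) = -((3 * r : ℝ) : ℂ) := by ring
      rw [this, norm_neg, Complex.norm_real, Real.norm_eq_abs, abs_of_pos (by linarith)]
    have disj : Disjoint (Metric.ball z r) (Metric.ball w r) :=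
      ball_disjoint_ball (by rw [hdist]; linarith)
    have key : ν z r + ν w r ≤ ν z (4 * r) := by
      have hunion : muphi φ (Metric.ball z r) + muphi φ (Metric.ball w r)
          ≤ muphi φ (Metric.ball z (4 * r)) := by
        rw [← measure_union disj measurableSet_ball]
        apply measure_mono
        apply union_subset (ball_subset_ball (by linarith))
        apply ball_subset_ball'
        rw [dist_comm, hdist]; linarith
      calc ν z r + ν w r
          = (muphi φ (Metric.ball z r) + muphi φ (Metric.ball w r)).toReal := by
            rw [ENNReal.toReal_add (fin z r) (fin w r)]
        _ ≤ ν z (4 * r) := ENNReal.toReal_mono (fin z (4*r)) hunion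
    have hzw : ν z r ≤ M^2 * ν w r := by
      have h1 : ν z r ≤ ν w (4 * r) := by
        apply ν_le
        apply ball_subset_ball'
        rw [hdist]; linarith
      have h2 : ν w (4 * r) ≤ M * ν w (2 * r) := by
        have := ν_dbl w (2 * r) (by linarith)
        have h4 : (4:ℝ) * r = 2 * (2 * r) := by ring
        rw [h4]; exact this
      have h3 : ν w (2 * r) ≤ M * ν w r := ν_dbl w r hr
      nlinarith
    have hM2 : 0 < M^2 := by positivity
    have hwr : 0 < ν w r := ν_pos w r hr
    have : (1/M^2) * ν z r ≤ ν w r := by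
      rw [div_mul_eq_mul_div, div_le_iff₀ hM2]
      nlinarith
    rw [hθdef]
    nlinarith [ν_pos z r hr]
  have ν_rev_iter : ∀ (k : ℕ) (z : ℂ) (r : ℝ), 0 < r → θ^k * ν z r ≤ ν z (4^k * r) := by
    intro k
    induction k with
    | zero => intro z r _; simp
    | succ k ih =>
      intro z r hr
      have h2 : (4:ℝ)^(k+1) * r = 4 * (4^k * r) := by ring
      rw [h2]
      calc θ^(k+1) * ν z r = θ * (θ^k * ν z r) := by ring
        _ ≤ θ * ν z (4^k * r) := by
            have := ih z r hr
            nlinarith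
        _ ≤ ν z (4 * (4^k * r)) := ν_rev z _ (by positivity)
  obtain ⟨a, ha⟩ := pow_unbounded_of_one_lt M hθ
  -- the constant
  set c : ℝ := min 1 ((ρ 0 / (2 * (ρ 0 + 2)))^(2*a) / 4) with hcdef
  have hc : 0 < c := by
    apply lt_min one_pos
    positivity
  refine ⟨c, 2*a, hc, fun z => ?_⟩
  have hQ : (0:ℝ) < (1 + ‖z‖)^(2*a) := by positivity
  rw [div_le_iff₀ hQ]
  have hQ1 : (1:ℝ) ≤ (1 + ‖z‖)^(2*a) :=
    one_le_pow₀ (by simpa using norm_nonneg z)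
  have hρz := (hρ z).1
  set R : ℝ := ‖z‖ + ρ 0 + 1 with hRdef
  have hR1 : 1 ≤ R := by
    have := norm_nonneg z; rw [hRdef]; linarith
  have hex : ∃ k : ℕ, R ≤ 4^k * ρ z := by
    obtain ⟨k, hk⟩ := pow_unbounded_of_one_lt (R / ρ z) (by norm_num : (1:ℝ) < 4)
    exact ⟨k, by rw [div_lt_iff₀ hρz] at hk; linarith⟩
  obtain ⟨k, hk, hkmin⟩ : ∃ k : ℕ, R ≤ 4^k * ρ z ∧ ∀ l, l < k → ¬ R ≤ 4^l * ρ z :=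
    ⟨Nat.find hex, Nat.find_spec hex, fun l hl => Nat.find_min hex hl⟩
  rcases Nat.eq_zero_or_pos k with hk0 | hkpos
  · -- k = 0 : ρ z ≥ R ≥ 1
    rw [hk0] at hk
    simp only [pow_zero, one_mul] at hk
    have : (1:ℝ) ≤ ρ z := le_trans hR1 hk
    calc c ≤ 1 := min_le_left _ _
      _ ≤ ρ z * (1 + ‖z‖)^(2*a) := by nlinarith
  · obtain ⟨k', hk'eq⟩ := Nat.exists_eq_succ_of_ne_zero (Nat.pos_iff_ne_zero.mp hkpos)
    have hk'min : ¬ R ≤ 4^k' * ρ z := hkmin k' (by omega)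
    push_neg at hk'min
    -- growth lower bound : θ^k' ≤ ν z R
    have hgrow : θ^k' ≤ ν z R := by
      calc θ^k' = θ^k' * ν z (ρ z) := by rw [ν_one]; ring
        _ ≤ ν z (4^k' * ρ z) := ν_rev_iter k' z (ρ z) hρz
        _ ≤ ν z R := ν_mono z _ _ hk'min.le
    -- upper bound : ν z R ≤ M^m
    have hex2 : ∃ m : ℕ, ‖z‖ + R ≤ 2^m * ρ 0 := by
      obtain ⟨m, hm⟩ := pow_unbounded_of_one_lt ((‖z‖ + R) / ρ 0) (by norm_num : (1:ℝ) < 2)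
      exact ⟨m, by rw [div_lt_iff₀ hρ0] at hm; linarith⟩
    obtain ⟨m, hm, hmmin⟩ : ∃ m : ℕ, ‖z‖ + R ≤ 2^m * ρ 0 ∧ ∀ l, l < m → ¬ ‖z‖ + R ≤ 2^l * ρ 0 :=
      ⟨Nat.find hex2, Nat.find_spec hex2, fun l hl => Nat.find_min hex2 hl⟩
    have hupper : ν z R ≤ M^m := by
      calc ν z R ≤ ν 0 (‖z‖ + R) := by
            apply ν_le
            intro x hx
            simp only [Metric.mem_ball, dist_eq_norm, sub_zero] at hx ⊢
            calc ‖x‖ ≤ ‖x - z‖ + ‖z‖ := by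
                  simpa using norm_add_le (x - z) z
              _ < R + ‖z‖ := by linarith
              _ = ‖z‖ + R := by ring
        _ ≤ ν 0 (2^m * ρ 0) := ν_mono 0 _ _ hm
        _ ≤ M^m * ν 0 (ρ 0) := ν_dbl_iter m 0 (ρ 0) hρ0
        _ = M^m := by rw [ν_one]; ring
    -- m is positive, with minimality bound
    have hmpos : m ≠ 0 := by
      intro h0
      rw [h0] at hm
      simp only [pow_zero, one_mul] at hm
      have := norm_nonneg z
      rw [hRdef] at hm; linarith
    obtain ⟨m', hm'eq⟩ := Nat.exists_eq_succ_of_ne_zero hmpos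
    have hm'min : ¬ ‖z‖ + R ≤ 2^m' * ρ 0 := hmmin m' (by omega)
    push_neg at hm'min
    have h2m : (2:ℝ)^m ≤ 2 * (‖z‖ + R) / ρ 0 := by
      rw [hm'eq, pow_succ]
      rw [le_div_iff₀ hρ0]
      nlinarith
    -- k' ≤ a * m
    have hkm : k' ≤ a * m := by
      have h1 : θ^k' ≤ M^m := le_trans hgrow hupper
      have h2 : M^m ≤ (θ^a)^m := pow_le_pow_left₀ hM.le ha.le m
      rw [← pow_mul] at h2
      exact (pow_le_pow_iff_right₀ hθ).mp (le_trans h1 h2)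
    -- collect the numeric bounds
    set Q : ℝ := (1 + ‖z‖)^(2*a) with hQdef
    set D : ℝ := (2 * (ρ 0 + 2) / ρ 0)^(2*a) with hDdef
    have hD : 0 < D := by positivity
    have h4k : (4:ℝ)^k' ≤ D * Q := by
      have e1 : (4:ℝ)^k' ≤ (4:ℝ)^(a*m) :=
        pow_le_pow_right₀ (by norm_num) hkm
      have e2 : (4:ℝ)^(a*m) = ((2:ℝ)^m)^(2*a) := by
        rw [show (4:ℝ) = 2^2 by norm_num, ← pow_mul, ← pow_mul]
        congr 1
        ring
      have e3 : ((2:ℝ)^m)^(2*a) ≤ (2 * (‖z‖ + R) / ρ 0)^(2*a) :=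
        pow_le_pow_left₀ (by positivity) h2m _
      have e4 : (2 * (‖z‖ + R) / ρ 0)^(2*a) ≤ D * Q := by
        rw [hDdef, hQdef, ← mul_pow]
        apply pow_le_pow_left₀ (by positivity)
        rw [div_mul_eq_mul_div, div_le_div_iff₀ hρ0 hρ0]
        have hnz := norm_nonneg z
        rw [hRdef]
        nlinarith [mul_nonneg hnz hρ0.le]
      calc (4:ℝ)^k' ≤ (4:ℝ)^(a*m) := e1
        _ = ((2:ℝ)^m)^(2*a) := e2
        _ ≤ (2 * (‖z‖ + R) / ρ 0)^(2*a) := e3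
        _ ≤ D * Q := e4
    -- from hk : R ≤ 4^k * ρ z = 4 * 4^k' * ρ z ≤ 4 * D * Q * ρ z
    have hfinal : 1 ≤ 4 * D * Q * ρ z := by
      have h1 : R ≤ 4 * ((4:ℝ)^k' * ρ z) := by
        rw [hk'eq, pow_succ] at hk
        calc R ≤ 4^k' * 4 * ρ z := hk
          _ = 4 * ((4:ℝ)^k' * ρ z) := by ring
      have h2 : 4 * ((4:ℝ)^k' * ρ z) ≤ 4 * (D * Q * ρ z) := by
        have := mul_le_mul_of_nonneg_right h4k hρz.le
        linarith
      calc (1:ℝ) ≤ R := hR1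
        _ ≤ 4 * (D * Q * ρ z) := le_trans h1 h2
        _ = 4 * D * Q * ρ z := by ring
    -- conclude : c ≤ ρ z * Q
    have hcD : c ≤ 1 / (4 * D) := by
      have : (ρ 0 / (2 * (ρ 0 + 2)))^(2*a) = 1 / D := by
        rw [hDdef, one_div, ← inv_pow, inv_div]
      calc c ≤ (ρ 0 / (2 * (ρ 0 + 2)))^(2*a) / 4 := min_le_right _ _
        _ = (1/D) / 4 := by rw [this]
        _ = 1 / (4 * D) := by ring
    have hQ0 : 0 < Q := hQ
    calc c ≤ 1 / (4 * D) := hcD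
      _ ≤ ρ z * Q := by
          rw [div_le_iff₀ (by positivity : (0:ℝ) < 4 * D)]
          calc (1:ℝ) ≤ 4 * D * Q * ρ z := hfinal
            _ = ρ z * Q * (4 * D) := by ring
private lemma rpow_add_le_two_rpow (x y p : ℝ) (hx : 0 ≤ x) (hy : 0 ≤ y) (hp : 0 ≤ p) :
    (x + y) ^ p ≤ 2 ^ p * (x ^ p + y ^ p) := by
  have hmax : x + y ≤ 2 * max x y := by
    rcases le_total x y with h | h
    · rw [max_eq_right h]; linarith
    · rw [max_eq_left h]; linarith
  have h0 : (0:ℝ) ≤ max x y := le_trans hx (le_max_left _ _)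
  calc (x + y) ^ p ≤ (2 * max x y) ^ p :=
        Real.rpow_le_rpow (by linarith) hmax hp
    _ = 2 ^ p * (max x y) ^ p := Real.mul_rpow (by norm_num) h0
    _ ≤ 2 ^ p * (x ^ p + y ^ p) := by
        apply mul_le_mul_of_nonneg_left _ (Real.rpow_nonneg (by norm_num) p)
        rcases le_total x y with h | h
        · rw [max_eq_right h]
          have : (0:ℝ) ≤ x ^ p := Real.rpow_nonneg hx p
          linarith
        · rw [max_eq_left h]
          have : (0:ℝ) ≤ y ^ p := Real.rpow_nonneg hy p
          linarith

private lemma pow_div_factorial_le_exp (u : ℝ) (hu : 0 ≤ u) (n : ℕ) :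
    u ^ n / n.factorial ≤ Real.exp u := by
  calc u ^ n / n.factorial ≤ ∑ i ∈ Finset.range (n+1), u ^ i / i.factorial := by
        apply Finset.single_le_sum (f := fun i => u ^ i / (i.factorial : ℝ))
          (fun i _ => by positivity) (Finset.self_mem_range_succ n)
    _ ≤ Real.exp u := Real.sum_le_exp_of_nonneg hu (n+1)

private lemma key_decay (N : ℕ) (p ε cρ rS : ℝ) (hp : 0 < p) (hε : 0 < ε)
    (hcρ : 0 < cρ) (hrS : 0 ≤ rS) :
    ∃ C : ℝ, 0 < C ∧ ∀ t : ℝ, 0 ≤ t →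
      ((1+t)^N) ^ p * (1+t)^3 * Real.exp (-((max (t - rS) 0 / cρ) ^ ε * p)) ≤ C := by
  obtain ⟨n, hn⟩ := exists_nat_ge ((N * p + 3) / ε)
  have hNp : (N:ℝ) * p + 3 ≤ ε * n := by
    rw [div_le_iff₀ hε] at hn; linarith
  set T : ℝ := 2 * rS + 2 with hT
  have hT2 : 2 ≤ T := by linarith
  set C₅ : ℝ := ((1+T)^N) ^ p * (1+T)^3 with hC₅
  have hC₅pos : 0 < C₅ := by positivity
  set CL : ℝ := ((2:ℝ)^N) ^ p * 8 * ((2*cρ) ^ (ε * n) / p^n * n.factorial) with hCL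
  have hCLpos : 0 < CL := by positivity
  refine ⟨max C₅ CL, lt_max_of_lt_left hC₅pos, fun t ht => ?_⟩
  have humax : 0 ≤ max (t - rS) 0 / cρ := div_nonneg (le_max_right _ _) hcρ.le
  have hu0 : 0 ≤ (max (t - rS) 0 / cρ) ^ ε * p :=
    mul_nonneg (Real.rpow_nonneg humax ε) hp.le
  by_cases htT : t ≤ T
  · -- small t
    have h1 : ((1+t)^N:ℝ) ^ p * (1+t)^3 ≤ C₅ := by
      rw [hC₅]
      apply mul_le_mul _ (pow_le_pow_left₀ (by linarith) (by linarith) 3)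
        (by positivity) (by positivity)
      exact Real.rpow_le_rpow (by positivity)
        (pow_le_pow_left₀ (by linarith) (by linarith) N) hp.le
    have h2 : Real.exp (-((max (t - rS) 0 / cρ) ^ ε * p)) ≤ 1 :=
      Real.exp_le_one_iff.mpr (by linarith)
    calc ((1+t)^N:ℝ)^p * (1+t)^3 * Real.exp (-((max (t - rS) 0 / cρ) ^ ε * p))
        ≤ C₅ * 1 := mul_le_mul h1 h2 (Real.exp_pos _).le hC₅pos.le
      _ ≤ max C₅ CL := by rw [mul_one]; exact le_max_left _ _
  · -- large t
    push_neg at htT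
    have ht1 : (1:ℝ) ≤ t := by linarith
    have htrS : 0 ≤ t - rS := by linarith
    have hmax : max (t - rS) 0 = t - rS := max_eq_left htrS
    set u : ℝ := (max (t - rS) 0 / cρ) ^ ε * p with hu
    -- step 1 : ((1+t)^N)^p * (1+t)^3 ≤ C₆ * t ^ (ε * n)
    have hX : ((1+t)^N:ℝ) ^ p * (1+t)^3 ≤ ((2:ℝ)^N) ^ p * 8 * t ^ (ε * (n:ℝ)) := by
      have e1 : ((1+t)^N:ℝ) ^ p ≤ ((2:ℝ)^N) ^ p * (t^N) ^ p := by
        calc ((1+t)^N:ℝ) ^ p ≤ ((2*t)^N:ℝ) ^ p :=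
              Real.rpow_le_rpow (by positivity)
                (pow_le_pow_left₀ (by linarith) (by linarith) N) hp.le
          _ = ((2:ℝ)^N * t^N) ^ p := by rw [mul_pow]
          _ = ((2:ℝ)^N) ^ p * (t^N) ^ p := Real.mul_rpow (by positivity) (by positivity)
      have e2 : ((1:ℝ)+t)^3 ≤ 8 * t^3 := by
        calc ((1:ℝ)+t)^3 ≤ (2*t)^3 := pow_le_pow_left₀ (by linarith) (by linarith) 3
          _ = 8 * t^3 := by ring
      have e3 : (t^N:ℝ) ^ p * t^3 ≤ t ^ (ε * (n:ℝ)) := by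
        have ht0 : (0:ℝ) < t := by linarith
        have r1 : (t^N:ℝ) ^ p = t ^ ((N:ℝ) * p) := by
          rw [← Real.rpow_natCast t N, ← Real.rpow_mul ht0.le]
        have r2 : (t:ℝ)^(3:ℕ) = t ^ ((3:ℕ):ℝ) := (Real.rpow_natCast t 3).symm
        rw [r1, r2, ← Real.rpow_add ht0]
        apply Real.rpow_le_rpow_of_exponent_le ht1
        push_cast
        linarith
      calc ((1+t)^N:ℝ) ^ p * (1+t)^3
          ≤ (((2:ℝ)^N) ^ p * (t^N) ^ p) * (8 * t^3) := by
            apply mul_le_mul e1 e2 (by positivity) (by positivity)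
        _ = ((2:ℝ)^N) ^ p * 8 * ((t^N:ℝ) ^ p * t^3) := by ring
        _ ≤ ((2:ℝ)^N) ^ p * 8 * t ^ (ε * (n:ℝ)) := by
            apply mul_le_mul_of_nonneg_left e3 (by positivity)
    -- step 2 : t ^ (ε * n) ≤ (2cρ)^(ε n)/p^n * n! * exp u
    have hE : t ^ (ε * (n:ℝ)) ≤ (2*cρ) ^ (ε * (n:ℝ)) / p^n * n.factorial * Real.exp u := by
      have ht0 : (0:ℝ) < t := by linarith
      have hdiv : t / (2*cρ) ≤ (t - rS) / cρ := by
        rw [div_le_div_iff₀ (by positivity) hcρ]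
        nlinarith
      have hq : (t / (2*cρ)) ^ (ε * (n:ℝ)) ≤ ((t-rS)/cρ) ^ (ε * (n:ℝ)) :=
        Real.rpow_le_rpow (by positivity) hdiv (by positivity)
      have hsplit : t ^ (ε * (n:ℝ)) = (2*cρ) ^ (ε * (n:ℝ)) * (t / (2*cρ)) ^ (ε * (n:ℝ)) := by
        rw [← Real.mul_rpow (by positivity) (by positivity)]
        congr 1
        field_simp
      have hn_exp : ((t-rS)/cρ) ^ (ε * (n:ℝ)) ≤ n.factorial * Real.exp u / p^n := by
        have hb : (0:ℝ) ≤ (t-rS)/cρ := by positivity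
        have r3 : ((t-rS)/cρ) ^ (ε * (n:ℝ)) = (((t-rS)/cρ) ^ ε) ^ n := by
          rw [Real.rpow_mul hb, Real.rpow_natCast]
        rw [r3]
        have hupow : u ^ n = (((t-rS)/cρ) ^ ε) ^ n * p ^ n := by
          rw [hu, hmax, mul_pow]
        have := pow_div_factorial_le_exp u (by rw [hu]; exact hu0) n
        rw [div_le_iff₀ (by positivity : (0:ℝ) < (n.factorial:ℝ))] at this
        rw [hupow] at this
        have hppow : (0:ℝ) < p ^ n := by positivity
        rw [le_div_iff₀ hppow]
        linarith
      calc t ^ (ε * (n:ℝ)) = (2*cρ) ^ (ε * (n:ℝ)) * (t / (2*cρ)) ^ (ε * (n:ℝ)) := hsplit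
        _ ≤ (2*cρ) ^ (ε * (n:ℝ)) * ((t-rS)/cρ) ^ (ε * (n:ℝ)) := by
            apply mul_le_mul_of_nonneg_left hq (by positivity)
        _ ≤ (2*cρ) ^ (ε * (n:ℝ)) * (n.factorial * Real.exp u / p^n) := by
            apply mul_le_mul_of_nonneg_left hn_exp (by positivity)
        _ = (2*cρ) ^ (ε * (n:ℝ)) / p^n * n.factorial * Real.exp u := by ring
    -- combine
    have hcomb : ((1+t)^N:ℝ) ^ p * (1+t)^3 ≤ CL * Real.exp u := by
      calc ((1+t)^N:ℝ) ^ p * (1+t)^3 ≤ ((2:ℝ)^N) ^ p * 8 * t ^ (ε * (n:ℝ)) := hX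
        _ ≤ ((2:ℝ)^N) ^ p * 8 * ((2*cρ) ^ (ε * (n:ℝ)) / p^n * n.factorial * Real.exp u) := by
            apply mul_le_mul_of_nonneg_left hE (by positivity)
        _ = CL * Real.exp u := by rw [hCL]; push_cast; ring
    calc ((1+t)^N:ℝ)^p * (1+t)^3 * Real.exp (-u)
        ≤ CL * Real.exp u * Real.exp (-u) := by
          apply mul_le_mul_of_nonneg_right hcomb (Real.exp_pos _).le
      _ = CL := by rw [mul_assoc, ← Real.exp_add]; simp
      _ ≤ max C₅ CL := le_max_right _ _
set_option maxHeartbeats 1000000 in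
/-- If `f ∈ L^∞` has compact support and `(g_j)` is a bounded sequence in
`F^p_φ` converging to `0` uniformly on compact sets, then `‖f g_j - P(f g_j)‖_{p,φ} → 0`. -/
theorem stmt11
    (φ : ℂ → ℝ) (hφ : ContDiff ℝ 2 φ) (hΔpos : ∀ z, 0 ≤ lap φ z)
    (hΔnz : ∃ z, lap φ z ≠ 0)
    (hdbl : ∃ M : ℝ, 0 < M ∧ ∀ (z : ℂ) (r : ℝ), 0 < r →
      muphi φ (Metric.ball z (2 * r)) ≤ ENNReal.ofReal M * muphi φ (Metric.ball z r))
    (ρ : ℂ → ℝ) (hρ : ∀ z, 0 < ρ z ∧ muphi φ (Metric.ball z (ρ z)) = 1)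
    (K : ℂ → ℂ → ℂ)
    (hK_ent : ∀ z, Differentiable ℂ fun w => K w z)
    (hK_L2 : ∀ z, (∫⁻ w : ℂ, ENNReal.ofReal
      (‖K w z‖ ^ (2 : ℕ) * Real.exp (-(2 * φ w)))) < ⊤)
    (hK_conj : ∀ z w, K z w = starRingEnd ℂ (K w z))
    (hK_diag : ∀ z, (K z z).im = 0 ∧ 0 < (K z z).re)
    (hK_repro : ∀ f : ℂ → ℂ, Differentiable ℂ f →
      (∫⁻ w : ℂ, ENNReal.ofReal
        (‖f w‖ ^ (2 : ℕ) * Real.exp (-(2 * φ w)))) < ⊤ →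
      ∀ z : ℂ, f z = ∫ w : ℂ, K z w * f w * (Real.exp (-(2 * φ w)) : ℂ))
    (hK_up : ∃ C : ℝ, 0 < C ∧ ∃ ε : ℝ, 0 < ε ∧ ∀ w z : ℂ,
      ‖K w z‖ ≤ C * (Real.exp (φ w + φ z) / (ρ w * ρ z)) *
        Real.exp (-((‖z - w‖ / ρ z) ^ ε)))
    (p : ℝ) (hp : 0 < p)
    (f : ℂ → ℂ) (hf_meas : Measurable f) (hf_bdd : ∃ M : ℝ, ∀ z, ‖f z‖ ≤ M)
    (hf_supp : HasCompactSupport f)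
    (g : ℕ → ℂ → ℂ) (hg_ent : ∀ j, Differentiable ℂ (g j))
    (hg_bdd : ∃ B : ℝ, ∀ j, (∫⁻ z : ℂ, ENNReal.ofReal
      (‖g j z‖ ^ p * Real.exp (-(p * φ z)))) ≤ ENNReal.ofReal B)
    (hg_unif : ∀ S : Set ℂ, IsCompact S → TendstoUniformlyOn g 0 atTop S) :
    Tendsto (fun j => ∫⁻ z : ℂ, ENNReal.ofReal
        (‖f z * g j z - bproj K φ (fun w => f w * g j w) z‖ ^ p *
          Real.exp (-(p * φ z)))) atTop (nhds 0) := by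
  classical
  obtain ⟨M0, hM0pos, hdbl⟩ := hdbl
  obtain ⟨CK, hCK, ε, hε, hKup⟩ := hK_up
  -- support data
  set S : Set ℂ := tsupport f with hSdef
  have hScomp : IsCompact S := hf_supp
  have hSmeas : MeasurableSet S := (isClosed_tsupport f).measurableSet
  obtain ⟨rS', hrS'⟩ := hScomp.isBounded.subset_closedBall 0
  set rS : ℝ := max rS' 0 with hrSdef
  have hrS0 : (0:ℝ) ≤ rS := le_max_right _ _
  have hSsub : S ⊆ Metric.closedBall 0 rS :=
    hrS'.trans (Metric.closedBall_subset_closedBall (le_max_left _ _))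
  have hSvol : volume S < ⊤ :=
    lt_of_le_of_lt (measure_mono hSsub) measure_closedBall_lt_top
  have hSnorm : ∀ w ∈ S, ‖w‖ ≤ rS := fun w hw => by
    have := hSsub hw
    simpa [Metric.mem_closedBall, dist_zero_right] using this
  -- f bound
  obtain ⟨M1, hM1⟩ := hf_bdd
  set Mf : ℝ := max M1 0 with hMfdef
  have hMf : ∀ z, ‖f z‖ ≤ Mf := fun z => le_trans (hM1 z) (le_max_left _ _)
  have hMf0 : (0:ℝ) ≤ Mf := le_max_right _ _
  -- rho bounds
  have hρpos : ∀ z, 0 < ρ z := fun z => (hρ z).1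
  obtain ⟨c, N, hc, hlow⟩ := rho_poly_lower φ M0 hM0pos hdbl ρ hρ
  have hup : ∀ z, ρ z ≤ ‖z‖ + ρ 0 := rho_upper φ M0 hdbl ρ hρ
  set ρmax : ℝ := rS + ρ 0 with hρmaxdef
  have hρmax0 : 0 < ρmax := by have := hρpos 0; rw [hρmaxdef]; linarith
  have hρmaxS : ∀ w ∈ S, ρ w ≤ ρmax := fun w hw => by
    have h1 := hup w
    have h2 := hSnorm w hw
    rw [hρmaxdef]; linarith
  set ρmin : ℝ := c / (1 + rS)^N with hρmindef
  have hρmin0 : 0 < ρmin := by rw [hρmindef]; positivity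
  have hρminS : ∀ w ∈ S, ρmin ≤ ρ w := fun w hw => by
    have h1 := hlow w
    have h2 := hSnorm w hw
    have h3 : c / (1 + rS)^N ≤ c / (1 + ‖w‖)^N := by
      apply div_le_div_of_nonneg_left hc.le (by positivity)
      exact pow_le_pow_left₀ (by positivity) (by linarith) N
    rw [hρmindef]; linarith
  -- bounds for the exponential weights on the closed ball
  have hcont : Continuous φ := hφ.continuous
  obtain ⟨E1', hE1'⟩ := (isCompact_closedBall (0:ℂ) rS).exists_bound_of_continuousOn
    (Continuous.continuousOn (Real.continuous_exp.comp hcont.neg))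
  set E1 : ℝ := max E1' 1 with hE1def
  have hE1pos : (0:ℝ) < E1 := lt_of_lt_of_le one_pos (le_max_right _ _)
  have hE1 : ∀ w ∈ Metric.closedBall (0:ℂ) rS, Real.exp (-(φ w)) ≤ E1 := fun w hw => by
    have := hE1' w hw
    rw [Real.norm_eq_abs] at this
    exact le_trans (le_trans (le_abs_self _) this) (le_max_left _ _)
  obtain ⟨E2', hE2'⟩ := (isCompact_closedBall (0:ℂ) rS).exists_bound_of_continuousOn
    (Continuous.continuousOn (Real.continuous_exp.comp (continuous_const.mul hcont).neg))
  set E2 : ℝ := max E2' 1 with hE2def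
  have hE2pos : (0:ℝ) < E2 := lt_of_lt_of_le one_pos (le_max_right _ _)
  have hE2 : ∀ w ∈ Metric.closedBall (0:ℂ) rS, Real.exp (-(p * φ w)) ≤ E2 := fun w hw => by
    have := hE2' w hw
    rw [Real.norm_eq_abs] at this
    exact le_trans (le_trans (le_abs_self _) this) (le_max_left _ _)
  -- volume of the closed ball
  set VS : ℝ := (volume (Metric.closedBall (0:ℂ) rS)).toReal with hVSdef
  have hVS0 : 0 ≤ VS := ENNReal.toReal_nonneg
  -- main constants
  set C₃ : ℝ := CK * Mf * E1 / ρmin * VS with hC₃def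
  have hC₃0 : 0 ≤ C₃ := by rw [hC₃def]; positivity
  obtain ⟨C₄, hC₄, hkey⟩ := key_decay N p ε ρmax rS hp hε hρmax0 hrS0
  set A₁ : ℝ := 2^p * Mf^p * E2 with hA₁def
  have hA₁0 : 0 ≤ A₁ := by
    rw [hA₁def]
    exact mul_nonneg (mul_nonneg (Real.rpow_nonneg (by norm_num) p)
      (Real.rpow_nonneg hMf0 p)) hE2pos.le
  set B₂ : ℝ := 2^p * (C₃^p * (1/c)^p * C₄) with hB₂def
  have hB₂0 : 0 ≤ B₂ := by
    rw [hB₂def]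
    exact mul_nonneg (Real.rpow_nonneg (by norm_num) p)
      (mul_nonneg (mul_nonneg (Real.rpow_nonneg hC₃0 p)
        (Real.rpow_nonneg (by positivity) p)) hC₄.le)
  -- the decay factor
  set dec : ℂ → ℝ := fun z => Real.exp (-((max (‖z‖ - rS) 0 / ρmax) ^ ε)) with hdecdef
  have hdec0 : ∀ z, 0 < dec z := fun z => Real.exp_pos _
  -- the dominating function
  set G : ℂ → ℝ := fun z =>
    A₁ * (Metric.closedBall (0:ℂ) rS).indicator (fun _ => (1:ℝ)) z
      + B₂ * (1 + ‖z‖) ^ (-(3:ℝ)) with hGdef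
  have hG0 : ∀ z, 0 ≤ G z := fun z => by
    rw [hGdef]
    apply add_nonneg
    · exact mul_nonneg hA₁0 (Set.indicator_nonneg (fun _ _ => zero_le_one) z)
    · exact mul_nonneg hB₂0 (Real.rpow_nonneg (by positivity) _)
  have hGint : Integrable G := by
    apply Integrable.add
    · apply Integrable.const_mul
      rw [integrable_indicator_iff measurableSet_closedBall]
      exact integrableOn_const measure_closedBall_lt_top.ne
    · apply Integrable.const_mul
      apply integrable_one_add_norm
      rw [Complex.finrank_real_complex]; norm_num
  have hIG : (∫⁻ z : ℂ, ENNReal.ofReal (G z)) < ⊤ := hGint.lintegral_lt_top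
  -- the pointwise inequality
  have claim : ∀ (j : ℕ) (δ : ℝ), 0 < δ → (∀ w ∈ S, ‖g j w‖ ≤ δ) → ∀ z : ℂ,
      ‖f z * g j z - bproj K φ (fun w => f w * g j w) z‖ ^ p *
        Real.exp (-(p * φ z)) ≤ δ ^ p * G z := by
    intro j δ hδ hj z
    set A : ℝ := Mf * δ * S.indicator (fun _ => (1:ℝ)) z with hAdef
    set B : ℝ := δ * (C₃ * Real.exp (φ z) * (ρ z)⁻¹ * dec z) with hBdef
    have hA0 : 0 ≤ A := by
      rw [hAdef]
      exact mul_nonneg (mul_nonneg hMf0 hδ.le) (Set.indicator_nonneg (fun _ _ => zero_le_one) z)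
    have hB0 : 0 ≤ B := by
      rw [hBdef]
      exact mul_nonneg hδ.le (mul_nonneg (mul_nonneg (mul_nonneg hC₃0 (Real.exp_pos _).le)
        (inv_nonneg.mpr (hρpos z).le)) (hdec0 z).le)
    -- bound on |f z * g j z|
    have hA : ‖f z * g j z‖ ≤ A := by
      by_cases hzS : z ∈ S
      · rw [hAdef, Set.indicator_of_mem hzS, mul_one, norm_mul]
        exact mul_le_mul (hMf z) (hj z hzS) (norm_nonneg _) hMf0
      · have hfz : f z = 0 := image_eq_zero_of_notMem_tsupport hzS
        rw [hAdef, Set.indicator_of_notMem hzS, mul_zero, hfz]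
        simp
    -- bound on |bproj|
    have hB : ‖bproj K φ (fun w => f w * g j w) z‖ ≤ B := by
      set Q : ℝ := CK * Mf * δ * E1 / ρmin * (Real.exp (φ z) * (ρ z)⁻¹ * dec z) with hQdef
      have hQ0 : 0 ≤ Q := by
        rw [hQdef]
        apply mul_nonneg (by positivity)
        exact mul_nonneg (mul_nonneg (Real.exp_pos _).le (inv_nonneg.mpr (hρpos z).le))
          (hdec0 z).le
      have hFb : ∀ w : ℂ, ‖K z w * (f w * g j w) * ((Real.exp (-(2 * φ w)) : ℝ) : ℂ)‖
          ≤ S.indicator (fun _ => Q) w := by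
        intro w
        by_cases hwS : w ∈ S
        · rw [Set.indicator_of_mem hwS]
          have hwcb : w ∈ Metric.closedBall (0:ℂ) rS := hSsub hwS
          have hnormeq : ‖K z w * (f w * g j w) * ((Real.exp (-(2 * φ w)) : ℝ) : ℂ)‖
              = ‖K z w‖ * (‖f w‖ * ‖g j w‖)
                * Real.exp (-(2 * φ w)) := by
            rw [norm_mul, norm_mul, Complex.norm_real, Real.norm_eq_abs,
              abs_of_pos (Real.exp_pos _)]
            simp
          rw [hnormeq]
          have hK1 : ‖K z w‖ ≤ CK * (Real.exp (φ z + φ w) / (ρ z * ρ w)) *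
              Real.exp (-((‖w - z‖ / ρ w) ^ ε)) := hKup z w
          have hdecw : Real.exp (-((‖w - z‖ / ρ w) ^ ε)) ≤ dec z := by
            simp only [hdecdef]
            rw [Real.exp_le_exp]
            apply neg_le_neg
            apply Real.rpow_le_rpow (div_nonneg (le_max_right _ _) hρmax0.le) _ hε.le
            have h1 : max (‖z‖ - rS) 0 ≤ ‖w - z‖ := by
              apply max_le _ (norm_nonneg _)
              have h2 : ‖z‖ - ‖w‖ ≤ ‖z - w‖ := norm_sub_norm_le z w
              have h3 : ‖z - w‖ = ‖w - z‖ := norm_sub_rev z w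
              have h4 := hSnorm w hwS
              linarith
            have h5 : ‖w - z‖ = ‖w - z‖ := rfl
            rw [h5]
            exact div_le_div₀ (norm_nonneg _) h1 (hρpos w) (hρmaxS w hwS)
          have hK2 : ‖K z w‖ ≤ CK * (Real.exp (φ z + φ w) / (ρ z * ρ w)) * dec z := by
            calc ‖K z w‖
                ≤ CK * (Real.exp (φ z + φ w) / (ρ z * ρ w)) *
                  Real.exp (-((‖w - z‖ / ρ w) ^ ε)) := hK1
              _ ≤ CK * (Real.exp (φ z + φ w) / (ρ z * ρ w)) * dec z := by
                  apply mul_le_mul_of_nonneg_left hdecw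
                  exact mul_nonneg hCK.le (div_nonneg (Real.exp_pos _).le
                    (mul_nonneg (hρpos z).le (hρpos w).le))
          have hfg : ‖f w‖ * ‖g j w‖ ≤ Mf * δ :=
            mul_le_mul (hMf w) (hj w hwS) (norm_nonneg _) hMf0
          have step1 : ‖K z w‖ * (‖f w‖ * ‖g j w‖)
              * Real.exp (-(2 * φ w))
              ≤ (CK * (Real.exp (φ z + φ w) / (ρ z * ρ w)) * dec z) * (Mf * δ)
                * Real.exp (-(2 * φ w)) := by
            apply mul_le_mul_of_nonneg_right _ (Real.exp_pos _).le
            apply mul_le_mul hK2 hfg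
              (mul_nonneg (norm_nonneg _) (norm_nonneg _))
              (mul_nonneg (mul_nonneg hCK.le (div_nonneg (Real.exp_pos _).le
                (mul_nonneg (hρpos z).le (hρpos w).le))) (hdec0 z).le)
          have step2 : (CK * (Real.exp (φ z + φ w) / (ρ z * ρ w)) * dec z) * (Mf * δ)
              * Real.exp (-(2 * φ w))
              = (CK * Mf * δ) * (Real.exp (φ z) * (ρ z)⁻¹) * dec z
                * (Real.exp (-(φ w)) * (ρ w)⁻¹) := by
            have hexpw : Real.exp (φ w) * Real.exp (-(2 * φ w)) = Real.exp (-(φ w)) := by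
              rw [← Real.exp_add]; congr 1; ring
            rw [Real.exp_add, ← hexpw]
            ring
          have step3 : (CK * Mf * δ) * (Real.exp (φ z) * (ρ z)⁻¹) * dec z
                * (Real.exp (-(φ w)) * (ρ w)⁻¹)
              ≤ (CK * Mf * δ) * (Real.exp (φ z) * (ρ z)⁻¹) * dec z * (E1 * ρmin⁻¹) := by
            apply mul_le_mul_of_nonneg_left
            · apply mul_le_mul (hE1 w hwcb)
              · exact inv_anti₀ hρmin0 (hρminS w hwS)
              · exact inv_nonneg.mpr (hρpos w).le
              · exact hE1pos.le
            · apply mul_nonneg (mul_nonneg (by positivity)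
                (mul_nonneg (Real.exp_pos _).le (inv_nonneg.mpr (hρpos z).le))) (hdec0 z).le
          calc ‖K z w‖ * (‖f w‖ * ‖g j w‖)
              * Real.exp (-(2 * φ w))
              ≤ (CK * (Real.exp (φ z + φ w) / (ρ z * ρ w)) * dec z) * (Mf * δ)
                * Real.exp (-(2 * φ w)) := step1
            _ = (CK * Mf * δ) * (Real.exp (φ z) * (ρ z)⁻¹) * dec z
                * (Real.exp (-(φ w)) * (ρ w)⁻¹) := step2
            _ ≤ (CK * Mf * δ) * (Real.exp (φ z) * (ρ z)⁻¹) * dec z * (E1 * ρmin⁻¹) := step3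
            _ = Q := by rw [hQdef]; ring
        · rw [Set.indicator_of_notMem hwS]
          have hfw : f w = 0 := image_eq_zero_of_notMem_tsupport hwS
          rw [hfw]
          simp
      have hQint : Integrable (S.indicator fun _ => Q) := by
        rw [integrable_indicator_iff hSmeas]
        exact integrableOn_const hSvol.ne
      calc ‖bproj K φ (fun w => f w * g j w) z‖
          = ‖∫ w : ℂ, K z w * (f w * g j w) * ((Real.exp (-(2 * φ w)) : ℝ) : ℂ)‖ := by
            rfl
        _ ≤ ∫ w : ℂ, ‖K z w * (f w * g j w) * ((Real.exp (-(2 * φ w)) : ℝ) : ℂ)‖ :=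
            norm_integral_le_integral_norm _
        _ ≤ ∫ w : ℂ, S.indicator (fun _ => Q) w :=
            integral_mono_of_nonneg (Filter.Eventually.of_forall fun w => norm_nonneg _)
              hQint (Filter.Eventually.of_forall hFb)
        _ = (volume S).toReal * Q := by
            rw [integral_indicator_const _ hSmeas, smul_eq_mul, Measure.real]
        _ ≤ VS * Q := by
            apply mul_le_mul_of_nonneg_right _ hQ0
            rw [hVSdef]
            exact ENNReal.toReal_mono measure_closedBall_lt_top.ne (measure_mono hSsub)
        _ = B := by rw [hQdef, hBdef, hC₃def]; ring
    -- now combine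
    have habs : ‖f z * g j z - bproj K φ (fun w => f w * g j w) z‖ ≤ A + B := by
      calc ‖f z * g j z - bproj K φ (fun w => f w * g j w) z‖
          ≤ ‖f z * g j z‖ + ‖bproj K φ (fun w => f w * g j w) z‖ := by
            exact norm_sub_le _ _
        _ ≤ A + B := add_le_add hA hB
    have hrp : ‖f z * g j z - bproj K φ (fun w => f w * g j w) z‖ ^ p
        ≤ 2^p * (A^p + B^p) := by
      calc ‖f z * g j z - bproj K φ (fun w => f w * g j w) z‖ ^ p
          ≤ (A + B) ^ p := Real.rpow_le_rpow (norm_nonneg _) habs hp.le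
        _ ≤ 2^p * (A^p + B^p) := rpow_add_le_two_rpow A B p hA0 hB0 hp.le
    -- term 1
    have hT1 : A^p * Real.exp (-(p * φ z))
        ≤ Mf^p * δ^p * E2 * (Metric.closedBall (0:ℂ) rS).indicator (fun _ => (1:ℝ)) z := by
      by_cases hzS : z ∈ S
      · have hzcb : z ∈ Metric.closedBall (0:ℂ) rS := hSsub hzS
        rw [hAdef, Set.indicator_of_mem hzS, Set.indicator_of_mem hzcb, mul_one, mul_one]
        rw [Real.mul_rpow hMf0 hδ.le]
        apply mul_le_mul_of_nonneg_left (hE2 z hzcb)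
        exact mul_nonneg (Real.rpow_nonneg hMf0 p) (Real.rpow_nonneg hδ.le p)
      · rw [hAdef, Set.indicator_of_notMem hzS, mul_zero, Real.zero_rpow hp.ne', zero_mul]
        apply mul_nonneg (mul_nonneg (mul_nonneg (Real.rpow_nonneg hMf0 p)
          (Real.rpow_nonneg hδ.le p)) hE2pos.le)
        exact Set.indicator_nonneg (fun _ _ => zero_le_one) z
    -- term 2
    have hT2 : B^p * Real.exp (-(p * φ z))
        ≤ δ^p * (C₃^p * (1/c)^p * C₄ * (1 + ‖z‖) ^ (-(3:ℝ))) := by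
      have hinv0 : 0 ≤ (ρ z)⁻¹ := inv_nonneg.mpr (hρpos z).le
      have hx1 : 0 ≤ C₃ * Real.exp (φ z) := mul_nonneg hC₃0 (Real.exp_pos _).le
      have hx2 : 0 ≤ C₃ * Real.exp (φ z) * (ρ z)⁻¹ := mul_nonneg hx1 hinv0
      have hx3 : 0 ≤ C₃ * Real.exp (φ z) * (ρ z)⁻¹ * dec z := mul_nonneg hx2 (hdec0 z).le
      have hBp : B^p = δ^p * (C₃^p * (Real.exp (φ z))^p * ((ρ z)⁻¹)^p * (dec z)^p) := by
        rw [hBdef]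
        rw [Real.mul_rpow hδ.le hx3]
        rw [Real.mul_rpow hx2 (hdec0 z).le]
        rw [Real.mul_rpow hx1 hinv0]
        rw [Real.mul_rpow hC₃0 (Real.exp_pos _).le]
      have hcancel : (Real.exp (φ z))^p * Real.exp (-(p * φ z)) = 1 := by
        rw [← Real.exp_mul, ← Real.exp_add, show φ z * p + -(p * φ z) = 0 by ring,
          Real.exp_zero]
      have hρinv : ((ρ z)⁻¹)^p ≤ ((1/c) * (1 + ‖z‖)^N)^p := by
        apply Real.rpow_le_rpow (inv_nonneg.mpr (hρpos z).le) _ hp.le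
        have h0 : 0 < c / (1 + ‖z‖)^N := by positivity
        have h1 : 1/(ρ z) ≤ 1/(c / (1 + ‖z‖)^N) := one_div_le_one_div_of_le h0 (hlow z)
        rw [one_div_div] at h1
        calc (ρ z)⁻¹ = 1 / ρ z := (one_div _).symm
          _ ≤ (1 + ‖z‖)^N / c := h1
          _ = 1/c * (1 + ‖z‖)^N := by ring
      have hdecp : (dec z)^p = Real.exp (-((max (‖z‖ - rS) 0 / ρmax) ^ ε * p)) := by
        simp only [hdecdef]
        rw [← Real.exp_mul]
        congr 1
        ring
      have hkeyz : ((1 + ‖z‖)^N)^p * (dec z)^p ≤ C₄ * (1 + ‖z‖) ^ (-(3:ℝ)) := by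
        have hk := hkey ‖z‖ (norm_nonneg z)
        rw [hdecp]
        have h3 : (1 + ‖z‖) ^ (-(3:ℝ)) = ((1 + ‖z‖)^(3:ℕ))⁻¹ := by
          rw [Real.rpow_neg (by positivity), ← Real.rpow_natCast (1 + ‖z‖) 3]
          norm_num
        rw [h3, ← div_eq_mul_inv, le_div_iff₀ (by positivity)]
        calc ((1 + ‖z‖)^N)^p * Real.exp (-((max (‖z‖ - rS) 0 / ρmax) ^ ε * p))
              * (1 + ‖z‖)^(3:ℕ)
            = ((1 + ‖z‖)^N)^p * (1 + ‖z‖)^3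
              * Real.exp (-((max (‖z‖ - rS) 0 / ρmax) ^ ε * p)) := by ring
          _ ≤ C₄ := hk
      calc B^p * Real.exp (-(p * φ z))
          = δ^p * C₃^p * ((ρ z)⁻¹)^p * (dec z)^p
            * ((Real.exp (φ z))^p * Real.exp (-(p * φ z))) := by rw [hBp]; ring
        _ = δ^p * C₃^p * (((ρ z)⁻¹)^p * (dec z)^p) := by rw [hcancel]; ring
        _ ≤ δ^p * C₃^p * (((1/c) * (1 + ‖z‖)^N)^p * (dec z)^p) := by
            apply mul_le_mul_of_nonneg_left _ (mul_nonneg (Real.rpow_nonneg hδ.le p)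
              (Real.rpow_nonneg hC₃0 p))
            exact mul_le_mul_of_nonneg_right hρinv (Real.rpow_nonneg (hdec0 z).le p)
        _ = δ^p * C₃^p * (1/c)^p * (((1 + ‖z‖)^N)^p * (dec z)^p) := by
            rw [Real.mul_rpow (one_div_nonneg.mpr hc.le) (by positivity : (0:ℝ) ≤ (1 + ‖z‖)^N)]
            ring
        _ ≤ δ^p * C₃^p * (1/c)^p * (C₄ * (1 + ‖z‖) ^ (-(3:ℝ))) := by
            apply mul_le_mul_of_nonneg_left hkeyz
            exact mul_nonneg (mul_nonneg (Real.rpow_nonneg hδ.le p)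
              (Real.rpow_nonneg hC₃0 p)) (Real.rpow_nonneg (by positivity) p)
        _ = δ^p * (C₃^p * (1/c)^p * C₄ * (1 + ‖z‖) ^ (-(3:ℝ))) := by ring
    -- put it together
    calc ‖f z * g j z - bproj K φ (fun w => f w * g j w) z‖ ^ p
          * Real.exp (-(p * φ z))
        ≤ (2^p * (A^p + B^p)) * Real.exp (-(p * φ z)) :=
          mul_le_mul_of_nonneg_right hrp (Real.exp_pos _).le
      _ = 2^p * (A^p * Real.exp (-(p * φ z))) + 2^p * (B^p * Real.exp (-(p * φ z))) := by
          ring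
      _ ≤ 2^p * (Mf^p * δ^p * E2
            * (Metric.closedBall (0:ℂ) rS).indicator (fun _ => (1:ℝ)) z)
          + 2^p * (δ^p * (C₃^p * (1/c)^p * C₄ * (1 + ‖z‖) ^ (-(3:ℝ)))) := by
          have h2p : (0:ℝ) ≤ 2^p := Real.rpow_nonneg (by norm_num) p
          exact add_le_add (mul_le_mul_of_nonneg_left hT1 h2p)
            (mul_le_mul_of_nonneg_left hT2 h2p)
      _ = δ^p * G z := by
          simp only [hGdef, hA₁def, hB₂def]
          ring
  -- final assembly
  rw [ENNReal.tendsto_nhds_zero]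
  intro ε' hε'
  -- choose δ
  obtain ⟨δ, hδpos, hδ⟩ : ∃ δ : ℝ, 0 < δ ∧
      ENNReal.ofReal (δ^p) * (∫⁻ z : ℂ, ENNReal.ofReal (G z)) ≤ ε' := by
    by_cases ht : ε' = ⊤
    · exact ⟨1, one_pos, by rw [ht]; exact le_top⟩
    · set IGr : ℝ := (∫⁻ z : ℂ, ENNReal.ofReal (G z)).toReal with hIGrdef
      have hIGr0 : 0 ≤ IGr := ENNReal.toReal_nonneg
      have hε'0 : 0 < ε'.toReal := ENNReal.toReal_pos hε'.ne' ht
      set d : ℝ := min 1 (ε'.toReal / (IGr + 1)) with hddef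
      have hd0 : 0 < d := lt_min one_pos (by positivity)
      refine ⟨d ^ (1/p), Real.rpow_pos_of_pos hd0 _, ?_⟩
      have hdp : (d ^ (1/p)) ^ p = d := by
        rw [← Real.rpow_mul hd0.le, one_div_mul_cancel hp.ne', Real.rpow_one]
      have hdle : d * IGr ≤ ε'.toReal := by
        have h1 : d ≤ ε'.toReal / (IGr + 1) := min_le_right _ _
        have h2 : d * IGr ≤ (ε'.toReal / (IGr + 1)) * IGr :=
          mul_le_mul_of_nonneg_right h1 hIGr0
        have h3 : (ε'.toReal / (IGr + 1)) * IGr ≤ ε'.toReal := by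
          rw [div_mul_eq_mul_div, div_le_iff₀ (by positivity)]
          nlinarith
        linarith
      calc ENNReal.ofReal ((d ^ (1/p)) ^ p) * (∫⁻ z : ℂ, ENNReal.ofReal (G z))
          = ENNReal.ofReal d * (∫⁻ z : ℂ, ENNReal.ofReal (G z)) := by rw [hdp]
        _ = ENNReal.ofReal d * ENNReal.ofReal IGr := by
            rw [hIGrdef, ENNReal.ofReal_toReal hIG.ne]
        _ = ENNReal.ofReal (d * IGr) := (ENNReal.ofReal_mul hd0.le).symm
        _ ≤ ENNReal.ofReal ε'.toReal := ENNReal.ofReal_le_ofReal hdle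
        _ = ε' := ENNReal.ofReal_toReal ht
  have hunif := hg_unif S hScomp
  rw [Metric.tendstoUniformlyOn_iff] at hunif
  filter_upwards [hunif δ hδpos] with j hj
  have hjS : ∀ w ∈ S, ‖g j w‖ ≤ δ := fun w hw => by
    have := hj w hw
    simp only [Pi.zero_apply, dist_zero_left] at this
    exact this.le
  calc ∫⁻ z : ℂ, ENNReal.ofReal
        (‖f z * g j z - bproj K φ (fun w => f w * g j w) z‖ ^ p *
          Real.exp (-(p * φ z)))
      ≤ ∫⁻ z : ℂ, ENNReal.ofReal (δ^p * G z) :=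
        lintegral_mono fun z => ENNReal.ofReal_le_ofReal (claim j δ hδpos hjS z)
    _ = ∫⁻ z : ℂ, ENNReal.ofReal (δ^p) * ENNReal.ofReal (G z) := by
        congr 1
        funext z
        rw [ENNReal.ofReal_mul (Real.rpow_nonneg hδpos.le p)]
    _ = ENNReal.ofReal (δ^p) * ∫⁻ z : ℂ, ENNReal.ofReal (G z) :=
        lintegral_const_mul' _ _ ENNReal.ofReal_ne_top
    _ ≤ ε' := hδ
end
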